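/- arXiv:2402.07703 — 8 statements merged into one kernel-verified Lean document; each statement's English description precedes it below -/
import Mathlib

section
/- Let T ≥ 1 and let d_t ≥ 1 be integer delays with t + d_t − 1 ≤ T for each t ∈ {1,…,T}; set F_t := {k ∈ {1,…,T} : k + d_k − 1 = t} and F_{t,k} := {s ∈ F_t : s < k}. Then Σ_{t=1}^T Σ_{k∈F_t} ( Σ_{τ=k}^{t−1} |F_τ| + |F_{t,k}| ) ≤ 2 Σ_{t=1}^T d_t. -/
open Finset

/-- Lemma on cumulative delays (Lemma 3 / Quanrud--Khashabi):
`Σ_{t=1}^T Σ_{k∈F_t} ( Σ_{τ=k}^{t−1} |F_τ| + |F_{t,k}| ) ≤ 2 Σ_{t=1}^T d_t`. -/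
theorem delayed_feedback_sum_bound
    (T : ℕ) (hT : 1 ≤ T) (d : ℕ → ℕ)
    (hd : ∀ t ∈ Finset.Icc 1 T, 1 ≤ d t ∧ t + d t - 1 ≤ T)
    (F : ℕ → Finset ℕ)
    (hF : ∀ t, F t = (Finset.Icc 1 T).filter (fun k => k + d k - 1 = t))
    (Ftk : ℕ → ℕ → Finset ℕ)
    (hFtk : ∀ t k, Ftk t k = (F t).filter (fun s => s < k)) :
    ∑ t ∈ Finset.Icc 1 T, ∑ k ∈ F t,
        ((∑ τ ∈ Finset.Icc k (t - 1), (F τ).card) + (Ftk t k).card)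
      ≤ 2 * ∑ t ∈ Finset.Icc 1 T, d t := by
  set g : ℕ → ℕ := fun k => k + d k - 1 with hg
  have hgmem : ∀ k ∈ Icc 1 T, g k ∈ Icc 1 T := by
    intro k hk
    have hk' := mem_Icc.mp hk
    have := hd k hk
    simp only [hg, mem_Icc]
    omega
  -- Step 1: collapse the double sum to a sum over k
  have step1 : ∑ t ∈ Icc 1 T, ∑ k ∈ F t,
        ((∑ τ ∈ Icc k (t - 1), (F τ).card) + (Ftk t k).card)
      = ∑ k ∈ Icc 1 T,
        ((∑ τ ∈ Icc k (g k - 1), (F τ).card) + (Ftk (g k) k).card) := by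
    have : ∀ t, ∑ k ∈ F t, ((∑ τ ∈ Icc k (t - 1), (F τ).card) + (Ftk t k).card)
        = ∑ k ∈ Icc 1 T, if g k = t then
            ((∑ τ ∈ Icc k (t - 1), (F τ).card) + (Ftk t k).card) else 0 := by
      intro t
      rw [hF t, sum_filter]
    rw [Finset.sum_congr rfl (fun t _ => this t), Finset.sum_comm]
    apply Finset.sum_congr rfl
    intro k hk
    rw [Finset.sum_ite_eq (Icc 1 T) (g k)
      (fun t => (∑ τ ∈ Icc k (t - 1), (F τ).card) + (Ftk t k).card),
      if_pos (hgmem k hk)]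
  rw [step1]
  -- Step 2: expand each summand as indicator sums over s
  have step2 : ∀ k ∈ Icc 1 T,
      ((∑ τ ∈ Icc k (g k - 1), (F τ).card) + (Ftk (g k) k).card)
      = ∑ s ∈ Icc 1 T,
          ((if g s ∈ Icc k (g k - 1) then 1 else 0)
            + (if g s = g k ∧ s < k then 1 else 0)) := by
    intro k hk
    rw [Finset.sum_add_distrib]
    congr 1
    · have : ∀ τ' : ℕ, (F τ').card
          = ∑ s ∈ Icc 1 T, if g s = τ' then 1 else 0 := by
        intro τ'
        rw [hF τ', Finset.card_filter]
      rw [Finset.sum_congr rfl (fun τ' _ => this τ'), Finset.sum_comm]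
      apply Finset.sum_congr rfl
      intro s _
      rw [Finset.sum_ite_eq (Icc k (g k - 1)) (g s) (fun _ => 1)]
    · rw [hFtk, hF, Finset.filter_filter, Finset.card_filter]
  rw [Finset.sum_congr rfl step2]
  -- Step 3: split the first indicator by s ≤ k vs k < s
  have step3 : ∀ k ∈ Icc 1 T, ∀ s ∈ Icc 1 T,
      ((if g s ∈ Icc k (g k - 1) then 1 else 0)
        + (if g s = g k ∧ s < k then 1 else 0))
      = ((if g s ∈ Icc k (g k - 1) ∧ k < s then 1 else 0)
        + ((if g s ∈ Icc k (g k - 1) ∧ s ≤ k then 1 else 0)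
          + (if g s = g k ∧ s < k then 1 else 0))) := by
    intro k _ s _
    by_cases h : g s ∈ Icc k (g k - 1) <;> by_cases h' : k < s <;>
      simp [h, h', Nat.not_lt.mp, le_of_not_gt] <;> omega
  rw [Finset.sum_congr rfl (fun k hk => Finset.sum_congr rfl (step3 k hk))]
  rw [Finset.sum_congr rfl (fun k _ => Finset.sum_add_distrib), Finset.sum_add_distrib]
  -- Bound the first part: ≤ ∑ d k (charged to k)
  have bound1 : ∑ k ∈ Icc 1 T, ∑ s ∈ Icc 1 T,
      (if g s ∈ Icc k (g k - 1) ∧ k < s then 1 else 0) ≤ ∑ k ∈ Icc 1 T, d k := by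
    apply Finset.sum_le_sum
    intro k hk
    rw [← Finset.card_filter]
    calc ((Icc 1 T).filter (fun s => g s ∈ Icc k (g k - 1) ∧ k < s)).card
        ≤ (Icc (k + 1) (g k)).card := by
          apply Finset.card_le_card
          intro s hs
          simp only [mem_filter, mem_Icc] at hs ⊢
          have hds := hd s (mem_Icc.mpr ⟨hs.1.1, hs.1.2⟩)
          have hdk := hd k hk
          simp only [hg] at hs ⊢
          omega
      _ ≤ d k := by
          have hdk := hd k hk
          rw [Nat.card_Icc]
          simp only [hg]
          omega
  -- Bound the second part: ≤ ∑ d s (charged to s, after swapping)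
  have bound2 : ∑ k ∈ Icc 1 T, ∑ s ∈ Icc 1 T,
      ((if g s ∈ Icc k (g k - 1) ∧ s ≤ k then 1 else 0)
        + (if g s = g k ∧ s < k then 1 else 0)) ≤ ∑ s ∈ Icc 1 T, d s := by
    rw [Finset.sum_comm]
    apply Finset.sum_le_sum
    intro s hs
    rw [Finset.sum_add_distrib, ← Finset.card_filter, ← Finset.card_filter]
    have hds := hd s hs
    have hs' := mem_Icc.mp hs
    have hdisj : Disjoint ((Icc 1 T).filter (fun k => g s ∈ Icc k (g k - 1) ∧ s ≤ k))
        ((Icc 1 T).filter (fun k => g s = g k ∧ s < k)) := by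
      rw [Finset.disjoint_left]
      intro k hk1 hk2
      simp only [mem_filter, mem_Icc, hg] at hk1 hk2
      omega
    rw [← Finset.card_union_of_disjoint hdisj]
    calc (((Icc 1 T).filter (fun k => g s ∈ Icc k (g k - 1) ∧ s ≤ k))
          ∪ ((Icc 1 T).filter (fun k => g s = g k ∧ s < k))).card
        ≤ (Icc s (g s)).card := by
          apply Finset.card_le_card
          intro k hk
          simp only [mem_union, mem_filter, mem_Icc] at hk ⊢
          rcases hk with ⟨hk1, hk2⟩ | ⟨hk1, hk2⟩
          · simp only [hg] at hk2 ⊢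
            omega
          · have hdk := hd k (mem_Icc.mpr hk1)
            simp only [hg] at hk2 ⊢
            omega
      _ = d s := by
          rw [Nat.card_Icc]
          simp only [hg]
          omega
    done
  calc _ ≤ ∑ k ∈ Icc 1 T, d k + ∑ s ∈ Icc 1 T, d s := Nat.add_le_add bound1 bound2
    _ = 2 * ∑ t ∈ Icc 1 T, d t := by ring
end

section
/- Let E be a real normed vector space, X ⊆ E a convex set, μ > 0, and Φ : E → ℝ differentiable with Φ(z) − Φ(y) − ∇Φ(y)(z − y) ≥ (μ/2)‖z − y‖² for all y, z ∈ X. Let y ∈ X be a minimizer of Φ over X and let f : E → ℝ be differentiable, convex on X, with ‖∇f(y)‖⋆ ≤ G. Then for every z ∈ X, Φ(y) + f(y) − Φ(z) − f(z) ≤ G²/(2μ). -/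
open Filter Set Topology

/-- Gradient inequality for a convex differentiable function. -/
lemma convexOn_fderiv_le {E : Type*} [NormedAddCommGroup E] [NormedSpace ℝ E]
    {X : Set E} {f : E → ℝ} (hf : Differentiable ℝ f) (hfconv : ConvexOn ℝ X f)
    {y z : E} (hy : y ∈ X) (hz : z ∈ X) :
    fderiv ℝ f y (z - y) ≤ f z - f y := by
  set g : ℝ → ℝ := fun t => f (y + t • (z - y)) with hg
  have hline : HasDerivAt (fun t : ℝ => y + t • (z - y)) (z - y) 0 := by
    simpa using ((hasDerivAt_id (0:ℝ)).smul_const (z - y)).const_add y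
  have hd : HasDerivAt g (fderiv ℝ f y (z - y)) 0 := by
    have hy0 : HasFDerivAt f (fderiv ℝ f y) (y + (0:ℝ) • (z - y)) := by
      simpa using (hf y).hasFDerivAt
    have := hy0.comp_hasDerivAt 0 hline
    exact this
  have hslope : Tendsto (slope g 0) (𝓝[>] 0) (𝓝 (fderiv ℝ f y (z - y))) :=
    (hasDerivAt_iff_tendsto_slope.1 hd).mono_left
      (nhdsWithin_mono _ (fun t ht => ne_of_gt ht))
  refine le_of_tendsto hslope ?_
  filter_upwards [Ioc_mem_nhdsGT_of_mem (Set.left_mem_Ico.2 one_pos)] with t ht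
  obtain ⟨ht0, ht1⟩ := ht
  have hcvx := hfconv.2 hy hz (by linarith : (0:ℝ) ≤ 1 - t) ht0.le (by ring)
  have hpt : (1 - t) • y + t • z = y + t • (z - y) := by
    simp [smul_sub, sub_smul]; abel
  rw [hpt] at hcvx
  have : slope g 0 t = (g t - g 0) / t := by simp [slope_def_field, div_eq_inv_mul]
  rw [this, div_le_iff₀ ht0]
  simp only [hg, zero_smul, add_zero, smul_eq_mul] at hcvx ⊢
  nlinarith

/-- If `Φ` is `μ`-strongly convex on `X`, `y` minimizes `Φ` over `X`, and `f` is convex on `X`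
with `‖∇f(y)‖⋆ ≤ G`, then `Φ(y) + f(y) − Φ(z) − f(z) ≤ G²/(2μ)` for every `z ∈ X`. -/
theorem strongly_convex_min_perturbation_bound
    {E : Type*} [NormedAddCommGroup E] [NormedSpace ℝ E]
    (X : Set E) (hX : Convex ℝ X) (μ : ℝ) (hμ : 0 < μ)
    (Φ : E → ℝ) (hΦ : Differentiable ℝ Φ)
    (hsc : ∀ y ∈ X, ∀ z ∈ X,
      Φ z - Φ y - fderiv ℝ Φ y (z - y) ≥ μ / 2 * ‖z - y‖ ^ 2)
    (y : E) (hy : y ∈ X) (hmin : IsMinOn Φ X y)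
    (f : E → ℝ) (hf : Differentiable ℝ f) (hfconv : ConvexOn ℝ X f)
    (G : ℝ) (hG : ‖fderiv ℝ f y‖ ≤ G) :
    ∀ z ∈ X, Φ y + f y - Φ z - f z ≤ G ^ 2 / (2 * μ) := by
  intro z hz
  -- first-order optimality
  have hcone : z - y ∈ posTangentConeAt X y :=
    sub_mem_posTangentConeAt_of_segment_subset (hX.segment_subset hy hz)
  have hopt : 0 ≤ fderiv ℝ Φ y (z - y) :=
    (hmin.localize).hasFDerivWithinAt_nonneg (hΦ y).hasFDerivAt.hasFDerivWithinAt hcone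
  have hΦineq : Φ y - Φ z ≤ -(μ / 2 * ‖z - y‖ ^ 2) := by
    have := hsc y hy z hz
    linarith
  have hfineq : f y - f z ≤ G * ‖z - y‖ := by
    have h1 := convexOn_fderiv_le hf hfconv hy hz
    have h2 : |fderiv ℝ f y (z - y)| ≤ ‖fderiv ℝ f y‖ * ‖z - y‖ := by
      simpa using (fderiv ℝ f y).le_opNorm (z - y)
    have h3 := abs_le.1 h2
    have h4 : (0:ℝ) ≤ ‖z - y‖ := norm_nonneg _
    nlinarith [norm_nonneg (fderiv ℝ f y)]
  have hGnn : (0:ℝ) ≤ G := le_trans (norm_nonneg _) hG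
  rw [le_div_iff₀ (by linarith : (0:ℝ) < 2 * μ)]
  nlinarith [sq_nonneg (G - μ * ‖z - y‖), sq_nonneg (‖z - y‖)]
end

section
/- Let E be a real normed vector space, X ⊆ E a convex set, and ψ : E → ℝ differentiable with B_ψ(a;b) ≥ (σ/2)‖a − b‖² for all a, b ∈ X (σ > 0) and ‖∇ψ(a) − ∇ψ(b)‖⋆ ≤ G_ψ‖a − b‖ for all a, b ∈ X. Let g be a continuous linear functional on E, η > 0, x₀ ∈ X, and let y⁺ ∈ X minimize the map x ↦ g(x) + B_ψ(x; x₀)/η over X. Then for every y ∈ X, ‖y − y⁺‖ ≤ (η‖g‖⋆ + G_ψ‖y − x₀‖)/σ. -/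
private lemma limit_aux (c D : ℝ) (h : ∀ t ∈ Set.Ioo (0:ℝ) 1, (1 - t) * c ≤ D) :
    c ≤ D := by
  by_contra hcon
  push_neg at hcon
  have h12 := h (1/2) ⟨by norm_num, by norm_num⟩
  have hc0 : 0 < c := by linarith
  set t : ℝ := min (1/2) ((c - D) / (2 * c)) with htd
  have ht0 : 0 < t := lt_min (by norm_num) (div_pos (by linarith) (by linarith))
  have ht1 : t < 1 := lt_of_le_of_lt (min_le_left _ _) (by norm_num)
  have hst := h t ⟨ht0, ht1⟩
  have htc : t * c ≤ (c - D) / 2 := by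
    have hmin := min_le_right (1/2) ((c - D) / (2 * c))
    have h2 : t * c ≤ ((c - D) / (2 * c)) * c :=
      mul_le_mul_of_nonneg_right hmin hc0.le
    have h3 : ((c - D) / (2 * c)) * c = (c - D) / 2 := by
      field_simp
    linarith [h2, h3.le]
  nlinarith [hst, htc]

/-- Mirror-descent step stability: if `y⁺` minimizes `x ↦ g(x) + B_ψ(x;x₀)/η` over `X`,
where `ψ` is `σ`-strongly convex with `G_ψ`-Lipschitz gradients on `X`, then for every
`y ∈ X`, `‖y − y⁺‖ ≤ (η‖g‖⋆ + G_ψ‖y − x₀‖)/σ`. -/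
theorem mirror_step_stability
    {E : Type*} [NormedAddCommGroup E] [NormedSpace ℝ E]
    (X : Set E) (hX : Convex ℝ X)
    (ψ : E → ℝ) (hψ : Differentiable ℝ ψ)
    (σ : ℝ) (hσ : 0 < σ)
    (hsc : ∀ a ∈ X, ∀ b ∈ X,
      ψ a - ψ b - fderiv ℝ ψ b (a - b) ≥ σ / 2 * ‖a - b‖ ^ 2)
    (Gψ : ℝ)
    (hlip : ∀ a ∈ X, ∀ b ∈ X, ‖fderiv ℝ ψ a - fderiv ℝ ψ b‖ ≤ Gψ * ‖a - b‖)
    (g : E →L[ℝ] ℝ) (η : ℝ) (hη : 0 < η) (x₀ : E) (hx₀ : x₀ ∈ X)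
    (yplus : E) (hyp : yplus ∈ X)
    (hmin : IsMinOn
      (fun z => g z + (ψ z - ψ x₀ - fderiv ℝ ψ x₀ (z - x₀)) / η) X yplus) :
    ∀ y ∈ X, ‖y - yplus‖ ≤ (η * ‖g‖ + Gψ * ‖y - x₀‖) / σ := by
  intro y hy
  have hη' : η ≠ 0 := ne_of_gt hη
  have hnd : (0:ℝ) ≤ ‖y - yplus‖ := norm_nonneg _
  -- Step 1: for all t ∈ (0,1), (1-t) * (σ/2 ‖y-y⁺‖²) ≤ η-scaled objective gap
  have hstep : ∀ t ∈ Set.Ioo (0:ℝ) 1, (1 - t) * (σ / 2 * ‖y - yplus‖ ^ 2)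
      ≤ η * g y + (ψ y - fderiv ℝ ψ x₀ (y - x₀))
        - (η * g yplus + (ψ yplus - fderiv ℝ ψ x₀ (yplus - x₀))) := by
    intro t ht
    obtain ⟨ht0, ht1⟩ := ht
    have hmX : t • y + (1 - t) • yplus ∈ X := hX hy hyp ht0.le (by linarith) (by ring)
    set m : E := t • y + (1 - t) • yplus with hm
    have e1 : y - m = (1 - t) • (y - yplus) := by rw [hm]; module
    have e2 : yplus - m = (-t) • (y - yplus) := by rw [hm]; module
    have e3 : m - x₀ = t • (y - x₀) + (1 - t) • (yplus - x₀) := by rw [hm]; module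
    have h1 := hsc y hy m hmX
    have h2 := hsc yplus hyp m hmX
    rw [e1] at h1
    rw [e2] at h2
    rw [map_smul, smul_eq_mul, norm_smul, Real.norm_eq_abs,
      abs_of_pos (by linarith : (0:ℝ) < 1 - t)] at h1
    rw [map_smul, smul_eq_mul, norm_smul, Real.norm_eq_abs, abs_neg,
      abs_of_pos ht0] at h2
    -- strong convexity combination
    have hψm : t * ψ y + (1 - t) * ψ yplus - ψ m
        ≥ σ / 2 * (t * (1 - t)) * ‖y - yplus‖ ^ 2 := by
      nlinarith [mul_le_mul_of_nonneg_left h1 ht0.le,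
        mul_le_mul_of_nonneg_left h2 (by linarith : (0:ℝ) ≤ 1 - t)]
    -- minimality at m
    have hmm := hmin hmX
    simp only [Set.mem_setOf_eq] at hmm
    have hmm' : η * ((g yplus : ℝ) + (ψ yplus - ψ x₀ - fderiv ℝ ψ x₀ (yplus - x₀)) / η)
        ≤ η * ((g m : ℝ) + (ψ m - ψ x₀ - fderiv ℝ ψ x₀ (m - x₀)) / η) :=
      mul_le_mul_of_nonneg_left hmm hη.le
    rw [mul_add, mul_add, mul_div_cancel₀ _ hη', mul_div_cancel₀ _ hη'] at hmm'
    have egm : (g m : ℝ) = t * g y + (1 - t) * g yplus := by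
      rw [hm]; simp [map_add, map_smul, smul_eq_mul]
    have eLm : fderiv ℝ ψ x₀ (m - x₀)
        = t * fderiv ℝ ψ x₀ (y - x₀) + (1 - t) * fderiv ℝ ψ x₀ (yplus - x₀) := by
      rw [e3]; simp [map_add, map_smul, smul_eq_mul]
    rw [egm, eLm] at hmm'
    nlinarith [hψm, hmm', mul_pos ht0 (mul_pos ht0 ht0)]
  -- Step 2: pass to the limit t → 0
  have hcD := limit_aux _ _ hstep
  -- Step 3: combine with strong convexity at y and Lipschitz gradients
  have h3 := hsc yplus hyp y hy
  have e4 : yplus - y = -(y - yplus) := by abel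
  rw [e4, map_neg, norm_neg] at h3
  have hg : (g (y - yplus) : ℝ) ≤ ‖g‖ * ‖y - yplus‖ :=
    le_trans (le_abs_self _) (by rw [← Real.norm_eq_abs]; exact g.le_opNorm _)
  have hLd : fderiv ℝ ψ y (y - yplus) - fderiv ℝ ψ x₀ (y - yplus)
      ≤ Gψ * ‖y - x₀‖ * ‖y - yplus‖ := by
    have ha : |(fderiv ℝ ψ y - fderiv ℝ ψ x₀) (y - yplus)|
        ≤ ‖fderiv ℝ ψ y - fderiv ℝ ψ x₀‖ * ‖y - yplus‖ := by
      rw [← Real.norm_eq_abs]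
      exact (fderiv ℝ ψ y - fderiv ℝ ψ x₀).le_opNorm _
    have hb : ‖fderiv ℝ ψ y - fderiv ℝ ψ x₀‖ * ‖y - yplus‖
        ≤ Gψ * ‖y - x₀‖ * ‖y - yplus‖ :=
      mul_le_mul_of_nonneg_right (hlip y hy x₀ hx₀) hnd
    have := le_trans (le_abs_self _) (le_trans ha hb)
    rwa [ContinuousLinearMap.sub_apply] at this
  have hGnn : 0 ≤ Gψ * ‖y - x₀‖ :=
    le_trans (norm_nonneg _) (hlip y hy x₀ hx₀)
  have egd : (g (y - yplus) : ℝ) = g y - g yplus := by simp [map_sub]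
  have eLxd : fderiv ℝ ψ x₀ (y - yplus)
      = fderiv ℝ ψ x₀ (y - x₀) - fderiv ℝ ψ x₀ (yplus - x₀) := by
    rw [show y - yplus = (y - x₀) - (yplus - x₀) by abel, map_sub]
  have hsum : σ * ‖y - yplus‖ ^ 2 ≤ η * g (y - yplus)
      + (fderiv ℝ ψ y (y - yplus) - fderiv ℝ ψ x₀ (y - yplus)) := by
    rw [egd, eLxd]
    linarith [hcD, h3]
  have hg' : η * (g (y - yplus) : ℝ) ≤ η * (‖g‖ * ‖y - yplus‖) :=
    mul_le_mul_of_nonneg_left hg hη.le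
  have hmain : σ * ‖y - yplus‖ ^ 2 ≤ (η * ‖g‖ + Gψ * ‖y - x₀‖) * ‖y - yplus‖ := by
    nlinarith [hsum, hg', hLd]
  rw [le_div_iff₀ hσ]
  rcases eq_or_lt_of_le hnd with h0 | h0
  · rw [← h0]
    simpa using add_nonneg (mul_nonneg hη.le (norm_nonneg g)) hGnn
  · nlinarith [hmain, h0]
end

section
/- (Theorem 2) Under the FTDL-RSC scheme, for every x* ∈ X the regret satisfies Reg_T := Σ_{t=1}^T f_t(x_t) − Σ_{t=1}^T f_t(x*) ≤ 3dG⋆²(1 + ln T)/(σγ), where d := max_{1≤t≤T} d_t. -/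
open Finset

namespace FTDL

/-- Padé-type lower bound for the logarithm. -/
lemma pade {a b : ℝ} (ha : 0 < a) (hab : a ≤ b) :
    2 * (b - a) / (a + b) ≤ Real.log b - Real.log a := by
  have hb : 0 < b := lt_of_lt_of_le ha hab
  set h : ℝ → ℝ := fun x => Real.log x + 4 * a / (x + a) with hh
  have hder : ∀ x : ℝ, a ≤ x → HasDerivAt h (1 / x - 4 * a / (x + a) ^ 2) x := by
    intro x hx
    have hx0 : 0 < x := lt_of_lt_of_le ha hx
    have hxa : x + a ≠ 0 := by positivity
    have h1 : HasDerivAt (fun y : ℝ => y + a) 1 x := (hasDerivAt_id x).add_const a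
    have h2 : HasDerivAt (fun y : ℝ => (y + a)⁻¹) (-1 / (x + a) ^ 2) x := by
      simpa using h1.fun_inv hxa
    have h3 : HasDerivAt (fun y : ℝ => 4 * a * (y + a)⁻¹) (4 * a * (-1 / (x + a) ^ 2)) x :=
      h2.const_mul (4 * a)
    have h4 : HasDerivAt h (1 / x + 4 * a * (-1 / (x + a) ^ 2)) x := by
      have := (Real.hasDerivAt_log hx0.ne').fun_add h3
      simpa [hh, div_eq_mul_inv] using this
    convert h4 using 1
    ring
  have hmono : MonotoneOn h (Set.Ici a) := by
    apply monotoneOn_of_deriv_nonneg (convex_Ici a)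
    · intro x hx
      exact ((hder x hx).continuousAt).continuousWithinAt
    · intro x hx
      rw [interior_Ici] at hx
      exact ((hder x (le_of_lt hx)).differentiableAt).differentiableWithinAt
    · intro x hx
      rw [interior_Ici] at hx
      rw [(hder x (le_of_lt hx)).deriv]
      have hx0 : 0 < x := lt_of_lt_of_le ha (le_of_lt hx)
      have hxa : 0 < x + a := by positivity
      rw [sub_nonneg, div_le_div_iff₀ (by positivity) hx0]
      nlinarith [sq_nonneg (x - a)]
  have hkey : h a ≤ h b := hmono (Set.self_mem_Ici) (show b ∈ Set.Ici a from hab) hab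
  have hab2 : 0 < a + b := by linarith
  have h2a : 4 * a / (a + a) = 2 := by
    rw [div_eq_iff (by positivity)]; ring
  have hba : (4 : ℝ) * a / (b + a) = 4 * a / (a + b) := by rw [add_comm b a]
  have hkey2 : Real.log a + 2 ≤ Real.log b + 4 * a / (a + b) := by
    have : Real.log a + 4 * a / (a + a) ≤ Real.log b + 4 * a / (b + a) := hkey
    rw [h2a, hba] at this; exact this
  rw [div_le_iff₀ hab2]
  have hfrac : 4 * a / (a + b) * (a + b) = 4 * a := by
    field_simp
  nlinarith [hkey2]

end FTDL

namespace FTDL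

/-- First-order optimality on a convex set. -/
lemma fo_opt {E : Type*} [NormedAddCommGroup E] [NormedSpace ℝ E]
    {X : Set E} (hX : Convex ℝ X) {φ : E → ℝ} {φ' : E →L[ℝ] ℝ} {y : E}
    (hφ : HasFDerivAt φ φ' y) (hmin : IsMinOn φ X y) (hy : y ∈ X) {z : E} (hz : z ∈ X) :
    0 ≤ φ' (z - y) := by
  set ψ : ℝ → ℝ := fun s => φ (y + s • (z - y)) with hψ
  have hline : HasDerivAt (fun s : ℝ => y + s • (z - y)) (z - y) 0 := by
    simpa using ((hasDerivAt_id (0:ℝ)).smul_const (z - y)).const_add y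
  have hφ0 : HasFDerivAt φ φ' (y + (0:ℝ) • (z - y)) := by simpa using hφ
  have hd : HasDerivAt ψ (φ' (z - y)) 0 := by
    simpa [hψ, Function.comp_def] using hφ0.comp_hasDerivAt 0 hline
  have hmem : ∀ s : ℝ, s ∈ Set.Ioc (0:ℝ) 1 → y + s • (z - y) ∈ X := by
    intro s hs
    have : (1 - s) • y + s • z ∈ X := hX hy hz (by linarith [hs.2]) (le_of_lt hs.1) (by ring)
    convert this using 1
    simp [smul_sub, sub_smul]; abel
  have hslope : ∀ s ∈ Set.Ioc (0:ℝ) 1, 0 ≤ slope ψ 0 s := by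
    intro s hs
    have h1 : φ y ≤ ψ s := hmin (hmem s hs)
    have h0 : ψ 0 = φ y := by simp [hψ]
    rw [slope_def_field]
    have : (0:ℝ) ≤ ψ s - ψ 0 := by rw [h0]; linarith
    have hs0 : 0 < s := hs.1
    rw [div_eq_mul_inv]
    have : (ψ s - ψ 0) * (s - 0)⁻¹ ≥ 0 := by
      apply mul_nonneg this
      simp; positivity
    simpa [slope, sub_zero] using this
  have htend : Filter.Tendsto (slope ψ 0) (nhdsWithin 0 (Set.Ioi 0)) (nhds (φ' (z - y))) := by
    have := hasDerivAt_iff_tendsto_slope.mp hd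
    apply this.mono_left
    apply nhdsWithin_mono
    intro s hs
    exact ne_of_gt hs
  refine ge_of_tendsto htend ?_
  filter_upwards [Ioc_mem_nhdsGT_of_mem (Set.mem_Ico.mpr ⟨le_refl 0, one_pos⟩)] with s hs
  exact hslope s hs

end FTDL

namespace FTDL

def lastNE (F : ℕ → Finset ℕ) : ℕ → ℕ
  | 0 => 0
  | (t+1) => if (F (t+1)).Nonempty then t+1 else lastNE F t

lemma lastNE_le (F : ℕ → Finset ℕ) (t : ℕ) : lastNE F t ≤ t := by
  induction t with
  | zero => simp [lastNE]
  | succ n ih =>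
    by_cases h : (F (n+1)).Nonempty
    · simp [lastNE, h]
    · simp only [lastNE, h, if_false]; omega

lemma lastNE_self {F : ℕ → Finset ℕ} {t : ℕ} (ht : 1 ≤ t) (h : (F t).Nonempty) :
    lastNE F t = t := by
  cases t with
  | zero => omega
  | succ n => simp [lastNE, h]

lemma lastNE_spec {F : ℕ → Finset ℕ} (h1 : (F 1).Nonempty) {t : ℕ} (ht : 1 ≤ t) :
    1 ≤ lastNE F t ∧ (F (lastNE F t)).Nonempty ∧
      ∀ r, lastNE F t < r → r ≤ t → F r = ∅ := by
  induction t with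
  | zero => omega
  | succ n ih =>
    by_cases h : (F (n+1)).Nonempty
    · refine ⟨?_, ?_, ?_⟩ <;> simp [lastNE, h]
      omega
    · rcases Nat.eq_or_lt_of_le ht with ht1 | ht2
      · exfalso; exact h (by rw [← ht1]; exact h1)
      · have hn : 1 ≤ n := by omega
        obtain ⟨ih1, ih2, ih3⟩ := ih hn
        simp only [lastNE, h, if_false]
        refine ⟨ih1, ih2, ?_⟩
        intro r hr1 hr2
        rcases Nat.lt_or_ge r (n+1) with hr | hr
        · exact ih3 r hr1 (by omega)
        · have : r = n + 1 := by omega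
          rw [this]
          exact Finset.not_nonempty_iff_eq_empty.mp h

/-- Partition of losses by arrival time. -/
lemma partition_sum {M : Type*} [AddCommMonoid M] (T : ℕ) (d : ℕ → ℕ)
    (hd1 : ∀ k ∈ Finset.Icc 1 T, 1 ≤ d k) (F : ℕ → Finset ℕ)
    (hF : ∀ t, F t = (Finset.Icc 1 T).filter (fun k => k + d k - 1 = t))
    (g : ℕ → M) (t : ℕ) :
    ∑ τ ∈ Finset.Icc 1 t, ∑ k ∈ F τ, g k
      = ∑ k ∈ (Finset.Icc 1 T).filter (fun k => k + d k - 1 ≤ t), g k := by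
  rw [Finset.sum_filter]
  rw [Finset.sum_comm' (s := Finset.Icc 1 t) (t := fun τ => F τ)
    (t' := Finset.Icc 1 T) (s' := fun k => (Finset.Icc 1 t).filter (fun τ => k + d k - 1 = τ))]
  · apply Finset.sum_congr rfl
    intro k hk
    have hk1 : 1 ≤ k + d k - 1 := by
      have := hd1 k hk
      have := (Finset.mem_Icc.mp hk).1
      omega
    rw [Finset.sum_filter]
    rw [Finset.sum_ite_eq (Finset.Icc 1 t) (k + d k - 1) (fun _ => g k)]
    by_cases h : k + d k - 1 ≤ t
    · rw [if_pos (Finset.mem_Icc.mpr ⟨hk1, h⟩), if_pos h]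
    · rw [if_neg (fun hc => h (Finset.mem_Icc.mp hc).2), if_neg h]
  · intro τ k
    simp only [hF, Finset.mem_filter]
    tauto

/-- Telescoping over an interval. -/
lemma telescope (g : ℕ → ℝ) : ∀ (a b : ℕ), 1 ≤ a → a ≤ b + 1 →
    ∑ r ∈ Finset.Icc a b, (g r - g (r-1)) = g b - g (a-1) := by
  intro a b
  induction b with
  | zero =>
    intro ha hab
    have : a = 1 := by omega
    subst this
    simp
  | succ n ih =>
    intro ha hab
    rcases Nat.lt_or_ge n (a - 1) with h | h
    · have : a = n + 2 := by omega
      subst this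
      simp [show Finset.Icc (n+2) (n+1) = ∅ from Finset.Icc_eq_empty (by omega)]
    · rw [Finset.sum_Icc_succ_top (by omega) (fun r => g r - g (r-1)), ih ha (by omega)]
      simp only [Nat.add_sub_cancel]
      ring

/-- Harmonic numbers. -/
noncomputable def har (n : ℕ) : ℝ := ∑ j ∈ Finset.Ioc 0 n, (1:ℝ)/j

lemma har_le_log : ∀ n : ℕ, 1 ≤ n → har n ≤ 1 + Real.log n := by
  intro n
  induction n with
  | zero => omega
  | succ m ih =>
    intro _
    rcases Nat.eq_zero_or_pos m with hm | hm
    · subst hm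
      simp [har]
    · have h1 : har (m+1) = har m + 1/(m+1) := by
        rw [har, har, Finset.sum_Ioc_succ_top (Nat.zero_le m)]
        push_cast
        ring
      have h2 : Real.log m + 1/(m+1) ≤ Real.log (m+1) := by
        have hm0 : (0:ℝ) < m := by positivity
        have hm1 : (0:ℝ) < (m:ℝ)+1 := by positivity
        have := Real.log_le_sub_one_of_pos (show (0:ℝ) < (m:ℝ)/((m:ℝ)+1) by positivity)
        rw [Real.log_div hm0.ne' hm1.ne'] at this
        have he : (m:ℝ)/((m:ℝ)+1) - 1 = -(1/((m:ℝ)+1)) := by field_simp; ring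
        rw [he] at this
        have : Real.log ((m:ℝ)+1) - Real.log m ≥ 1/((m:ℝ)+1) := by linarith
        push_cast
        linarith
      have := ih hm
      push_cast at h2 ⊢
      linarith [h1, this]

lemma har_diff_ge {m n : ℕ} (hmn : m ≤ n) (hn : 1 ≤ n) :
    ((n:ℝ) - m)/n ≤ har n - har m := by
  have hsum : har m + ∑ j ∈ Finset.Ioc m n, (1:ℝ)/j = har n := by
    rw [har, har]
    exact Finset.sum_Ioc_consecutive _ (Nat.zero_le m) hmn
  have hge : ∑ j ∈ Finset.Ioc m n, (1:ℝ)/j ≥ ∑ j ∈ Finset.Ioc m n, (1:ℝ)/n := by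
    apply Finset.sum_le_sum
    intro j hj
    have hj1 : 0 < j := lt_of_le_of_lt (Nat.zero_le m) (Finset.mem_Ioc.mp hj).1
    have hj2 : j ≤ n := (Finset.mem_Ioc.mp hj).2
    have hj1' : (0:ℝ) < j := by exact_mod_cast hj1
    apply one_div_le_one_div_of_le hj1'
    exact_mod_cast hj2
  have hcard : ∑ j ∈ Finset.Ioc m n, (1:ℝ)/n = ((n:ℝ) - m)/n := by
    rw [Finset.sum_const, Nat.card_Ioc, nsmul_eq_mul]
    push_cast [Nat.cast_sub hmn]
    ring
  rw [hcard] at hge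
  linarith

/-- Fiberwise counting bound for sums over a composition. -/
lemma sum_comp_le {s t : Finset ℕ} (a : ℕ → ℕ) (g : ℕ → ℝ)
    (hg : ∀ j ∈ t, 0 ≤ g j) (hmap : ∀ k ∈ s, a k ∈ t)
    (c : ℕ) (hfib : ∀ j ∈ t, (s.filter (fun k => a k = j)).card ≤ c) :
    ∑ k ∈ s, g (a k) ≤ c * ∑ j ∈ t, g j := by
  rw [Finset.sum_comp]
  have himg : s.image a ⊆ t := by
    intro j hj
    obtain ⟨k, hk, rfl⟩ := Finset.mem_image.mp hj
    exact hmap k hk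
  calc ∑ j ∈ s.image a, (s.filter (fun k => a k = j)).card • g j
      ≤ ∑ j ∈ s.image a, (c:ℝ) * g j := by
        apply Finset.sum_le_sum
        intro j hj
        rw [nsmul_eq_mul]
        exact mul_le_mul_of_nonneg_right (by exact_mod_cast hfib j (himg hj)) (hg j (himg hj))
    _ ≤ ∑ j ∈ t, (c:ℝ) * g j := by
        apply Finset.sum_le_sum_of_subset_of_nonneg himg
        intro j hj _
        exact mul_nonneg (by positivity) (hg j hj)
    _ = c * ∑ j ∈ t, g j := by rw [Finset.mul_sum]

end FTDL

namespace FTDL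

open Classical in
noncomputable def Ysel {E : Type*} (X : Set E) (hne : X.Nonempty) (g : E → ℝ) : E :=
  if h : ∃ y, y ∈ X ∧ IsMinOn g X y then h.choose else hne.some

lemma Ysel_spec {E : Type*} (X : Set E) (hne : X.Nonempty) (g : E → ℝ)
    (h : ∃ y, y ∈ X ∧ IsMinOn g X y) : Ysel X hne g ∈ X ∧ IsMinOn g X (Ysel X hne g) := by
  rw [Ysel, dif_pos h]
  exact h.choose_spec

end FTDL

set_option maxHeartbeats 10000000 in
set_option maxRecDepth 20000 in
/-- Theorem 2: FTDL-RSC regret bound. -/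
theorem ftdl_rsc_regret
    {E : Type*} [NormedAddCommGroup E] [NormedSpace ℝ E]
    (X : Set E) (hXne : X.Nonempty) (hX : Convex ℝ X)
    (T : ℕ) (hT : 1 ≤ T) (d : ℕ → ℕ)
    (hd : ∀ t ∈ Finset.Icc 1 T, 1 ≤ d t ∧ t + d t - 1 ≤ T)
    (F : ℕ → Finset ℕ)
    (hF : ∀ t, F t = (Finset.Icc 1 T).filter (fun k => k + d k - 1 = t))
    (hF1 : (F 1).Nonempty)
    (f : ℕ → E → ℝ) (Gstar : ℝ)
    (hfdiff : ∀ t ∈ Finset.Icc 1 T, Differentiable ℝ (f t))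
    (hG : ∀ t ∈ Finset.Icc 1 T, ∀ z ∈ X, ‖fderiv ℝ (f t) z‖ ≤ Gstar)
    (ψ : E → ℝ) (σ γ : ℝ) (hσ : 0 < σ) (hγ : 0 < γ)
    (hψdiff : Differentiable ℝ ψ)
    (hψsc : ∀ a ∈ X, ∀ b ∈ X,
      ψ a - ψ b - fderiv ℝ ψ b (a - b) ≥ σ / 2 * ‖a - b‖ ^ 2)
    (hrel : ∀ t ∈ Finset.Icc 1 T, ∀ a ∈ X, ∀ b ∈ X,
      f t a - f t b - fderiv ℝ (f t) b (a - b)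
        ≥ γ * (ψ a - ψ b - fderiv ℝ ψ b (a - b)))
    (Fb : ℕ → E → ℝ)
    (hFb : ∀ t z, Fb t z = ∑ τ ∈ Finset.Icc 1 t, ∑ k ∈ F τ, f k z)
    (x : ℕ → E) (hx1 : x 1 ∈ X)
    (hupd : ∀ t ∈ Finset.Icc 1 T, (F t).Nonempty →
      x (t + 1) ∈ X ∧ ∃ ystar ∈ X, IsMinOn (Fb t) X ystar ∧
        Fb t (x (t + 1)) ≤ Fb t ystar
          + ((F t).card : ℝ) ^ 2 * Gstar ^ 2
            / (8 * σ * γ * ∑ τ ∈ Finset.Icc 1 t, ((F τ).card : ℝ)))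
    (hupd0 : ∀ t ∈ Finset.Icc 1 T, F t = ∅ → x (t + 1) = x t)
    :
    ∀ xstar ∈ X,
      ∑ t ∈ Finset.Icc 1 T, f t (x t) - ∑ t ∈ Finset.Icc 1 T, f t xstar
        ≤ 3 * (((Finset.Icc 1 T).sup d : ℕ) : ℝ) * Gstar ^ 2 * (1 + Real.log T)
            / (σ * γ) := by
  classical
  intro xstar hxstar
  set D : ℕ := (Finset.Icc 1 T).sup d with hD
  set S : ℝ := σ * γ with hSdef
  have hS : 0 < S := mul_pos hσ hγ
  set A : ℕ → Finset ℕ := fun t => (Finset.Icc 1 T).filter (fun k => k + d k - 1 ≤ t) with hA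
  set n : ℕ → ℕ := fun t => (A t).card with hn
  have hd1 : ∀ k ∈ Finset.Icc 1 T, 1 ≤ d k := fun k hk => (hd k hk).1
  have hpart : ∀ (g : ℕ → ℝ) t, ∑ τ ∈ Finset.Icc 1 t, ∑ k ∈ F τ, g k = ∑ k ∈ A t, g k :=
    fun g t => FTDL.partition_sum T d hd1 F hF g t
  have hFbA : ∀ t, Fb t = fun z => ∑ k ∈ A t, f k z := by
    intro t; funext z; rw [hFb, hpart (fun k => f k z) t]
  have hnsumN : ∀ t, n t = ∑ τ ∈ Finset.Icc 1 t, (F τ).card := by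
    intro t
    have h := FTDL.partition_sum (M := ℕ) T d hd1 F hF (fun _ => 1) t
    simp only [hn]
    calc (A t).card = ∑ k ∈ A t, 1 := Finset.card_eq_sum_ones _
      _ = ∑ τ ∈ Finset.Icc 1 t, ∑ k ∈ F τ, 1 := h.symm
      _ = ∑ τ ∈ Finset.Icc 1 t, (F τ).card := Finset.sum_congr rfl fun τ _ => (Finset.card_eq_sum_ones _).symm
  have hnsumR : ∀ t, ∑ τ ∈ Finset.Icc 1 t, ((F τ).card : ℝ) = (n t : ℝ) := by
    intro t; rw [hnsumN t]; push_cast; rfl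
  have hFsub : ∀ τ, F τ ⊆ Finset.Icc 1 T := by
    intro τ; rw [hF]; exact Finset.filter_subset _ _
  have hAsub : ∀ t, A t ⊆ Finset.Icc 1 T := fun t => Finset.filter_subset _ _
  have hmemF : ∀ k ∈ Finset.Icc 1 T, k ∈ F (k + d k - 1) := by
    intro k hk; rw [hF]; exact Finset.mem_filter.mpr ⟨hk, rfl⟩
  have harrle : ∀ k ∈ Finset.Icc 1 T, k ≤ k + d k - 1 ∧ k + d k - 1 ≤ T ∧ 1 ≤ k + d k - 1 := by
    intro k hk
    have h1 := (hd k hk).1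
    have h2 := (hd k hk).2
    have h3 := (Finset.mem_Icc.mp hk).1
    omega
  have hAmono : ∀ {s t : ℕ}, s ≤ t → A s ⊆ A t := by
    intro s t hst
    intro k hk
    simp only [hA, Finset.mem_filter] at hk ⊢
    exact ⟨hk.1, le_trans hk.2 hst⟩
  have hAT : A T = Finset.Icc 1 T := by
    apply Finset.filter_true_of_mem
    intro k hk; exact (hd k hk).2
  have hnT : n T = T := by
    rw [hn]; simp only [hAT, Nat.card_Icc]; omega
  have hd11 : d 1 = 1 := by
    obtain ⟨k, hk⟩ := hF1
    rw [hF] at hk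
    obtain ⟨hk1, hk2⟩ := Finset.mem_filter.mp hk
    have h1 := (Finset.mem_Icc.mp hk1).1
    have h2 := hd1 k hk1
    have hkeq : k = 1 := by omega
    subst hkeq; omega
  have h1A : ∀ t, 1 ≤ t → 1 ∈ A t := by
    intro t ht
    simp only [hA, Finset.mem_filter, Finset.mem_Icc]
    exact ⟨⟨le_refl 1, hT⟩, by omega⟩
  have hnpos : ∀ t, 1 ≤ t → 1 ≤ n t := by
    intro t ht
    exact Finset.card_pos.mpr ⟨1, h1A t ht⟩
  have hn1 : n 1 = 1 := by
    have : A 1 = {1} := by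
      apply Finset.eq_singleton_iff_unique_mem.mpr
      constructor
      · exact h1A 1 le_rfl
      · intro k hk
        simp only [hA, Finset.mem_filter, Finset.mem_Icc] at hk
        have := hd1 k (Finset.mem_Icc.mpr hk.1)
        omega
    rw [hn]; simp [this]
  have hnmono : ∀ {s t : ℕ}, s ≤ t → n s ≤ n t := by
    intro s t hst; exact Finset.card_le_card (hAmono hst)
  have hDd : ∀ k ∈ Finset.Icc 1 T, d k ≤ D := fun k hk => Finset.le_sup hk
  have hD1 : 1 ≤ D := le_trans (hd1 1 (Finset.mem_Icc.mpr ⟨le_rfl, hT⟩))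
    (hDd 1 (Finset.mem_Icc.mpr ⟨le_rfl, hT⟩))
  have hcardF : ∀ τ, (F τ).card ≤ D := by
    intro τ
    have hsub : F τ ⊆ Finset.Icc (τ + 1 - D) τ := by
      intro k hk
      rw [hF] at hk
      obtain ⟨hk1, hk2⟩ := Finset.mem_filter.mp hk
      have h1 := hd1 k hk1
      have h2 := hDd k hk1
      have h3 := (Finset.mem_Icc.mp hk1).1
      simp only [Finset.mem_Icc]
      omega
    calc (F τ).card ≤ (Finset.Icc (τ + 1 - D) τ).card := Finset.card_le_card hsub
      _ ≤ D := by rw [Nat.card_Icc]; omega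
  have hG0 : 0 ≤ Gstar := by
    obtain ⟨z, hz⟩ := hXne
    exact le_trans (norm_nonneg _) (hG 1 (Finset.mem_Icc.mpr ⟨le_rfl, hT⟩) z hz)
  have hLip : ∀ k ∈ Finset.Icc 1 T, ∀ u ∈ X, ∀ v ∈ X, f k u - f k v ≤ Gstar * ‖u - v‖ := by
    intro k hk u hu v hv
    have h := Convex.norm_image_sub_le_of_norm_fderiv_le (𝕜 := ℝ)
      (fun z _ => (hfdiff k hk) z) (fun z hz => hG k hk z hz) hX hv hu
    calc f k u - f k v ≤ |f k u - f k v| := le_abs_self _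
      _ = ‖f k u - f k v‖ := (Real.norm_eq_abs _).symm
      _ ≤ Gstar * ‖u - v‖ := h
  have hfsc : ∀ k ∈ Finset.Icc 1 T, ∀ a ∈ X, ∀ b ∈ X,
      f k a - f k b - fderiv ℝ (f k) b (a - b) ≥ S/2 * ‖a - b‖^2 := by
    intro k hk a ha b hb
    have h1 := hrel k hk a ha b hb
    have h2 := hψsc a ha b hb
    have h3 : γ * (σ/2 * ‖a-b‖^2) ≤ γ * (ψ a - ψ b - fderiv ℝ ψ b (a - b)) :=
      mul_le_mul_of_nonneg_left h2 hγ.le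
    have h4 : S/2*‖a-b‖^2 = γ * (σ/2*‖a-b‖^2) := by rw [hSdef]; ring
    linarith [h1, h3]
  have hmin_sc : ∀ t, 1 ≤ t → ∀ y ∈ X, IsMinOn (Fb t) X y → ∀ z ∈ X,
      (n t : ℝ) * (S/2) * ‖z - y‖^2 ≤ Fb t z - Fb t y := by
    intro t ht y hy hmin z hz
    have hder : HasFDerivAt (fun w => ∑ k ∈ A t, f k w) (∑ k ∈ A t, fderiv ℝ (f k) y) y :=
      HasFDerivAt.fun_sum (fun k hk => ((hfdiff k (hAsub t hk)) y).hasFDerivAt)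
    have hmin' : IsMinOn (fun w => ∑ k ∈ A t, f k w) X y := by rw [← hFbA t]; exact hmin
    have h0 : 0 ≤ (∑ k ∈ A t, fderiv ℝ (f k) y) (z - y) := FTDL.fo_opt hX hder hmin' hy hz
    have happ : (∑ k ∈ A t, fderiv ℝ (f k) y) (z - y) = ∑ k ∈ A t, fderiv ℝ (f k) y (z - y) := by
      simp
    have hsum : ∑ k ∈ A t, (S/2 * ‖z - y‖^2)
        ≤ ∑ k ∈ A t, (f k z - f k y - fderiv ℝ (f k) y (z - y)) :=
      Finset.sum_le_sum (fun k hk => hfsc k (hAsub t hk) z hz y hy)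
    have hconst : ∑ k ∈ A t, (S/2 * ‖z - y‖^2) = (n t : ℝ) * (S/2 * ‖z - y‖^2) := by
      rw [Finset.sum_const, nsmul_eq_mul, hn]
    have hsplit : ∑ k ∈ A t, (f k z - f k y - fderiv ℝ (f k) y (z - y))
        = (∑ k ∈ A t, f k z) - (∑ k ∈ A t, f k y) - ∑ k ∈ A t, fderiv ℝ (f k) y (z - y) := by
      rw [Finset.sum_sub_distrib, Finset.sum_sub_distrib]
    have hFz : Fb t z = ∑ k ∈ A t, f k z := by rw [hFbA t]
    have hFy : Fb t y = ∑ k ∈ A t, f k y := by rw [hFbA t]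
    rw [hFz, hFy]
    rw [happ] at h0
    have hre : (n t : ℝ) * (S/2) * ‖z - y‖^2 = (n t : ℝ) * (S/2 * ‖z - y‖^2) := by ring
    linarith [hsum, hconst, hsplit, h0, hre]
  set eps : ℕ → ℝ := fun s => ((F s).card:ℝ)^2 * Gstar^2 / (8 * σ * γ * (n s : ℝ)) with heps
  have heps0 : ∀ s, 0 ≤ eps s := by
    intro s; simp only [heps]; positivity
  have htol : ∀ t, ((F t).card:ℝ)^2*Gstar^2/(8*σ*γ*∑ τ ∈ Finset.Icc 1 t, ((F τ).card:ℝ))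
      = eps t := by
    intro t; simp only [heps]; rw [hnsumR t]
  have hFbstep : ∀ t z, Fb (t+1) z = Fb t z + ∑ k ∈ F (t+1), f k z := by
    intro t z; rw [hFb, hFb, Finset.sum_Icc_succ_top (by omega)]
  have hFbE : ∀ t, F (t+1) = ∅ → Fb (t+1) = Fb t := by
    intro t h; funext z; rw [hFbstep t z, h]; simp
  have hnstep : ∀ t, n (t+1) = n t + (F (t+1)).card := by
    intro t
    rw [hnsumN, hnsumN, Finset.sum_Icc_succ_top (by omega)]
  have hLNE : ∀ t, 1 ≤ t → 1 ≤ FTDL.lastNE F t ∧ (F (FTDL.lastNE F t)).Nonempty ∧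
      ∀ r, FTDL.lastNE F t < r → r ≤ t → F r = ∅ := fun t ht => FTDL.lastNE_spec hF1 ht
  have hIccIoc : ∀ t : ℕ, Finset.Icc 1 t = Finset.Ioc 0 t := by
    intro t; ext r; simp only [Finset.mem_Icc, Finset.mem_Ioc]; omega
  have hsplitL : ∀ (g : ℕ → ℝ) t, 1 ≤ t → (∀ r, FTDL.lastNE F t < r → r ≤ t → g r = 0) →
      ∑ τ ∈ Finset.Icc 1 t, g τ = ∑ τ ∈ Finset.Icc 1 (FTDL.lastNE F t), g τ := by
    intro g t ht hz
    rw [hIccIoc, hIccIoc, ← Finset.sum_Ioc_consecutive g (Nat.zero_le _) (FTDL.lastNE_le F t)]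
    have h0 : ∑ τ ∈ Finset.Ioc (FTDL.lastNE F t) t, g τ = 0 :=
      Finset.sum_eq_zero (fun τ hτ => hz τ (Finset.mem_Ioc.mp hτ).1 (Finset.mem_Ioc.mp hτ).2)
    rw [h0]; ring
  have hnL : ∀ t, 1 ≤ t → n t = n (FTDL.lastNE F t) := by
    intro t ht
    obtain ⟨h1, h2, h3⟩ := hLNE t ht
    have hR : ∑ τ ∈ Finset.Icc 1 t, ((F τ).card:ℝ)
        = ∑ τ ∈ Finset.Icc 1 (FTDL.lastNE F t), ((F τ).card:ℝ) :=
      hsplitL (fun τ => ((F τ).card:ℝ)) t ht (fun r hr1 hr2 => by simp [h3 r hr1 hr2])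
    have := (hnsumR t).symm.trans (hR.trans (hnsumR (FTDL.lastNE F t)))
    exact_mod_cast this
  have hFbL : ∀ t, 1 ≤ t → Fb t = Fb (FTDL.lastNE F t) := by
    intro t ht; funext z
    obtain ⟨h1, h2, h3⟩ := hLNE t ht
    rw [hFb, hFb]
    exact hsplitL (fun τ => ∑ k ∈ F τ, f k z) t ht
      (fun r hr1 hr2 => by simp [h3 r hr1 hr2])
  have P : ∀ t, 1 ≤ t → t ≤ T →
      x (t+1) ∈ X ∧ (∃ y, y ∈ X ∧ IsMinOn (Fb t) X y) ∧
      Fb t (x (t+1)) ≤ Fb t (FTDL.Ysel X hXne (Fb t)) + eps (FTDL.lastNE F t) := by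
    intro t ht
    induction t, ht using Nat.le_induction with
    | base =>
      intro h1T
      obtain ⟨hxX, y, hyX, hymin, happ⟩ := hupd 1 (Finset.mem_Icc.mpr ⟨le_rfl, hT⟩) hF1
      have hex : ∃ y, y ∈ X ∧ IsMinOn (Fb 1) X y := ⟨y, hyX, hymin⟩
      obtain ⟨hYX, hYmin⟩ := FTDL.Ysel_spec X hXne (Fb 1) hex
      have heq : Fb 1 y = Fb 1 (FTDL.Ysel X hXne (Fb 1)) := le_antisymm (hymin hYX) (hYmin hyX)
      refine ⟨hxX, hex, ?_⟩
      rw [FTDL.lastNE_self le_rfl hF1, ← htol 1]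
      linarith [happ]
    | succ t ht ih =>
      intro hsucc
      have htT : t ≤ T := by omega
      obtain ⟨ihX, ihex, ihapp⟩ := ih htT
      by_cases hne : (F (t+1)).Nonempty
      · obtain ⟨hxX, y, hyX, hymin, happ⟩ :=
          hupd (t+1) (Finset.mem_Icc.mpr ⟨by omega, hsucc⟩) hne
        have hex : ∃ y, y ∈ X ∧ IsMinOn (Fb (t+1)) X y := ⟨y, hyX, hymin⟩
        obtain ⟨hYX, hYmin⟩ := FTDL.Ysel_spec X hXne (Fb (t+1)) hex
        have heq : Fb (t+1) y = Fb (t+1) (FTDL.Ysel X hXne (Fb (t+1))) :=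
          le_antisymm (hymin hYX) (hYmin hyX)
        refine ⟨hxX, hex, ?_⟩
        rw [FTDL.lastNE_self (by omega) hne, ← htol (t+1)]
        linarith [happ]
      · have hFe : F (t+1) = ∅ := Finset.not_nonempty_iff_eq_empty.mp hne
        have hxeq : x (t+1+1) = x (t+1) := hupd0 (t+1) (Finset.mem_Icc.mpr ⟨by omega, hsucc⟩) hFe
        have hFbeq : Fb (t+1) = Fb t := hFbE t hFe
        have hLeq : FTDL.lastNE F (t+1) = FTDL.lastNE F t := by
          simp [FTDL.lastNE, hne]
        have hex : ∃ y, y ∈ X ∧ IsMinOn (Fb (t+1)) X y := by rw [hFbeq]; exact ihex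
        refine ⟨by rw [hxeq]; exact ihX, hex, ?_⟩
        rw [hLeq, hxeq, hFbeq]
        exact ihapp
  have hYsel : ∀ t, 1 ≤ t → t ≤ T → FTDL.Ysel X hXne (Fb t) ∈ X ∧
      IsMinOn (Fb t) X (FTDL.Ysel X hXne (Fb t)) := by
    intro t h1 h2; exact FTDL.Ysel_spec X hXne (Fb t) (P t h1 h2).2.1
  have hdist : ∀ t, 1 ≤ t → t ≤ T →
      ‖x (t+1) - FTDL.Ysel X hXne (Fb t)‖
        ≤ ((F (FTDL.lastNE F t)).card : ℝ) * Gstar / (2 * S * (n t : ℝ)) := by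
    intro t h1 h2
    obtain ⟨hxX, hex, happ⟩ := P t h1 h2
    obtain ⟨hYX, hYmin⟩ := hYsel t h1 h2
    have hms := hmin_sc t h1 _ hYX hYmin _ hxX
    have hnl : n t = n (FTDL.lastNE F t) := hnL t h1
    have hNpos : (0:ℝ) < (n t : ℝ) := by
      have := hnpos t h1; exact_mod_cast Nat.lt_of_lt_of_le Nat.zero_lt_one this
    have hm0 : (0:ℝ) ≤ ((F (FTDL.lastNE F t)).card : ℝ) := Nat.cast_nonneg _
    have hepsl : eps (FTDL.lastNE F t)
        = ((F (FTDL.lastNE F t)).card : ℝ)^2*Gstar^2/(8*σ*γ*(n t:ℝ)) := by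
      simp only [heps]; rw [← hnl]
    have hRHS0 : (0:ℝ) ≤ ((F (FTDL.lastNE F t)).card : ℝ) * Gstar / (2 * S * (n t : ℝ)) :=
      div_nonneg (mul_nonneg hm0 hG0) (by positivity)
    have key : ‖x (t+1) - FTDL.Ysel X hXne (Fb t)‖^2
        ≤ (((F (FTDL.lastNE F t)).card : ℝ)*Gstar/(2*S*(n t:ℝ)))^2 := by
      have hσ' : σ ≠ 0 := ne_of_gt hσ
      have hγ' : γ ≠ 0 := ne_of_gt hγ
      have hn' : (n t:ℝ) ≠ 0 := ne_of_gt hNpos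
      have hc : ((F (FTDL.lastNE F t)).card : ℝ)^2*Gstar^2/(8*σ*γ*(n t:ℝ))
          = (((F (FTDL.lastNE F t)).card : ℝ)*Gstar/(2*S*(n t:ℝ)))^2 * ((n t:ℝ)*(S/2)) := by
        rw [hSdef]; field_simp; ring
      have h5 : ‖x (t+1) - FTDL.Ysel X hXne (Fb t)‖^2 * ((n t:ℝ)*(S/2))
          ≤ (((F (FTDL.lastNE F t)).card : ℝ)*Gstar/(2*S*(n t:ℝ)))^2 * ((n t:ℝ)*(S/2)) := by
        rw [← hc]
        have := hms
        nlinarith [hms, happ, hepsl]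
      have hcpos : (0:ℝ) < (n t:ℝ)*(S/2) := by positivity
      exact le_of_mul_le_mul_right h5 hcpos
    exact le_of_pow_le_pow_left₀ (by norm_num) hRHS0 key
  have hyy : ∀ t1 t2, 1 ≤ t1 → t1 ≤ t2 → t2 ≤ T →
      Gstar * ‖FTDL.Ysel X hXne (Fb t1) - FTDL.Ysel X hXne (Fb t2)‖
        ≤ Gstar^2/S * (Real.log (n t2 : ℝ) - Real.log (n t1 : ℝ)) := by
    intro t1 t2 h1 h12 h2T
    obtain ⟨hY1X, hY1min⟩ := hYsel t1 h1 (le_trans h12 h2T)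
    obtain ⟨hY2X, hY2min⟩ := hYsel t2 (le_trans h1 h12) h2T
    set y1 := FTDL.Ysel X hXne (Fb t1) with hy1
    set y2 := FTDL.Ysel X hXne (Fb t2) with hy2
    have hms1 := hmin_sc t1 h1 y1 hY1X hY1min y2 hY2X
    have hms2 := hmin_sc t2 (le_trans h1 h12) y2 hY2X hY2min y1 hY1X
    have hN1 : (1:ℝ) ≤ (n t1 : ℝ) := by exact_mod_cast hnpos t1 h1
    have hN2 : (1:ℝ) ≤ (n t2 : ℝ) := by exact_mod_cast hnpos t2 (le_trans h1 h12)
    have hN12 : (n t1 : ℝ) ≤ (n t2 : ℝ) := by exact_mod_cast hnmono h12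
    have hN1pos : (0:ℝ) < (n t1 : ℝ) := by linarith
    have hdiffsum : (Fb t2 y1 - Fb t1 y1) - (Fb t2 y2 - Fb t1 y2)
        = ∑ k ∈ A t2 \ A t1, (f k y1 - f k y2) := by
      rw [hFbA t1, hFbA t2]
      rw [Finset.sum_sub_distrib, Finset.sum_sdiff_eq_sub (hAmono h12),
        Finset.sum_sdiff_eq_sub (hAmono h12)]
    have hcard : ((A t2 \ A t1).card : ℝ) = (n t2 : ℝ) - (n t1 : ℝ) := by
      rw [Finset.card_sdiff_of_subset (hAmono h12)]
      rw [Nat.cast_sub (hnmono h12)]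
    have hbound : ∑ k ∈ A t2 \ A t1, (f k y1 - f k y2)
        ≤ ((n t2 : ℝ) - (n t1 : ℝ)) * (Gstar * ‖y1 - y2‖) := by
      calc ∑ k ∈ A t2 \ A t1, (f k y1 - f k y2)
          ≤ ∑ _k ∈ A t2 \ A t1, Gstar * ‖y1 - y2‖ :=
            Finset.sum_le_sum fun k hk =>
              hLip k (hAsub t2 (Finset.sdiff_subset hk)) y1 hY1X y2 hY2X
        _ = ((n t2 : ℝ) - (n t1 : ℝ)) * (Gstar * ‖y1 - y2‖) := by
            rw [Finset.sum_const, nsmul_eq_mul, hcard]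
    have hsym : ‖y2 - y1‖ = ‖y1 - y2‖ := norm_sub_rev _ _
    rw [hsym] at hms1
    have hkey : ((n t1 : ℝ)+(n t2 : ℝ))*(S/2)*‖y1-y2‖^2
        ≤ ((n t2 : ℝ)-(n t1 : ℝ))*(Gstar*‖y1-y2‖) := by
      nlinarith [hms1, hms2, hdiffsum, hbound]
    have hlog : 2*((n t2 : ℝ)-(n t1 : ℝ))/((n t1 : ℝ)+(n t2 : ℝ))
        ≤ Real.log (n t2 : ℝ) - Real.log (n t1 : ℝ) := FTDL.pade hN1pos hN12
    have hlognn : 0 ≤ Real.log (n t2 : ℝ) - Real.log (n t1 : ℝ) := by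
      have h2 : 0 ≤ 2*((n t2 : ℝ)-(n t1 : ℝ))/((n t1 : ℝ)+(n t2 : ℝ)) := by
        apply div_nonneg (by linarith) (by linarith)
      linarith
    rcases eq_or_lt_of_le (norm_nonneg (y1 - y2)) with h0 | hpos
    · rw [← h0]
      have : Gstar^2/S ≥ 0 := by positivity
      nlinarith [hlognn]
    · have hstep1 : ‖y1 - y2‖ ≤ 2*Gstar*((n t2 : ℝ)-(n t1 : ℝ))/(S*((n t1 : ℝ)+(n t2 : ℝ))) := by
        rw [le_div_iff₀ (by positivity)]
        have hcancel : ((n t1 : ℝ)+(n t2 : ℝ))*(S/2)*‖y1-y2‖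
            ≤ ((n t2 : ℝ)-(n t1 : ℝ))*Gstar := by
          have := le_of_mul_le_mul_right
            (by nlinarith [hkey] :
              (((n t1 : ℝ)+(n t2 : ℝ))*(S/2)*‖y1-y2‖) * ‖y1-y2‖
                ≤ (((n t2 : ℝ)-(n t1 : ℝ))*Gstar) * ‖y1-y2‖) hpos
          exact this
        nlinarith [hcancel]
      calc Gstar * ‖y1-y2‖
          ≤ Gstar * (2*Gstar*((n t2 : ℝ)-(n t1 : ℝ))/(S*((n t1 : ℝ)+(n t2 : ℝ)))) :=
            mul_le_mul_of_nonneg_left hstep1 hG0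
        _ = (Gstar^2/S) * (2*((n t2 : ℝ)-(n t1 : ℝ))/((n t1 : ℝ)+(n t2 : ℝ))) := by
            rw [hSdef]
            field_simp
        _ ≤ (Gstar^2/S) * (Real.log (n t2 : ℝ) - Real.log (n t1 : ℝ)) :=
            mul_le_mul_of_nonneg_left hlog (by positivity)
  have hgap : ∀ t, 1 ≤ t → t ≤ T → t - FTDL.lastNE F t ≤ D - 1 := by
    intro t h1 h2
    obtain ⟨hl1, hl2, hl3⟩ := hLNE t h1
    rcases eq_or_lt_of_le (FTDL.lastNE_le F t) with heq | hlt
    · omega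
    · have hk0 : FTDL.lastNE F t + 1 ∈ Finset.Icc 1 T := Finset.mem_Icc.mpr ⟨by omega, by omega⟩
      have hd1k := hd1 _ hk0
      have hmem := hmemF _ hk0
      have hbig : t < FTDL.lastNE F t + 1 + d (FTDL.lastNE F t + 1) - 1 := by
        by_contra hc
        push_neg at hc
        have he : F (FTDL.lastNE F t + 1 + d (FTDL.lastNE F t + 1) - 1) = ∅ :=
          hl3 _ (by omega) hc
        rw [he] at hmem
        exact absurd hmem (Finset.notMem_empty _)
      have hdD := hDd _ hk0
      omega
  have BTL : ∀ t, 1 ≤ t → t ≤ T →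
      ∑ τ ∈ Finset.Icc 1 t, ∑ k ∈ F τ, f k (x (τ+1))
        ≤ Fb t (x (t+1)) - eps (FTDL.lastNE F t) + ∑ s ∈ Finset.Icc 1 t, eps s := by
    intro t ht
    induction t, ht using Nat.le_induction with
    | base =>
      intro h1T
      rw [Finset.Icc_self, Finset.sum_singleton, Finset.sum_singleton,
        FTDL.lastNE_self le_rfl hF1]
      have he : Fb 1 (x (1+1)) = ∑ k ∈ F 1, f k (x (1+1)) := by
        rw [hFb, Finset.Icc_self, Finset.sum_singleton]
      linarith [he]
    | succ t ht ih =>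
      intro hsucc
      have htT : t ≤ T := by omega
      have ihh := ih htT
      obtain ⟨hxX, hex, happ⟩ := P t ht htT
      obtain ⟨hYX, hYmin⟩ := hYsel t ht htT
      rw [Finset.sum_Icc_succ_top (show 1 ≤ t+1 by omega),
        Finset.sum_Icc_succ_top (show 1 ≤ t+1 by omega) eps]
      by_cases hne : (F (t+1)).Nonempty
      · have hx2X : x (t+1+1) ∈ X := (P (t+1) (by omega) hsucc).1
        have hstep : ∑ k ∈ F (t+1), f k (x (t+1+1))
            = Fb (t+1) (x (t+1+1)) - Fb t (x (t+1+1)) := by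
          rw [hFbstep]; ring
        have hLt1 : FTDL.lastNE F (t+1) = t+1 := FTDL.lastNE_self (by omega) hne
        rw [hLt1, hstep]
        have hmin2 : Fb t (FTDL.Ysel X hXne (Fb t)) ≤ Fb t (x (t+1+1)) := hYmin hx2X
        linarith [ihh, happ, hmin2]
      · have hFe : F (t+1) = ∅ := Finset.not_nonempty_iff_eq_empty.mp hne
        have hxeq : x (t+1+1) = x (t+1) :=
          hupd0 (t+1) (Finset.mem_Icc.mpr ⟨by omega, hsucc⟩) hFe
        have hFbeq : Fb (t+1) = Fb t := hFbE t hFe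
        have hLeq : FTDL.lastNE F (t+1) = FTDL.lastNE F t := by simp [FTDL.lastNE, hne]
        have hepsz : eps (t+1) = 0 := by simp [heps, hFe]
        rw [hFe, hLeq, hxeq, hFbeq, hepsz]
        simp only [Finset.sum_empty]
        linarith [ihh]
  have hFTLeq : ∑ τ ∈ Finset.Icc 1 T, ∑ k ∈ F τ, f k (x (τ+1))
      = ∑ k ∈ Finset.Icc 1 T, f k (x (k + d k - 1 + 1)) := by
    have hcongr : ∀ τ ∈ Finset.Icc 1 T, ∑ k ∈ F τ, f k (x (τ+1))
        = ∑ k ∈ F τ, f k (x (k + d k - 1 + 1)) := by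
      intro τ _
      apply Finset.sum_congr rfl
      intro k hk
      rw [hF] at hk
      rw [(Finset.mem_filter.mp hk).2]
    rw [Finset.sum_congr rfl hcongr, hpart (fun k => f k (x (k + d k - 1 + 1))) T, hAT]
  have hFTL : ∑ k ∈ Finset.Icc 1 T, f k (x (k + d k - 1 + 1))
      ≤ ∑ k ∈ Finset.Icc 1 T, f k xstar + ∑ s ∈ Finset.Icc 1 T, eps s := by
    rw [← hFTLeq]
    obtain ⟨hxX, hex, happ⟩ := P T hT le_rfl
    obtain ⟨hYX, hYmin⟩ := hYsel T hT le_rfl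
    have h1 := BTL T hT le_rfl
    have h2 : Fb T (FTDL.Ysel X hXne (Fb T)) ≤ Fb T xstar := hYmin hxstar
    have h3 : Fb T xstar = ∑ k ∈ Finset.Icc 1 T, f k xstar := by
      rw [hFbA T]; simp only [hAT]
    linarith [h1, happ, h2, h3]
  have hdriftk : ∀ k ∈ Finset.Icc 2 T, f k (x k) - f k (x (k + d k - 1 + 1))
      ≤ Gstar^2/S * (((F (FTDL.lastNE F (k-1))).card : ℝ)/(2*(n (FTDL.lastNE F (k-1)) : ℝ))
        + (Real.log (n (k + d k - 1) : ℝ) - Real.log (n (k-1) : ℝ))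
        + ((F (k + d k - 1)).card : ℝ)/(2*(n (k + d k - 1) : ℝ))) := by
    intro k hk
    obtain ⟨hk2, hkT⟩ := Finset.mem_Icc.mp hk
    have hkIcc : k ∈ Finset.Icc 1 T := Finset.mem_Icc.mpr ⟨by omega, hkT⟩
    obtain ⟨hbk, hbT, hb1⟩ := harrle k hkIcc
    have hk1T : k - 1 ≤ T := by omega
    have hk11 : 1 ≤ k - 1 := by omega
    have hkm1 : k - 1 + 1 = k := by omega
    have hxkX : x k ∈ X := by rw [← hkm1]; exact (P (k-1) hk11 hk1T).1
    have hxbX : x (k + d k - 1 + 1) ∈ X := (P (k + d k - 1) hb1 hbT).1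
    have hdist1 : ‖x k - FTDL.Ysel X hXne (Fb (k-1))‖
        ≤ ((F (FTDL.lastNE F (k-1))).card : ℝ) * Gstar
          / (2*S*(n (FTDL.lastNE F (k-1)) : ℝ)) := by
      have h := hdist (k-1) hk11 hk1T
      rw [hkm1] at h
      rwa [hnL (k-1) hk11] at h
    have hdist2 : ‖x (k + d k - 1 + 1) - FTDL.Ysel X hXne (Fb (k + d k - 1))‖
        ≤ ((F (k + d k - 1)).card : ℝ) * Gstar / (2*S*(n (k + d k - 1) : ℝ)) := by
      have hLb : FTDL.lastNE F (k + d k - 1) = k + d k - 1 :=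
        FTDL.lastNE_self hb1 ⟨k, hmemF k hkIcc⟩
      have h := hdist (k + d k - 1) hb1 hbT
      rwa [hLb] at h
    have hyyb := hyy (k-1) (k + d k - 1) hk11 (by omega) hbT
    have hstep : f k (x k) - f k (x (k + d k - 1 + 1))
        ≤ Gstar * ‖x k - x (k + d k - 1 + 1)‖ := hLip k hkIcc _ hxkX _ hxbX
    set y1 := FTDL.Ysel X hXne (Fb (k-1)) with hy1
    set y2 := FTDL.Ysel X hXne (Fb (k + d k - 1)) with hy2
    have htri : ‖x k - x (k + d k - 1 + 1)‖
        ≤ ‖x k - y1‖ + ‖y1 - y2‖ + ‖y2 - x (k + d k - 1 + 1)‖ := by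
      have hrw : x k - x (k + d k - 1 + 1)
          = (x k - y1) + ((y1 - y2) + (y2 - x (k + d k - 1 + 1))) := by abel
      calc ‖x k - x (k + d k - 1 + 1)‖
          = ‖(x k - y1) + ((y1 - y2) + (y2 - x (k + d k - 1 + 1)))‖ := by rw [← hrw]
        _ ≤ ‖x k - y1‖ + ‖(y1 - y2) + (y2 - x (k + d k - 1 + 1))‖ := norm_add_le _ _
        _ ≤ ‖x k - y1‖ + (‖y1 - y2‖ + ‖y2 - x (k + d k - 1 + 1)‖) := by
            linarith [norm_add_le (y1 - y2) (y2 - x (k + d k - 1 + 1))]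
        _ = ‖x k - y1‖ + ‖y1 - y2‖ + ‖y2 - x (k + d k - 1 + 1)‖ := by ring
    have hnla : (1:ℝ) ≤ (n (FTDL.lastNE F (k-1)) : ℝ) := by
      exact_mod_cast hnpos _ (hLNE (k-1) hk11).1
    have hnlb : (1:ℝ) ≤ (n (k + d k - 1) : ℝ) := by exact_mod_cast hnpos _ hb1
    have hSne : S ≠ 0 := ne_of_gt hS
    have hnane : (n (FTDL.lastNE F (k-1)) : ℝ) ≠ 0 := by linarith
    have hnbne : (n (k + d k - 1) : ℝ) ≠ 0 := by linarith
    have e1 : Gstar * (((F (FTDL.lastNE F (k-1))).card : ℝ) * Gstar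
          / (2*S*(n (FTDL.lastNE F (k-1)) : ℝ)))
        = Gstar^2/S * (((F (FTDL.lastNE F (k-1))).card : ℝ)
          /(2*(n (FTDL.lastNE F (k-1)) : ℝ))) := by
      field_simp
    have e3 : Gstar * (((F (k + d k - 1)).card : ℝ) * Gstar / (2*S*(n (k + d k - 1) : ℝ)))
        = Gstar^2/S * (((F (k + d k - 1)).card : ℝ)/(2*(n (k + d k - 1) : ℝ))) := by
      field_simp
    have hb2 : Gstar * ‖y2 - x (k + d k - 1 + 1)‖
        ≤ Gstar * (((F (k + d k - 1)).card : ℝ) * Gstar / (2*S*(n (k + d k - 1) : ℝ))) := by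
      rw [norm_sub_rev]
      exact mul_le_mul_of_nonneg_left hdist2 hG0
    have hb1' : Gstar * ‖x k - y1‖
        ≤ Gstar * (((F (FTDL.lastNE F (k-1))).card : ℝ) * Gstar
          / (2*S*(n (FTDL.lastNE F (k-1)) : ℝ))) :=
      mul_le_mul_of_nonneg_left hdist1 hG0
    nlinarith [hstep, htri, hyyb, hb1', hb2, e1, e3, mul_le_mul_of_nonneg_left htri hG0]
  have hsum1 : ∑ k ∈ Finset.Icc 2 T,
        ((F (FTDL.lastNE F (k-1))).card : ℝ)/(2*(n (FTDL.lastNE F (k-1)) : ℝ))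
      ≤ D * ∑ j ∈ Finset.Icc 1 T, ((F j).card : ℝ)/(2*(n j : ℝ)) := by
    apply FTDL.sum_comp_le (fun k => FTDL.lastNE F (k-1))
      (fun j => ((F j).card : ℝ)/(2*(n j : ℝ)))
    · intro j _; exact div_nonneg (Nat.cast_nonneg _) (mul_nonneg zero_le_two (Nat.cast_nonneg _))
    · intro k hk
      obtain ⟨hk2, hkT⟩ := Finset.mem_Icc.mp hk
      have h1 := (hLNE (k-1) (by omega)).1
      have h2 := FTDL.lastNE_le F (k-1)
      exact Finset.mem_Icc.mpr ⟨h1, by omega⟩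
    · intro j hj
      have hsub : (Finset.Icc 2 T).filter (fun k => FTDL.lastNE F (k-1) = j)
          ⊆ Finset.Icc (j+1) (j+D) := by
        intro k hkk
        obtain ⟨hkI, hkL⟩ := Finset.mem_filter.mp hkk
        obtain ⟨hka, hkb⟩ := Finset.mem_Icc.mp hkI
        have hgap' := hgap (k-1) (by omega) (by omega)
        have hle := FTDL.lastNE_le F (k-1)
        rw [hkL] at hgap' hle
        simp only [Finset.mem_Icc]
        omega
      calc ((Finset.Icc 2 T).filter (fun k => FTDL.lastNE F (k-1) = j)).card
          ≤ (Finset.Icc (j+1) (j+D)).card := Finset.card_le_card hsub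
        _ ≤ D := by rw [Nat.card_Icc]; omega
  have hsum3 : ∑ k ∈ Finset.Icc 2 T,
        ((F (k + d k - 1)).card : ℝ)/(2*(n (k + d k - 1) : ℝ))
      ≤ D * ∑ j ∈ Finset.Icc 1 T, ((F j).card : ℝ)/(2*(n j : ℝ)) := by
    apply FTDL.sum_comp_le (fun k => k + d k - 1)
      (fun j => ((F j).card : ℝ)/(2*(n j : ℝ)))
    · intro j _; exact div_nonneg (Nat.cast_nonneg _) (mul_nonneg zero_le_two (Nat.cast_nonneg _))
    · intro k hk
      obtain ⟨hk2, hkT⟩ := Finset.mem_Icc.mp hk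
      obtain ⟨h1, h2, h3⟩ := harrle k (Finset.mem_Icc.mpr ⟨by omega, hkT⟩)
      exact Finset.mem_Icc.mpr ⟨h3, h2⟩
    · intro j hj
      have hsub : (Finset.Icc 2 T).filter (fun k => k + d k - 1 = j) ⊆ F j := by
        intro k hkk
        obtain ⟨hkI, hkE⟩ := Finset.mem_filter.mp hkk
        obtain ⟨hka, hkb⟩ := Finset.mem_Icc.mp hkI
        rw [hF]
        exact Finset.mem_filter.mpr ⟨Finset.mem_Icc.mpr ⟨by omega, hkb⟩, hkE⟩
      calc ((Finset.Icc 2 T).filter (fun k => k + d k - 1 = j)).card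
          ≤ (F j).card := Finset.card_le_card hsub
        _ ≤ D := hcardF j
  have hsum2 : ∑ k ∈ Finset.Icc 2 T,
        (Real.log (n (k + d k - 1) : ℝ) - Real.log (n (k-1) : ℝ))
      ≤ D * Real.log T := by
    have hterm : ∀ k ∈ Finset.Icc 2 T,
        (Real.log (n (k + d k - 1) : ℝ) - Real.log (n (k-1) : ℝ))
          = ∑ r ∈ Finset.Icc k (k + d k - 1),
              (Real.log (n r : ℝ) - Real.log (n (r-1) : ℝ)) := by
      intro k hk
      obtain ⟨hk2, hkT⟩ := Finset.mem_Icc.mp hk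
      obtain ⟨h1, h2, h3⟩ := harrle k (Finset.mem_Icc.mpr ⟨by omega, hkT⟩)
      rw [FTDL.telescope (fun r => Real.log (n r : ℝ)) k (k + d k - 1) (by omega) (by omega)]
    have hexp : ∀ k ∈ Finset.Icc 2 T,
        ∑ r ∈ Finset.Icc k (k + d k - 1), (Real.log (n r : ℝ) - Real.log (n (r-1) : ℝ))
          = ∑ r ∈ Finset.Icc 2 T, if k ≤ r ∧ r ≤ k + d k - 1
              then (Real.log (n r : ℝ) - Real.log (n (r-1) : ℝ)) else 0 := by
      intro k hk
      obtain ⟨hk2, hkT⟩ := Finset.mem_Icc.mp hk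
      obtain ⟨h1, h2, h3⟩ := harrle k (Finset.mem_Icc.mpr ⟨by omega, hkT⟩)
      rw [← Finset.sum_filter]
      congr 1
      ext r
      simp only [Finset.mem_filter, Finset.mem_Icc]
      omega
    rw [Finset.sum_congr rfl hterm, Finset.sum_congr rfl hexp, Finset.sum_comm]
    have hinner : ∀ r ∈ Finset.Icc 2 T,
        (∑ k ∈ Finset.Icc 2 T, if k ≤ r ∧ r ≤ k + d k - 1
            then (Real.log (n r : ℝ) - Real.log (n (r-1) : ℝ)) else 0)
          ≤ (D:ℝ) * (Real.log (n r : ℝ) - Real.log (n (r-1) : ℝ)) := by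
      intro r hr
      obtain ⟨hr2, hrT⟩ := Finset.mem_Icc.mp hr
      have hdel0 : 0 ≤ Real.log (n r : ℝ) - Real.log (n (r-1) : ℝ) := by
        have ha : (0:ℝ) < (n (r-1) : ℝ) := by
          have := hnpos (r-1) (by omega); exact_mod_cast Nat.lt_of_lt_of_le Nat.zero_lt_one this
        have hbb : (n (r-1) : ℝ) ≤ (n r : ℝ) := by
          exact_mod_cast hnmono (show r - 1 ≤ r by omega)
        have := Real.log_le_log ha hbb
        linarith
      rw [← Finset.sum_filter, Finset.sum_const, nsmul_eq_mul]
      apply mul_le_mul_of_nonneg_right _ hdel0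
      have hsub : (Finset.Icc 2 T).filter (fun k => k ≤ r ∧ r ≤ k + d k - 1)
          ⊆ Finset.Icc (r+1-D) r := by
        intro k hkk
        obtain ⟨hkI, hk1, hkk2⟩ := Finset.mem_filter.mp hkk
        obtain ⟨hka, hkb⟩ := Finset.mem_Icc.mp hkI
        have := hDd k (Finset.mem_Icc.mpr ⟨by omega, hkb⟩)
        have := hd1 k (Finset.mem_Icc.mpr ⟨by omega, hkb⟩)
        simp only [Finset.mem_Icc]
        omega
      have hcd : ((Finset.Icc 2 T).filter (fun k => k ≤ r ∧ r ≤ k + d k - 1)).card ≤ D := by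
        calc ((Finset.Icc 2 T).filter (fun k => k ≤ r ∧ r ≤ k + d k - 1)).card
            ≤ (Finset.Icc (r+1-D) r).card := Finset.card_le_card hsub
          _ ≤ D := by rw [Nat.card_Icc]; omega
      exact_mod_cast hcd
    calc ∑ r ∈ Finset.Icc 2 T, ∑ k ∈ Finset.Icc 2 T,
          (if k ≤ r ∧ r ≤ k + d k - 1
            then (Real.log (n r : ℝ) - Real.log (n (r-1) : ℝ)) else 0)
        ≤ ∑ r ∈ Finset.Icc 2 T, (D:ℝ) * (Real.log (n r : ℝ) - Real.log (n (r-1) : ℝ)) :=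
          Finset.sum_le_sum hinner
      _ = (D:ℝ) * ∑ r ∈ Finset.Icc 2 T, (Real.log (n r : ℝ) - Real.log (n (r-1) : ℝ)) := by
          rw [Finset.mul_sum]
      _ = (D:ℝ) * (Real.log (n T : ℝ) - Real.log (n (2-1) : ℝ)) := by
          rw [FTDL.telescope (fun r => Real.log (n r : ℝ)) 2 T (by omega) (by omega)]
      _ = D * Real.log T := by
          norm_num [hnT, hn1]
  have hn0 : n 0 = 0 := by
    have : A 0 = ∅ := by
      apply Finset.filter_false_of_mem
      intro k hk
      have := hd1 k hk
      have := (Finset.mem_Icc.mp hk).1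
      omega
    rw [hn]; simp [this]
  have hWb : ∀ t, t ≤ T → ∑ j ∈ Finset.Icc 1 t, ((F j).card : ℝ)/(n j : ℝ)
      ≤ FTDL.har (n t) := by
    intro t
    induction t with
    | zero => intro _; simp [FTDL.har, hn0]
    | succ m ih =>
      intro hmT
      have ihm := ih (by omega)
      rw [Finset.sum_Icc_succ_top (by omega)]
      have hns := hnstep m
      have hnm1 : 1 ≤ n (m+1) := hnpos (m+1) (by omega)
      have hdg := FTDL.har_diff_ge (show n m ≤ n (m+1) from hnmono (by omega)) hnm1
      have hcast : ((n (m+1):ℝ) - (n m : ℝ)) = ((F (m+1)).card : ℝ) := by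
        rw [hns]; push_cast; ring
      rw [hcast] at hdg
      linarith [ihm, hdg]
  set W : ℝ := ∑ j ∈ Finset.Icc 1 T, ((F j).card : ℝ)/(n j : ℝ) with hWdef
  have hW2 : ∑ j ∈ Finset.Icc 1 T, ((F j).card : ℝ)/(2*(n j : ℝ)) = W/2 := by
    rw [hWdef, Finset.sum_div]
    apply Finset.sum_congr rfl
    intro j _
    ring
  have hWlog : W ≤ 1 + Real.log T := by
    have h1 := hWb T le_rfl
    rw [hnT] at h1
    have h2 := FTDL.har_le_log T hT
    rw [hWdef]
    calc ∑ j ∈ Finset.Icc 1 T, ((F j).card : ℝ)/(n j : ℝ) ≤ FTDL.har T := h1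
      _ ≤ 1 + Real.log T := h2
  have hW0 : 0 ≤ W := by
    rw [hWdef]
    apply Finset.sum_nonneg
    intro j _
    exact div_nonneg (Nat.cast_nonneg _) (Nat.cast_nonneg _)
  have hepssum : ∑ s ∈ Finset.Icc 1 T, eps s ≤ Gstar^2/S * ((D:ℝ)/8 * W) := by
    have hterm : ∀ s ∈ Finset.Icc 1 T, eps s
        ≤ Gstar^2/S * ((D:ℝ)/8 * (((F s).card : ℝ)/(n s : ℝ))) := by
      intro s hs
      simp only [heps]
      have hn1s : (1:ℝ) ≤ (n s:ℝ) := by exact_mod_cast hnpos s (Finset.mem_Icc.mp hs).1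
      have hnspos : (0:ℝ) < (n s:ℝ) := by linarith
      have hmD : ((F s).card : ℝ) ≤ (D:ℝ) := by exact_mod_cast hcardF s
      have hm0 : (0:ℝ) ≤ ((F s).card : ℝ) := Nat.cast_nonneg _
      have heq : ((F s).card:ℝ)^2*Gstar^2/(8*σ*γ*(n s:ℝ))
          = Gstar^2/S * (((F s).card:ℝ)^2/(8*(n s:ℝ))) := by
        rw [hSdef]; ring
      rw [heq]
      apply mul_le_mul_of_nonneg_left _ (div_nonneg (sq_nonneg _) hS.le)
      have h2 : (D:ℝ)/8 * (((F s).card:ℝ)/(n s:ℝ)) = ((D:ℝ)*((F s).card:ℝ))/(8*(n s:ℝ)) := by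
        ring
      rw [h2, div_le_div_iff₀ (by linarith) (by linarith)]
      nlinarith [mul_le_mul_of_nonneg_right hmD hm0, hnspos]
    calc ∑ s ∈ Finset.Icc 1 T, eps s
        ≤ ∑ s ∈ Finset.Icc 1 T, Gstar^2/S * ((D:ℝ)/8 * (((F s).card : ℝ)/(n s : ℝ))) :=
          Finset.sum_le_sum hterm
      _ = Gstar^2/S * ((D:ℝ)/8 * W) := by
          rw [hWdef, Finset.mul_sum, Finset.mul_sum]
  have hk1term : f 1 (x 1) - f 1 (x (1 + d 1 - 1 + 1)) ≤ Gstar^2/(2*S) := by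
    have h11 : 1 + d 1 - 1 + 1 = 1 + 1 := by omega
    rw [h11]
    have hx2X : x (1+1) ∈ X := (P 1 le_rfl hT).1
    have hm1 : (1:ℕ) ∈ Finset.Icc 1 T := Finset.mem_Icc.mpr ⟨le_rfl, hT⟩
    have hsc := hfsc 1 hm1 (x (1+1)) hx2X (x 1) hx1
    have hgr : |fderiv ℝ (f 1) (x 1) (x (1+1) - x 1)| ≤ Gstar * ‖x (1+1) - x 1‖ := by
      calc |fderiv ℝ (f 1) (x 1) (x (1+1) - x 1)|
          = ‖fderiv ℝ (f 1) (x 1) (x (1+1) - x 1)‖ := (Real.norm_eq_abs _).symm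
        _ ≤ ‖fderiv ℝ (f 1) (x 1)‖ * ‖x (1+1) - x 1‖ := ContinuousLinearMap.le_opNorm _ _
        _ ≤ Gstar * ‖x (1+1) - x 1‖ :=
            mul_le_mul_of_nonneg_right (hG 1 hm1 (x 1) hx1) (norm_nonneg _)
    have habs := (abs_le.mp hgr).1
    have hchain : f 1 (x 1) - f 1 (x (1+1))
        ≤ Gstar * ‖x (1+1) - x 1‖ - S/2 * ‖x (1+1) - x 1‖^2 := by linarith [hsc, habs]
    have hfin : Gstar * ‖x (1+1) - x 1‖ - S/2 * ‖x (1+1) - x 1‖^2 ≤ Gstar^2/(2*S) := by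
      rw [le_div_iff₀ (by positivity : (0:ℝ) < 2*S)]
      nlinarith [sq_nonneg (S * ‖x (1+1) - x 1‖ - Gstar)]
    linarith
  have hdriftsum : ∑ k ∈ Finset.Icc 2 T, (f k (x k) - f k (x (k + d k - 1 + 1)))
      ≤ Gstar^2/S * ((D:ℝ) * W + (D:ℝ) * Real.log T) := by
    calc ∑ k ∈ Finset.Icc 2 T, (f k (x k) - f k (x (k + d k - 1 + 1)))
        ≤ ∑ k ∈ Finset.Icc 2 T, Gstar^2/S
            * (((F (FTDL.lastNE F (k-1))).card : ℝ)/(2*(n (FTDL.lastNE F (k-1)) : ℝ))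
              + (Real.log (n (k + d k - 1) : ℝ) - Real.log (n (k-1) : ℝ))
              + ((F (k + d k - 1)).card : ℝ)/(2*(n (k + d k - 1) : ℝ))) :=
          Finset.sum_le_sum hdriftk
      _ = Gstar^2/S * (
            (∑ k ∈ Finset.Icc 2 T,
              ((F (FTDL.lastNE F (k-1))).card : ℝ)/(2*(n (FTDL.lastNE F (k-1)) : ℝ)))
            + (∑ k ∈ Finset.Icc 2 T,
              (Real.log (n (k + d k - 1) : ℝ) - Real.log (n (k-1) : ℝ)))
            + (∑ k ∈ Finset.Icc 2 T,
              ((F (k + d k - 1)).card : ℝ)/(2*(n (k + d k - 1) : ℝ)))) := by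
          rw [← Finset.mul_sum]
          congr 1
          rw [Finset.sum_add_distrib, Finset.sum_add_distrib]
      _ ≤ Gstar^2/S * ((D:ℝ) * W + (D:ℝ) * Real.log T) := by
          apply mul_le_mul_of_nonneg_left _ (by positivity)
          have h1 := hsum1
          have h3 := hsum3
          rw [hW2] at h1 h3
          linarith [h1, hsum2, h3]
  have hsplitIcc : Finset.Icc 1 T = insert 1 (Finset.Icc 2 T) := by
    ext r
    simp only [Finset.mem_Icc, Finset.mem_insert]
    omega
  have hnotmem : (1:ℕ) ∉ Finset.Icc 2 T := by simp
  have hsplit1 : ∑ t ∈ Finset.Icc 1 T, f t (x t)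
      = f 1 (x 1) + ∑ k ∈ Finset.Icc 2 T, f k (x k) := by
    rw [hsplitIcc, Finset.sum_insert hnotmem]
  have hsplit2 : ∑ k ∈ Finset.Icc 1 T, f k (x (k + d k - 1 + 1))
      = f 1 (x (1 + d 1 - 1 + 1)) + ∑ k ∈ Finset.Icc 2 T, f k (x (k + d k - 1 + 1)) := by
    rw [hsplitIcc, Finset.sum_insert hnotmem]
  have hids : ∑ t ∈ Finset.Icc 1 T, f t (x t) - ∑ t ∈ Finset.Icc 1 T, f t xstar
      = (f 1 (x 1) - f 1 (x (1 + d 1 - 1 + 1)))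
        + (∑ k ∈ Finset.Icc 2 T, (f k (x k) - f k (x (k + d k - 1 + 1))))
        + ((∑ k ∈ Finset.Icc 1 T, f k (x (k + d k - 1 + 1)))
            - ∑ k ∈ Finset.Icc 1 T, f k xstar) := by
    rw [Finset.sum_sub_distrib, hsplit1, hsplit2]
    ring
  rw [hids]
  have hFTL' : (∑ k ∈ Finset.Icc 1 T, f k (x (k + d k - 1 + 1)))
      - ∑ k ∈ Finset.Icc 1 T, f k xstar ≤ Gstar^2/S * ((D:ℝ)/8 * W) := by
    linarith [hFTL, hepssum]
  have hlogT0 : 0 ≤ Real.log T := Real.log_nonneg (by exact_mod_cast hT)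
  have hD1R : (1:ℝ) ≤ (D:ℝ) := by exact_mod_cast hD1
  have hQ0 : 0 ≤ Gstar^2/S := by positivity
  have hcoef : Gstar^2/(2*S) + Gstar^2/S * ((D:ℝ) * W + (D:ℝ) * Real.log T)
      + Gstar^2/S * ((D:ℝ)/8 * W)
      ≤ 3 * (D:ℝ) * Gstar^2 * (1 + Real.log T) / S := by
    have hkey : Gstar^2/(2*S) + Gstar^2/S * ((D:ℝ) * W + (D:ℝ) * Real.log T)
        + Gstar^2/S * ((D:ℝ)/8 * W)
        = Gstar^2/S * (1/2 + (D:ℝ) * W + (D:ℝ) * Real.log T + (D:ℝ)/8 * W) := by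
      field_simp
      ring
    have hkey2 : 3 * (D:ℝ) * Gstar^2 * (1 + Real.log T) / S
        = Gstar^2/S * (3 * (D:ℝ) * (1 + Real.log T)) := by
      field_simp
    rw [hkey, hkey2]
    apply mul_le_mul_of_nonneg_left _ hQ0
    nlinarith [mul_le_mul_of_nonneg_left hWlog (show (0:ℝ) ≤ (D:ℝ) by linarith),
      mul_nonneg (show (0:ℝ) ≤ (D:ℝ) - 1 by linarith) hlogT0, hW0, hlogT0, hD1R]
  linarith [hk1term, hdriftsum, hFTL', hcoef]
end

section
/- Under the DMD-GC scheme with approximation error ρ_{t,i_k} = η³/(2σ), for every x* ∈ X the normal term satisfies Σ_{t=1}^T Σ_{k∈F_t} [ f_k(x_{t,i_k}) − f_k(x*) ] ≤ ηT(G⋆² + 8ξRG⋆ + 2ηG⋆)/(2σ) + B_ψ(x*; x₁)/η. -/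
open Finset

/-- If `φ` has derivative `D` at `0` and `φ s - φ 0 ≤ s * c` on `(0,1]`, then `D ≤ c`. -/
theorem dmd_slope_le {φ : ℝ → ℝ} {D c : ℝ} (hd : HasDerivAt φ D 0)
    (h : ∀ s : ℝ, s ∈ Set.Ioc (0:ℝ) 1 → φ s - φ 0 ≤ s * c) : D ≤ c := by
  have hT : Filter.Tendsto (slope φ 0) (nhdsWithin 0 (Set.Ioi (0:ℝ))) (nhds D) :=
    (hasDerivAt_iff_tendsto_slope.1 hd).mono_left
      (nhdsWithin_mono _ fun s hs => ne_of_gt hs)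
  refine le_of_tendsto hT ?_
  filter_upwards [Ioc_mem_nhdsGT (zero_lt_one)] with s hs
  have h1 := h s hs
  have hspos : (0:ℝ) < s := hs.1
  have hslope : slope φ 0 s = (φ s - φ 0) / s := by rw [slope_def_field, sub_zero]
  rw [hslope, div_le_iff₀ hspos]
  linarith

theorem dmd_hasDerivAt_line {E : Type*} [NormedAddCommGroup E] [NormedSpace ℝ E]
    (F : E → ℝ) (L : E →L[ℝ] ℝ) (y v : E) (hF : HasFDerivAt F L y) :
    HasDerivAt (fun s : ℝ => F (y + s • v)) (L v) 0 := by
  have hc : HasDerivAt (fun s : ℝ => y + s • v) v 0 := by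
    simpa using ((hasDerivAt_id (0:ℝ)).smul_const v).const_add y
  have hF' : HasFDerivAt F L ((fun s : ℝ => y + s • v) 0) := by simpa using hF
  exact hF'.comp_hasDerivAt 0 hc

theorem dmd_tele_filter (g : ℕ → ℝ) (s : Finset ℕ) :
    ∑ k ∈ s, (g ((s.filter (fun a => a < k)).card)
        - g (((s.filter (fun a => a < k)).card) + 1))
      = g 0 - g s.card := by
  induction s using Finset.strongInduction with
  | _ s ih =>
    rcases s.eq_empty_or_nonempty with rfl | hne
    · simp
    · have hmem := s.max'_mem hne
      set m := s.max' hne with hm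
      have hfm : s.filter (fun a => a < m) = s.erase m := by
        ext a
        simp only [Finset.mem_filter, Finset.mem_erase]
        constructor
        · rintro ⟨ha, hlt⟩; exact ⟨Nat.ne_of_lt hlt, ha⟩
        · rintro ⟨hne', ha⟩; exact ⟨ha, lt_of_le_of_ne (s.le_max' a ha) hne'⟩
      have hstep : ∀ k ∈ s.erase m, s.filter (fun a => a < k)
          = (s.erase m).filter (fun a => a < k) := by
        intro k hk
        have hkm : k ≠ m := (Finset.mem_erase.1 hk).1
        have hkle : k ≤ m := s.le_max' k (Finset.mem_erase.1 hk).2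
        ext a
        simp only [Finset.mem_filter, Finset.mem_erase]
        constructor
        · rintro ⟨ha, hlt⟩
          exact ⟨⟨Nat.ne_of_lt (lt_of_lt_of_le hlt hkle), ha⟩, hlt⟩
        · rintro ⟨⟨_, ha⟩, hlt⟩; exact ⟨ha, hlt⟩
      rw [← Finset.add_sum_erase _ _ hmem, hfm]
      have hrw : ∑ k ∈ s.erase m, (g ((s.filter (fun a => a < k)).card)
            - g (((s.filter (fun a => a < k)).card) + 1))
          = ∑ k ∈ s.erase m, (g (((s.erase m).filter (fun a => a < k)).card)
            - g ((((s.erase m).filter (fun a => a < k)).card) + 1)) :=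
        Finset.sum_congr rfl fun k hk => by rw [hstep k hk]
      rw [hrw, ih (s.erase m) (Finset.erase_ssubset hmem)]
      have hpos : 1 ≤ s.card := Finset.card_pos.2 hne
      have hcard : (s.erase m).card + 1 = s.card := by
        rw [Finset.card_erase_of_mem hmem]; omega
      rw [hcard]
      ring

theorem dmd_tele_Icc (H : ℕ → ℝ) (T : ℕ) :
    ∑ t ∈ Finset.Icc 1 T, (H t - H (t+1)) = H 1 - H (T+1) := by
  induction T with
  | zero => simp
  | succ n ihn =>
    rw [Finset.sum_Icc_succ_top (Nat.le_add_left 1 n), ihn]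
    ring

set_option maxHeartbeats 1000000 in
theorem dmd_step_core {E : Type*} [NormedAddCommGroup E] [NormedSpace ℝ E]
    (X : Set E) (hX : Convex ℝ X) (R : ℝ) (hR : ∀ w ∈ X, ‖w‖ ≤ R)
    (φf : E → ℝ) (hfd : Differentiable ℝ φf) (hfc : ConvexOn ℝ X φf)
    (ψ : E → ℝ) (σ ξ Gstar : ℝ) (hσ : 0 < σ) (hξ : 0 < ξ)
    (hψdiff : Differentiable ℝ ψ)
    (B : E → E → ℝ) (hB : ∀ a b, B a b = ψ a - ψ b - fderiv ℝ ψ b (a - b))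
    (hψsc : ∀ a ∈ X, ∀ b ∈ X, B a b ≥ σ / 2 * ‖a - b‖ ^ 2)
    (hψlip : ∀ a ∈ X, ∀ b ∈ X, ‖fderiv ℝ ψ a - fderiv ℝ ψ b‖ ≤ ξ * Gstar * ‖a - b‖)
    (η : ℝ) (hη : 0 < η)
    (z z' xstar : E) (hz : z ∈ X) (hz' : z' ∈ X) (hxs : xstar ∈ X)
    (hg : ∀ w ∈ X, ‖fderiv ℝ φf w‖ ≤ Gstar)
    (A' : E → ℝ)
    (hA' : ∀ w, A' w = fderiv ℝ φf z w + B w z / η)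
    (y : E) (hy : y ∈ X) (hmin : IsMinOn A' X y)
    (happ : A' z' ≤ A' y + η ^ 3 / (2 * σ)) :
    φf z - φf xstar ≤ (B xstar z - B xstar z') / η
      + η * (Gstar ^ 2 + 8 * ξ * R * Gstar + 2 * η * Gstar) / (2 * σ) := by
  set g : E →L[ℝ] ℝ := fderiv ℝ φf z with hgdef
  set Dz : E →L[ℝ] ℝ := fderiv ℝ ψ z with hDzdef
  set Dy : E →L[ℝ] ℝ := fderiv ℝ ψ y with hDydef
  set Dz' : E →L[ℝ] ℝ := fderiv ℝ ψ z' with hDz'def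
  have hgnorm : ‖g‖ ≤ Gstar := hg z hz
  have hGnn : 0 ≤ Gstar := le_trans (norm_nonneg _) hgnorm
  have hRnn : 0 ≤ R := le_trans (norm_nonneg _) (hR z hz)
  have hAfun : ∀ w, A' w = g w + (ψ w - ψ z - Dz (w - z)) / η := by
    intro w; rw [hA', hB]
  -- Step A : first-order optimality at y in direction xstar
  have hfo : g (y - xstar) ≤ (Dy (xstar - y) - Dz (xstar - y)) / η := by
    have h2 : HasFDerivAt (fun w => ψ w - ψ z - Dz (w - z)) (Dy - Dz) y := by
      have : HasFDerivAt (fun w => ψ w - ψ z - (Dz w - Dz z)) (Dy - Dz) y :=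
        ((hψdiff y).hasFDerivAt.sub_const (ψ z)).sub ((Dz.hasFDerivAt).sub_const (Dz z))
      simpa [map_sub] using this
    have h3 : HasFDerivAt (fun w => (ψ w - ψ z - Dz (w - z)) / η) (η⁻¹ • (Dy - Dz)) y := by
      exact (h2.const_smul (η⁻¹)).congr_of_eventuallyEq
        (Filter.Eventually.of_forall fun w => by simp [div_eq_inv_mul, smul_eq_mul])
    have hder : HasFDerivAt A' (g + η⁻¹ • (Dy - Dz)) y := by
      have h4 : HasFDerivAt (fun w => g w + (ψ w - ψ z - Dz (w - z)) / η)
          (g + η⁻¹ • (Dy - Dz)) y := (g.hasFDerivAt).add h3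
      have := funext hAfun
      rw [this]
      exact h4
    have hφ := dmd_hasDerivAt_line A' _ y (xstar - y) hder
    have hD : 0 ≤ (g + η⁻¹ • (Dy - Dz)) (xstar - y) := by
      have hneg := hφ.neg
      have hb := dmd_slope_le hneg (c := 0) ?_
      · linarith
      · intro s hs
        have hmemX : y + s • (xstar - y) ∈ X :=
          hX.add_smul_sub_mem hy hxs ⟨hs.1.le, hs.2⟩
        have hmin' : A' y ≤ A' (y + s • (xstar - y)) := isMinOn_iff.1 hmin _ hmemX
        have h0 : y + (0:ℝ) • (xstar - y) = y := by simp
        show -A' (y + s • (xstar - y)) - -A' (y + (0:ℝ) • (xstar - y)) ≤ s * 0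
        rw [h0]
        linarith
    have happly : (g + η⁻¹ • (Dy - Dz)) (xstar - y)
        = g (xstar - y) + η⁻¹ * (Dy (xstar - y) - Dz (xstar - y)) := by
      simp [ContinuousLinearMap.add_apply, ContinuousLinearMap.smul_apply,
        ContinuousLinearMap.sub_apply, smul_eq_mul]
    have hgsw : g (y - xstar) = - g (xstar - y) := by simp [map_sub]
    rw [hgsw, div_eq_inv_mul]
    rw [happly] at hD
    linarith
  -- Convexity gradient inequality
  have hcv : φf z - φf xstar ≤ g (z - xstar) := by
    have hder : HasDerivAt (fun s : ℝ => φf (z + s • (xstar - z))) (g (xstar - z)) 0 :=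
      dmd_hasDerivAt_line φf g z (xstar - z) (hfd z).hasFDerivAt
    have hb := dmd_slope_le hder (c := φf xstar - φf z) ?_
    · have : g (z - xstar) = - g (xstar - z) := by simp [map_sub]
      linarith
    · intro s hs
      have hpt : z + s • (xstar - z) = (1 - s) • z + s • xstar := by module
      have hcomb := hfc.2 hz hxs (by linarith [hs.2] : (0:ℝ) ≤ 1 - s) hs.1.le (by ring)
      rw [hpt]
      have h0 : z + (0:ℝ) • (xstar - z) = z := by simp
      simp only [h0] at *
      have : φf ((1-s) • z + s • xstar) ≤ (1-s) * φf z + s * φf xstar := by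
        simpa [smul_eq_mul] using hcomb
      nlinarith
  -- Step E : distance between z' and y
  have hE : ‖z' - y‖ ^ 2 ≤ 2 * η ^ 4 / σ ^ 2 := by
    set m := (1/2 : ℝ) • z' + (1/2 : ℝ) • y with hmdef
    have hmX : m ∈ X := hX hz' hy (by norm_num) (by norm_num) (by norm_num)
    have hminm : A' y ≤ A' m := isMinOn_iff.1 hmin m hmX
    set Dm : E →L[ℝ] ℝ := fderiv ℝ ψ m with hDmdef
    have b1 : B z' m ≥ σ/2 * ‖z' - m‖^2 := hψsc z' hz' m hmX
    have b2 : B y m ≥ σ/2 * ‖y - m‖^2 := hψsc y hy m hmX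
    have hzm : z' - m = (1/2 : ℝ) • (z' - y) := by rw [hmdef]; module
    have hym : y - m = (-(1/2) : ℝ) • (z' - y) := by rw [hmdef]; module
    have hnzm : ‖z' - m‖^2 = (1/4) * ‖z' - y‖^2 := by
      rw [hzm, norm_smul]; rw [mul_pow]; norm_num
    have hnym : ‖y - m‖^2 = (1/4) * ‖z' - y‖^2 := by
      rw [hym, norm_smul]; rw [mul_pow]; norm_num
    rw [hnzm] at b1
    rw [hnym] at b2
    have hadd0 : z' - m + (y - m) = 0 := by rw [hmdef]; module
    have hsum0 : Dm (z' - m) + Dm (y - m) = 0 := by rw [← map_add, hadd0, map_zero]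
    have hBzm : B z' m = ψ z' - ψ m - Dm (z' - m) := hB z' m
    have hBym : B y m = ψ y - ψ m - Dm (y - m) := hB y m
    have hψm : ψ m ≤ (ψ z' + ψ y)/2 - σ/8 * ‖z' - y‖^2 := by linarith
    have eAm : η * A' m = η * g m + (ψ m - ψ z - Dz (m - z)) := by
      rw [hAfun m]; field_simp; try ring
    have eAy : η * A' y = η * g y + (ψ y - ψ z - Dz (y - z)) := by
      rw [hAfun y]; field_simp; try ring
    have eAz' : η * A' z' = η * g z' + (ψ z' - ψ z - Dz (z' - z)) := by
      rw [hAfun z']; field_simp; try ring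
    have hgm : g m = (g z' + g y)/2 := by
      rw [hmdef]; simp only [map_add, map_smul, smul_eq_mul]; ring
    have hDzm : Dz (m - z) = (Dz (z' - z) + Dz (y - z))/2 := by
      have h1 : m - z = (1/2 : ℝ) • (z' - z) + (1/2 : ℝ) • (y - z) := by
        rw [hmdef]; module
      rw [h1]; simp only [map_add, map_smul, smul_eq_mul]; ring
    have hminη : η * A' y ≤ η * A' m := mul_le_mul_of_nonneg_left hminm hη.le
    have happη : η * A' z' ≤ η * A' y + η * (η^3/(2*σ)) := by
      have h := mul_le_mul_of_nonneg_left happ hη.le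
      rw [mul_add] at h
      linarith
    have hη4 : η * (η^3/(2*σ)) = η^4/(2*σ) := by ring
    have h5 : σ/8 * ‖z' - y‖^2 ≤ η^4/(4*σ) := by
      have hAmform : η * A' m = (η * A' z' + η * A' y)/2 + (ψ m - (ψ z' + ψ y)/2) := by
        rw [eAm, eAy, eAz', hgm, hDzm]; ring
      have h4σ : η^4/(4*σ) = (η^4/(2*σ))/2 := by ring
      linarith
    have h6 : 8*σ*(η^4/(4*σ)) = 2*η^4 := by field_simp; ring
    have h7 := mul_le_mul_of_nonneg_left h5 (show (0:ℝ) ≤ 8*σ by positivity)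
    have hq : σ^2 * ‖z' - y‖^2 ≤ 2*η^4 := by linarith [h7, h6]
    rw [le_div_iff₀ (show (0:ℝ) < σ^2 by positivity)]
    linarith [hq]
  have hr' : ‖z' - y‖ ≤ 2 * η^2 / σ := by
    have h1 : ‖z' - y‖ = Real.sqrt (‖z' - y‖^2) := (Real.sqrt_sq (norm_nonneg _)).symm
    rw [h1]
    have h2 : ‖z' - y‖^2 ≤ (2*η^2/σ)^2 := by
      have e1 : (2*η^2/σ)^2 = 4*η^4/σ^2 := by rw [div_pow]; ring_nf
      have e2 : (0:ℝ) ≤ η^4/σ^2 := by positivity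
      calc ‖z' - y‖^2 ≤ 2*η^4/σ^2 := hE
        _ ≤ 4*η^4/σ^2 := by
            have hs2 : (0:ℝ) < σ^2 := by positivity
            rw [div_le_div_iff_of_pos_right hs2]
            have h4 : (0:ℝ) ≤ η^4 := by positivity
            linarith
        _ = (2*η^2/σ)^2 := e1.symm
    calc Real.sqrt (‖z' - y‖^2) ≤ Real.sqrt ((2*η^2/σ)^2) := Real.sqrt_le_sqrt h2
      _ = 2*η^2/σ := Real.sqrt_sq (by positivity)
  -- Step 9 : comparison of Bregman terms at z' and ystar
  have h9 : B xstar z' ≤ B xstar y + ξ*Gstar*‖z' - y‖ * (2*R) := by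
    have hBzy : (0:ℝ) ≤ B z' y := le_trans (by positivity) (hψsc z' hz' y hy)
    have e1 : B z' y = ψ z' - ψ y - Dy (z' - y) := hB z' y
    have e2 : B xstar y = ψ xstar - ψ y - Dy (xstar - y) := hB xstar y
    have e3 : B xstar z' = ψ xstar - ψ z' - Dz' (xstar - z') := hB xstar z'
    have habs : |(Dz' - Dy) (xstar - z')| ≤ (ξ*Gstar*‖z' - y‖) * (2*R) := by
      have h1 := (Dz' - Dy).le_opNorm (xstar - z')
      rw [Real.norm_eq_abs] at h1
      have h2 : ‖Dz' - Dy‖ * ‖xstar - z'‖ ≤ (ξ*Gstar*‖z' - y‖) * (2*R) := by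
        apply mul_le_mul (hψlip z' hz' y hy) ?_ (norm_nonneg _) (by positivity)
        calc ‖xstar - z'‖ ≤ ‖xstar‖ + ‖z'‖ := norm_sub_le _ _
          _ ≤ 2*R := by linarith [hR xstar hxs, hR z' hz']
      linarith
    have hlin : Dy (z' - y) - Dy (xstar - y) + Dz' (xstar - z') = (Dz' - Dy) (xstar - z') := by
      simp only [map_sub, ContinuousLinearMap.sub_apply]; ring
    have hub := (abs_le.1 habs).1
    linarith
  -- final assembly
  rw [← sub_le_iff_le_add, le_div_iff₀ hη]
  have m0 : η * (φf z - φf xstar) ≤ η * (g (z - xstar)) := mul_le_mul_of_nonneg_left hcv hη.le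
  have msplitη : η * g (z - xstar) = η * g (z - y) + η * g (y - xstar) := by
    simp only [map_sub]; ring
  have m2 : g (z - y) ≤ Gstar * ‖z - y‖ := by
    have h1 := g.le_opNorm (z - y)
    rw [Real.norm_eq_abs] at h1
    have h2 := le_abs_self (g (z - y))
    have h3 : ‖g‖ * ‖z - y‖ ≤ Gstar * ‖z - y‖ :=
      mul_le_mul_of_nonneg_right hgnorm (norm_nonneg _)
    linarith
  have m2η : η * g (z - y) ≤ η * (Gstar * ‖z - y‖) := mul_le_mul_of_nonneg_left m2 hη.le
  have m3 : η * g (y - xstar) ≤ B xstar z - B xstar y - B y z := by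
    have h1 := mul_le_mul_of_nonneg_left hfo hη.le
    have h2 : η * ((Dy (xstar - y) - Dz (xstar - y))/η) = Dy (xstar - y) - Dz (xstar - y) := by
      field_simp
    have htp : Dy (xstar - y) - Dz (xstar - y) = B xstar z - B xstar y - B y z := by
      simp only [hB, map_sub]; ring
    linarith
  have m4 : σ/2 * ‖z - y‖^2 ≤ B y z := by
    have h1 := hψsc y hy z hz
    rwa [norm_sub_rev y z] at h1
  have hσr' : σ * ‖z' - y‖ ≤ 2*η^2 := by
    have h1 := mul_le_mul_of_nonneg_left hr' hσ.le
    have h2 : σ * (2*η^2/σ) = 2*η^2 := by field_simp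
    linarith
  have mfinal : η * (Gstar * ‖z - y‖) - σ/2 * ‖z - y‖^2 + ξ*Gstar*‖z' - y‖*(2*R)
      ≤ η * (η * (Gstar ^ 2 + 8 * ξ * R * Gstar + 2 * η * Gstar) / (2 * σ)) := by
    have hpos : (0:ℝ) < 2*σ := by positivity
    rw [← mul_le_mul_iff_right₀ hpos]
    have hRHS : 2*σ*(η * (η * (Gstar ^ 2 + 8 * ξ * R * Gstar + 2 * η * Gstar) / (2 * σ)))
        = η^2*(Gstar^2 + 8*ξ*R*Gstar + 2*η*Gstar) := by field_simp
    rw [hRHS]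
    nlinarith [sq_nonneg (σ*‖z - y‖ - η*Gstar),
      mul_le_mul_of_nonneg_left hσr' (show (0:ℝ) ≤ 4*R*ξ*Gstar by positivity),
      mul_nonneg (mul_nonneg hη.le hη.le) (mul_nonneg hη.le hGnn)]
  linarith [m0, msplitη, m2η, m3, m4, h9, mfinal]

/-- DMD-GC normal term bound (Lemma 6). -/
theorem dmd_gc_normal_term
    {E : Type*} [NormedAddCommGroup E] [NormedSpace ℝ E]
    (X : Set E) (hXne : X.Nonempty) (hX : Convex ℝ X)
    (R : ℝ) (hR : ∀ z ∈ X, ‖z‖ ≤ R)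
    (T : ℕ) (hT : 1 ≤ T) (d : ℕ → ℕ)
    (hd : ∀ t ∈ Finset.Icc 1 T, 1 ≤ d t ∧ t + d t - 1 ≤ T)
    (F : ℕ → Finset ℕ)
    (hF : ∀ t, F t = (Finset.Icc 1 T).filter (fun k => k + d k - 1 = t))
    (f : ℕ → E → ℝ) (Gstar : ℝ)
    (hfdiff : ∀ t ∈ Finset.Icc 1 T, Differentiable ℝ (f t))
    (hfconv : ∀ t ∈ Finset.Icc 1 T, ConvexOn ℝ X (f t))
    (hG : ∀ t ∈ Finset.Icc 1 T, ∀ z ∈ X, ‖fderiv ℝ (f t) z‖ ≤ Gstar)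
    (ψ : E → ℝ) (σ ξ : ℝ) (hσ : 0 < σ) (hξ : 0 < ξ)
    (hψdiff : Differentiable ℝ ψ)
    (B : E → E → ℝ)
    (hB : ∀ a b, B a b = ψ a - ψ b - fderiv ℝ ψ b (a - b))
    (hψsc : ∀ a ∈ X, ∀ b ∈ X, B a b ≥ σ / 2 * ‖a - b‖ ^ 2)
    (hψlip : ∀ a ∈ X, ∀ b ∈ X,
      ‖fderiv ℝ ψ a - fderiv ℝ ψ b‖ ≤ ξ * Gstar * ‖a - b‖)
    (η : ℝ) (hη : 0 < η)
    (x : ℕ → E) (xx : ℕ → ℕ → E) (hx1 : x 1 ∈ X)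
    (hxxmem : ∀ t ∈ Finset.Icc 1 T, ∀ i ≤ (F t).card, xx t i ∈ X)
    (hxx0 : ∀ t ∈ Finset.Icc 1 T, xx t 0 = x t)
    (hxnext : ∀ t ∈ Finset.Icc 1 T, x (t + 1) = xx t (F t).card)
    (A : ℕ → ℕ → E → ℝ)
    (hA : ∀ t k z, A t k z =
      fderiv ℝ (f k) (xx t ((F t).filter (fun s => s < k)).card) z
        + B z (xx t ((F t).filter (fun s => s < k)).card) / η)
    (hopt : ∀ t ∈ Finset.Icc 1 T, ∀ k ∈ F t, ∃ ystar ∈ X,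
      IsMinOn (A t k) X ystar ∧
        A t k (xx t (((F t).filter (fun s => s < k)).card + 1))
          ≤ A t k ystar + η ^ 3 / (2 * σ))
    :
    ∀ xstar ∈ X,
      ∑ t ∈ Finset.Icc 1 T, ∑ k ∈ F t,
          (f k (xx t ((F t).filter (fun s => s < k)).card) - f k xstar)
        ≤ η * (T : ℝ) * (Gstar ^ 2 + 8 * ξ * R * Gstar + 2 * η * Gstar) / (2 * σ)
            + B xstar (x 1) / η := by
  intro xstar hxstar
  set C : ℝ := η * (Gstar ^ 2 + 8 * ξ * R * Gstar + 2 * η * Gstar) / (2 * σ) with hCdef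
  -- the per-step bound
  have key : ∀ t ∈ Finset.Icc 1 T, ∀ k ∈ F t,
      f k (xx t ((F t).filter (fun s => s < k)).card) - f k xstar ≤
        (B xstar (xx t ((F t).filter (fun s => s < k)).card) -
          B xstar (xx t (((F t).filter (fun s => s < k)).card + 1))) / η + C := by
    intro t ht k hk
    have hkIcc : k ∈ Finset.Icc 1 T := by
      have hk' := hk
      rw [hF t] at hk'
      exact (Finset.mem_filter.1 hk').1
    have hilt : ((F t).filter (fun s => s < k)).card < (F t).card := by
      have hsub : (F t).filter (fun s => s < k) ⊆ (F t).erase k := by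
        intro a ha
        rw [Finset.mem_filter] at ha
        exact Finset.mem_erase.2 ⟨Nat.ne_of_lt ha.2, ha.1⟩
      exact lt_of_le_of_lt (Finset.card_le_card hsub) (Finset.card_erase_lt_of_mem hk)
    have hzmem : xx t ((F t).filter (fun s => s < k)).card ∈ X :=
      hxxmem t ht _ hilt.le
    have hz'mem : xx t (((F t).filter (fun s => s < k)).card + 1) ∈ X :=
      hxxmem t ht _ hilt
    obtain ⟨y, hy, hmin, happ⟩ := hopt t ht k hk
    exact dmd_step_core X hX R hR (f k) (hfdiff k hkIcc) (hfconv k hkIcc)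
      ψ σ ξ Gstar hσ hξ hψdiff B hB hψsc hψlip η hη
      _ _ xstar hzmem hz'mem hxstar (hG k hkIcc) (A t k) (hA t k) y hy hmin happ
  -- cardinality of the fibers
  have hcardsum : ∑ t ∈ Finset.Icc 1 T, ((F t).card) = T := by
    have hmap : ∀ k ∈ Finset.Icc 1 T, k + d k - 1 ∈ Finset.Icc 1 T := by
      intro k hk
      have hk' := Finset.mem_Icc.1 hk
      have hdk := hd k hk
      rw [Finset.mem_Icc]
      omega
    have hcc := Finset.card_eq_sum_card_fiberwise hmap
    have hTc : (Finset.Icc 1 T).card = T := by rw [Nat.card_Icc]; omega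
    calc ∑ t ∈ Finset.Icc 1 T, ((F t).card)
        = ∑ t ∈ Finset.Icc 1 T, ((Finset.Icc 1 T).filter (fun k => k + d k - 1 = t)).card :=
          Finset.sum_congr rfl fun t _ => by rw [hF t]
      _ = (Finset.Icc 1 T).card := hcc.symm
      _ = T := hTc
  -- sum the per-step bounds
  have hsum1 : ∑ t ∈ Finset.Icc 1 T, ∑ k ∈ F t,
      (f k (xx t ((F t).filter (fun s => s < k)).card) - f k xstar)
      ≤ ∑ t ∈ Finset.Icc 1 T,
        ((B xstar (x t) - B xstar (x (t+1))) / η + ((F t).card : ℝ) * C) := by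
    have := Finset.sum_le_sum (fun t ht =>
      Finset.sum_le_sum (fun k hk => key t ht k hk))
    refine le_trans this (le_of_eq (Finset.sum_congr rfl fun t ht => ?_))
    rw [Finset.sum_add_distrib, ← Finset.sum_div]
    have htele := dmd_tele_filter (fun i => B xstar (xx t i)) (F t)
    rw [htele, Finset.sum_const, nsmul_eq_mul, hxx0 t ht, hxnext t ht]
  -- telescope over t
  have hsum2 : ∑ t ∈ Finset.Icc 1 T,
      ((B xstar (x t) - B xstar (x (t+1))) / η + ((F t).card : ℝ) * C)
      = (B xstar (x 1) - B xstar (x (T+1))) / η + (T : ℝ) * C := by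
    rw [Finset.sum_add_distrib, ← Finset.sum_div,
      dmd_tele_Icc (fun t => B xstar (x t)) T, ← Finset.sum_mul]
    have : ∑ t ∈ Finset.Icc 1 T, (((F t).card : ℝ)) = (T : ℝ) := by
      rw [← Nat.cast_sum, hcardsum]
    rw [this]
  -- final bound
  have hxT1 : x (T+1) ∈ X := by
    have hTm : T ∈ Finset.Icc 1 T := Finset.mem_Icc.2 ⟨hT, le_refl T⟩
    rw [hxnext T hTm]
    exact hxxmem T hTm _ (le_refl _)
  have hBnn : 0 ≤ B xstar (x (T+1)) :=
    le_trans (by positivity) (hψsc xstar hxstar _ hxT1)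
  have hBη : 0 ≤ B xstar (x (T+1)) / η := div_nonneg hBnn hη.le
  have hTC : (T : ℝ) * C = η * (T : ℝ) * (Gstar ^ 2 + 8 * ξ * R * Gstar + 2 * η * Gstar) / (2 * σ) := by
    rw [hCdef]; ring
  calc ∑ t ∈ Finset.Icc 1 T, ∑ k ∈ F t,
      (f k (xx t ((F t).filter (fun s => s < k)).card) - f k xstar)
      ≤ (B xstar (x 1) - B xstar (x (T+1))) / η + (T : ℝ) * C := by
        rw [← hsum2]; exact hsum1
    _ ≤ B xstar (x 1) / η + (T : ℝ) * C := by
        rw [sub_div]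
        linarith
    _ = η * (T : ℝ) * (Gstar ^ 2 + 8 * ξ * R * Gstar + 2 * η * Gstar) / (2 * σ)
          + B xstar (x 1) / η := by rw [hTC]; ring
end

section
/- Under the DMD-GC scheme with approximation error ρ_{t,i_k} = η³/(2σ), for each t ∈ {1,…,T} and each k ∈ F_t, the consecutive intermediate iterates satisfy ‖x_{t,i_k+1} − x_{t,i_k}‖ ≤ (ηG⋆ + 2η²)/σ + η²ξG⋆/σ². -/
open Finset

/-- DMD-GC stability of consecutive intermediate iterates (Lemma 7). -/
theorem dmd_gc_iterate_stability
    {E : Type*} [NormedAddCommGroup E] [NormedSpace ℝ E]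
    (X : Set E) (hXne : X.Nonempty) (hX : Convex ℝ X)
    (R : ℝ) (hR : ∀ z ∈ X, ‖z‖ ≤ R)
    (T : ℕ) (hT : 1 ≤ T) (d : ℕ → ℕ)
    (hd : ∀ t ∈ Finset.Icc 1 T, 1 ≤ d t ∧ t + d t - 1 ≤ T)
    (F : ℕ → Finset ℕ)
    (hF : ∀ t, F t = (Finset.Icc 1 T).filter (fun k => k + d k - 1 = t))
    (f : ℕ → E → ℝ) (Gstar : ℝ)
    (hfdiff : ∀ t ∈ Finset.Icc 1 T, Differentiable ℝ (f t))
    (hfconv : ∀ t ∈ Finset.Icc 1 T, ConvexOn ℝ X (f t))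
    (hG : ∀ t ∈ Finset.Icc 1 T, ∀ z ∈ X, ‖fderiv ℝ (f t) z‖ ≤ Gstar)
    (ψ : E → ℝ) (σ ξ : ℝ) (hσ : 0 < σ) (hξ : 0 < ξ)
    (hψdiff : Differentiable ℝ ψ)
    (B : E → E → ℝ)
    (hB : ∀ a b, B a b = ψ a - ψ b - fderiv ℝ ψ b (a - b))
    (hψsc : ∀ a ∈ X, ∀ b ∈ X, B a b ≥ σ / 2 * ‖a - b‖ ^ 2)
    (hψlip : ∀ a ∈ X, ∀ b ∈ X,
      ‖fderiv ℝ ψ a - fderiv ℝ ψ b‖ ≤ ξ * Gstar * ‖a - b‖)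
    (η : ℝ) (hη : 0 < η)
    (x : ℕ → E) (xx : ℕ → ℕ → E) (hx1 : x 1 ∈ X)
    (hxxmem : ∀ t ∈ Finset.Icc 1 T, ∀ i ≤ (F t).card, xx t i ∈ X)
    (hxx0 : ∀ t ∈ Finset.Icc 1 T, xx t 0 = x t)
    (hxnext : ∀ t ∈ Finset.Icc 1 T, x (t + 1) = xx t (F t).card)
    (A : ℕ → ℕ → E → ℝ)
    (hA : ∀ t k z, A t k z =
      fderiv ℝ (f k) (xx t ((F t).filter (fun s => s < k)).card) z
        + B z (xx t ((F t).filter (fun s => s < k)).card) / η)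
    (hopt : ∀ t ∈ Finset.Icc 1 T, ∀ k ∈ F t, ∃ ystar ∈ X,
      IsMinOn (A t k) X ystar ∧
        A t k (xx t (((F t).filter (fun s => s < k)).card + 1))
          ≤ A t k ystar + η ^ 3 / (2 * σ))
    :
    ∀ t ∈ Finset.Icc 1 T, ∀ k ∈ F t,
      ‖xx t (((F t).filter (fun s => s < k)).card + 1)
          - xx t ((F t).filter (fun s => s < k)).card‖
        ≤ (η * Gstar + 2 * η ^ 2) / σ + η ^ 2 * ξ * Gstar / σ ^ 2 := by
  intro t ht k hk
  have hk' : k ∈ Finset.Icc 1 T := by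
    rw [hF] at hk; exact (Finset.mem_filter.1 hk).1
  set i := ((F t).filter (fun s => s < k)).card with hi
  have hic : i < (F t).card := by
    refine Finset.card_lt_card ?_
    exact Finset.filter_ssubset.2 ⟨k, hk, lt_irrefl k⟩
  set y := xx t i with hy
  set z := xx t (i + 1) with hz
  have hyX : y ∈ X := hxxmem t ht i hic.le
  have hzX : z ∈ X := hxxmem t ht (i + 1) hic
  obtain ⟨w, hwX, hmin, happ⟩ := hopt t ht k hk
  have hη' : (η : ℝ) ≠ 0 := ne_of_gt hη
  have hσ' : (σ : ℝ) ≠ 0 := ne_of_gt hσ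
  set c : E →L[ℝ] ℝ := fderiv ℝ (f k) y with hc
  set Dy : E →L[ℝ] ℝ := fderiv ℝ ψ y with hDy
  set Dw : E →L[ℝ] ℝ := fderiv ℝ ψ w with hDw
  -- rewrite A in a convenient form
  have hAeq : A t k = fun v => c v + η⁻¹ * (ψ v - ψ y - Dy (v - y)) := by
    funext v
    rw [hA, hB, ← hi, ← hy]
    ring
  -- derivative of A t k at w
  have hAderiv : HasFDerivAt (A t k) (c + η⁻¹ • (Dw - Dy)) w := by
    rw [hAeq]
    have h3 : HasFDerivAt (fun v : E => Dy (v - y)) Dy w := by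
      simpa using (Dy.hasFDerivAt (x := w)).sub_const (Dy y)
    have := (((hψdiff w).hasFDerivAt.sub_const (ψ y)).sub h3).const_smul (η⁻¹ : ℝ)
    have h4 := c.hasFDerivAt (x := w)
    exact h4.add this
  -- first-order optimality
  have key : ∀ v ∈ X, 0 ≤ c (v - w) + η⁻¹ * ((Dw - Dy) (v - w)) := by
    intro v hv
    have hcone : v - w ∈ posTangentConeAt X w :=
      sub_mem_posTangentConeAt_of_segment_subset (hX.segment_subset hwX hv)
    have := hmin.localize.hasFDerivWithinAt_nonneg hAderiv.hasFDerivWithinAt hcone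
    simpa [smul_eq_mul] using this
  -- Step 1 : ‖z - w‖ ≤ η^2/σ
  have happ' : c z + η⁻¹ * (ψ z - ψ y - Dy (z - y))
      ≤ c w + η⁻¹ * (ψ w - ψ y - Dy (w - y)) + η ^ 3 / (2 * σ) := by
    have := happ
    rwa [hAeq] at this
  have hBzw : ψ z - ψ w - Dw (z - w) ≤ η ^ 4 / (2 * σ) := by
    have hz' := key z hzX
    simp only [map_sub, ContinuousLinearMap.sub_apply] at hz' happ' ⊢
    have hmul : ∀ a : ℝ, η * (η⁻¹ * a) = a := fun a => by field_simp
    have hPQ : η⁻¹ * (ψ z - ψ w - (Dy z - Dy w)) ≤ c w - c z + η ^ 3 / (2 * σ) := by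
      have expand : η⁻¹ * (ψ z - ψ w - (Dy z - Dy w))
          = η⁻¹ * (ψ z - ψ y - (Dy z - Dy y)) - η⁻¹ * (ψ w - ψ y - (Dy w - Dy y)) := by
        ring
      rw [expand]; linarith
    have happ2 : ψ z - ψ w - (Dy z - Dy w) ≤ η * (c w - c z + η ^ 3 / (2 * σ)) := by
      have h := mul_le_mul_of_nonneg_left hPQ hη.le
      rwa [hmul] at h
    have h7 : c w - c z ≤ η⁻¹ * ((Dw z - Dw w) - (Dy z - Dy w)) := by linarith
    have hz2 : η * (c w - c z) ≤ (Dw z - Dw w) - (Dy z - Dy w) := by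
      have h := mul_le_mul_of_nonneg_left h7 hη.le
      rwa [hmul] at h
    have e : η * (c w - c z + η ^ 3 / (2 * σ)) = η * (c w - c z) + η ^ 4 / (2 * σ) := by
      ring
    rw [e] at happ2
    linarith
  have hzwsq : σ / 2 * ‖z - w‖ ^ 2 ≤ η ^ 4 / (2 * σ) := by
    have := hψsc z hzX w hwX
    rw [hB] at this
    linarith
  have hzw : ‖z - w‖ ≤ η ^ 2 / σ := by
    have h0 : σ ^ 2 * ‖z - w‖ ^ 2 ≤ η ^ 4 := by
      rw [le_div_iff₀ (by positivity : (0:ℝ) < 2 * σ)] at hzwsq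
      have e : σ / 2 * ‖z - w‖ ^ 2 * (2 * σ) = σ ^ 2 * ‖z - w‖ ^ 2 := by ring
      linarith
    have h1 : ‖z - w‖ ^ 2 ≤ (η ^ 2 / σ) ^ 2 := by
      rw [div_pow, le_div_iff₀ (by positivity : (0:ℝ) < σ ^ 2)]
      have e1 : ‖z - w‖ ^ 2 * σ ^ 2 = σ ^ 2 * ‖z - w‖ ^ 2 := by ring
      have e2 : (η ^ 2) ^ 2 = η ^ 4 := by ring
      linarith
    have h2 : (0 : ℝ) ≤ η ^ 2 / σ := by positivity
    exact (pow_le_pow_iff_left₀ (norm_nonneg _) h2 two_ne_zero).1 h1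
  -- Step 2 : ‖w - y‖ ≤ η * Gstar / σ
  have hGy : c (y - w) ≤ Gstar * ‖w - y‖ := by
    calc c (y - w) ≤ ‖c (y - w)‖ := le_abs_self _
      _ ≤ ‖c‖ * ‖y - w‖ := c.le_opNorm _
      _ ≤ Gstar * ‖y - w‖ :=
        mul_le_mul_of_nonneg_right (hG k hk' y hyX) (norm_nonneg _)
      _ = Gstar * ‖w - y‖ := by rw [norm_sub_rev]
  have hsum : σ * ‖w - y‖ ^ 2 ≤ (Dw - Dy) (w - y) := by
    have h1 := hψsc w hwX y hyX
    have h2 := hψsc y hyX w hwX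
    rw [hB] at h1 h2
    have hn : ‖y - w‖ = ‖w - y‖ := norm_sub_rev _ _
    simp only [ContinuousLinearMap.sub_apply]
    have hDwn : Dw (y - w) = -Dw (w - y) := by
      rw [show y - w = -(w - y) by abel, map_neg]
    rw [hn] at h2
    rw [hDwn] at h2
    linarith
  have hGpos : 0 ≤ Gstar := le_trans (norm_nonneg _) (hG k hk' y hyX)
  have hwy : ‖w - y‖ ≤ η * Gstar / σ := by
    have hy' := key y hyX
    have hmul : ∀ a : ℝ, η * (η⁻¹ * a) = a := fun a => by field_simp
    have hDyw : (Dw - Dy) (y - w) = -((Dw - Dy) (w - y)) := by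
      rw [show y - w = -(w - y) by abel, map_neg]
    rw [hDyw] at hy'
    -- hy' : 0 ≤ c (y - w) + η⁻¹ * (-((Dw - Dy) (w - y)))
    have h7 : η⁻¹ * ((Dw - Dy) (w - y)) ≤ c (y - w) := by linarith
    have h8 : (Dw - Dy) (w - y) ≤ η * c (y - w) := by
      have h := mul_le_mul_of_nonneg_left h7 hη.le
      rwa [hmul] at h
    have h9 : σ * ‖w - y‖ ^ 2 ≤ η * (Gstar * ‖w - y‖) := by
      have := mul_le_mul_of_nonneg_left hGy hη.le
      linarith
    rw [le_div_iff₀ hσ]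
    rcases (norm_nonneg (w - y)).eq_or_lt with h | h
    · rw [← h]
      simpa using mul_nonneg hη.le hGpos
    · have h10 : (‖w - y‖ * σ) * ‖w - y‖ ≤ (η * Gstar) * ‖w - y‖ := by
        have e1 : (‖w - y‖ * σ) * ‖w - y‖ = σ * ‖w - y‖ ^ 2 := by ring
        have e2 : (η * Gstar) * ‖w - y‖ = η * (Gstar * ‖w - y‖) := by ring
        rw [e1, e2]
        linarith
      exact le_of_mul_le_mul_right h10 h
  -- conclusion
  have htri : ‖z - y‖ ≤ ‖z - w‖ + ‖w - y‖ := by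
    simpa using norm_sub_le_norm_sub_add_norm_sub z w y
  have p1 : (0:ℝ) ≤ η ^ 2 / σ := by positivity
  have p2 : (0:ℝ) ≤ η ^ 2 * ξ * Gstar / σ ^ 2 :=
    div_nonneg (mul_nonneg (mul_nonneg (sq_nonneg η) hξ.le) hGpos) (sq_nonneg σ)
  have e : (η * Gstar + 2 * η ^ 2) / σ = η * Gstar / σ + η ^ 2 / σ + η ^ 2 / σ := by
    ring
  linarith
end

section
/- (Theorem 3) Under the DMD-GC scheme with approximation error ρ_{t,i_k} = η³/(2σ), for every x* ∈ X the regret satisfies Reg_T := Σ_{t=1}^T f_t(x_t) − Σ_{t=1}^T f_t(x*) ≤ η(G⋆²T + 8ξRG⋆T + 2ηG⋆T + 4G⋆²D_T + 8ηG⋆D_T)/(2σ) + 2η²ξG⋆²D_T/σ² + B_ψ(x*; x₁)/η, where D_T := Σ_{t=1}^T d_t. -/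
open Finset

/-- Directional derivative upper bound from slope bounds on a segment. -/
lemma dir_le {E : Type*} [NormedAddCommGroup E] [NormedSpace ℝ E]
    {φ : E → ℝ} {D : E →L[ℝ] ℝ} {a : E} (hd : HasFDerivAt φ D a) (v : E) (c : ℝ)
    (h : ∀ θ : ℝ, θ ∈ Set.Ioc (0:ℝ) 1 → φ (a + θ • v) - φ a ≤ θ * c) :
    D v ≤ c := by
  have hg : HasDerivAt (fun θ : ℝ => φ (a + θ • v)) (D v) 0 := by
    have h2 : HasDerivAt (fun θ : ℝ => a + θ • v) v 0 := by
      simpa using ((hasDerivAt_id (0:ℝ)).smul_const v).const_add a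
    have h1 : HasFDerivAt φ D (a + (0:ℝ) • v) := by simpa using hd
    exact h1.comp_hasDerivAt 0 h2
  have hslope : Filter.Tendsto (fun θ : ℝ => (φ (a + θ • v) - φ a) / θ)
      (nhdsWithin 0 (Set.Ioi 0)) (nhds (D v)) := by
    have h0 := hasDerivAt_iff_tendsto_slope.mp hg
    have hmono : nhdsWithin (0:ℝ) (Set.Ioi 0) ≤ nhdsWithin (0:ℝ) {(0:ℝ)}ᶜ := by
      apply nhdsWithin_mono
      intro x hx
      exact ne_of_gt hx
    have heq : slope (fun θ : ℝ => φ (a + θ • v)) 0 =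
        fun θ : ℝ => (φ (a + θ • v) - φ a) / θ := by
      funext θ
      simp [slope_def_field]
    rw [heq] at h0
    exact h0.mono_left hmono
  refine le_of_tendsto hslope ?_
  filter_upwards [Ioc_mem_nhdsGT_of_mem (Set.mem_Ico.mpr ⟨le_refl (0:ℝ), zero_lt_one⟩)] with θ hθ
  rw [div_le_iff₀ hθ.1]
  calc φ (a + θ • v) - φ a ≤ θ * c := h θ hθ
    _ = c * θ := mul_comm _ _

/-- Rank surjectivity for finsets of naturals. -/
lemma rank_surj (s : Finset ℕ) : ∀ i < s.card, ∃ k ∈ s, (s.filter (fun x => x < k)).card = i := by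
  induction s using Finset.induction_on_max with
  | empty => simp
  | insert a s ha ih =>
    intro i hi
    have hanotmem : a ∉ s := fun h => lt_irrefl a (ha a h)
    rw [Finset.card_insert_of_notMem hanotmem] at hi
    rcases Nat.lt_or_ge i s.card with h | h
    · obtain ⟨k, hk, hr⟩ := ih i h
      refine ⟨k, Finset.mem_insert_of_mem hk, ?_⟩
      rw [Finset.filter_insert, if_neg (by exact fun hak => absurd (ha k hk) (not_lt.mpr hak.le))]
      exact hr
    · have hieq : i = s.card := le_antisymm (by omega) h
      refine ⟨a, Finset.mem_insert_self a s, ?_⟩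
      have : (insert a s).filter (fun x => x < a) = s := by
        rw [Finset.filter_insert, if_neg (lt_irrefl a)]
        apply Finset.filter_true_of_mem
        intro x hx; exact ha x hx
      rw [this, hieq]

/-- Summing a function of ranks over a finset equals summing over the range of the card. -/
lemma sum_rank (s : Finset ℕ) (φ : ℕ → ℝ) :
    ∑ k ∈ s, φ ((s.filter (fun x => x < k)).card) = ∑ i ∈ Finset.range s.card, φ i := by
  induction s using Finset.induction_on_max with
  | empty => simp
  | insert a s ha ih =>
    have hanotmem : a ∉ s := fun h => lt_irrefl a (ha a h)
    rw [Finset.sum_insert hanotmem, Finset.card_insert_of_notMem hanotmem,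
      Finset.sum_range_succ]
    have h1 : (insert a s).filter (fun x => x < a) = s := by
      rw [Finset.filter_insert, if_neg (lt_irrefl a)]
      apply Finset.filter_true_of_mem
      intro x hx; exact ha x hx
    have h2 : ∀ k ∈ s, ((insert a s).filter (fun x => x < k)).card
        = (s.filter (fun x => x < k)).card := by
      intro k hk
      rw [Finset.filter_insert, if_neg (by exact fun hak => absurd (ha k hk) (not_lt.mpr hak.le))]
    rw [h1, Finset.sum_congr rfl (fun k hk => by rw [h2 k hk]), ih]
    ring
/-- Core one-step analysis of an approximate mirror-descent step. -/
lemma core_step {E : Type*} [NormedAddCommGroup E] [NormedSpace ℝ E]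
    (X : Set E) (hX : Convex ℝ X)
    (ψ : E → ℝ) (hψdiff : Differentiable ℝ ψ)
    (B : E → E → ℝ) (hB : ∀ a b, B a b = ψ a - ψ b - fderiv ℝ ψ b (a - b))
    (σ ξ R Gstar η : ℝ) (hσ : 0 < σ) (hη : 0 < η) (hG0 : 0 ≤ Gstar) (hξ : 0 < ξ)
    (hψsc : ∀ a ∈ X, ∀ b ∈ X, B a b ≥ σ / 2 * ‖a - b‖ ^ 2)
    (hψlip : ∀ a ∈ X, ∀ b ∈ X, ‖fderiv ℝ ψ a - fderiv ℝ ψ b‖ ≤ ξ * Gstar * ‖a - b‖)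
    (hR : ∀ z ∈ X, ‖z‖ ≤ R)
    (g : E →L[ℝ] ℝ) (hgnorm : ‖g‖ ≤ Gstar)
    (b x' y u : E) (hbX : b ∈ X) (hx'X : x' ∈ X) (hyX : y ∈ X) (hu : u ∈ X)
    (hymin : IsMinOn (fun z => g z + B z b / η) X y)
    (happ : g x' + B x' b / η ≤ (g y + B y b / η) + η ^ 3 / (2 * σ)) :
    ‖x' - b‖ ≤ 2*η*Gstar/σ + η^2/σ ∧
    g (b - u) ≤ (B u b - B u x')/η + η*Gstar^2/(2*σ) + 2*R*ξ*Gstar*η/σ := by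
  have h3pt : ∀ w a c : E, B w c - B w a - B a c
      = fderiv ℝ ψ a (w - a) - fderiv ℝ ψ c (w - a) := by
    intro w a c
    simp only [hB, map_sub]
    ring
  have hB0 : ∀ a ∈ X, ∀ c ∈ X, 0 ≤ B a c := by
    intro a ha c hc
    refine le_trans ?_ (hψsc a ha c hc)
    positivity
  set AA : E → ℝ := fun z => g z + B z b / η with hAA
  have hAderiv : ∀ p : E, HasFDerivAt AA
      (g + η⁻¹ • (fderiv ℝ ψ p - fderiv ℝ ψ b)) p := by
    intro p
    have hAeq : AA = fun z => g z
        + η⁻¹ * (ψ z - ψ b - (fderiv ℝ ψ b z - fderiv ℝ ψ b b)) := by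
      funext z
      show g z + B z b / η = _
      rw [hB, map_sub, div_eq_inv_mul]
    rw [hAeq]
    have h2 : HasFDerivAt (fun z => ψ z - ψ b - (fderiv ℝ ψ b z - fderiv ℝ ψ b b))
        (fderiv ℝ ψ p - fderiv ℝ ψ b) p :=
      ((hψdiff p).hasFDerivAt.sub_const _).sub
        (((fderiv ℝ ψ b).hasFDerivAt).sub_const _)
    exact (g.hasFDerivAt).add (h2.const_mul η⁻¹)
  -- variational inequality at the exact minimizer, multiplied by η
  have hVI' : ∀ z ∈ X, 0 ≤ η * (g z - g y)
      + ((fderiv ℝ ψ y z - fderiv ℝ ψ y y) - (fderiv ℝ ψ b z - fderiv ℝ ψ b y)) := by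
    intro z hz
    have hsmul : HasFDerivAt (fun w => (-η) * AA w)
        ((-η) • (g + η⁻¹ • (fderiv ℝ ψ y - fderiv ℝ ψ b))) y := (hAderiv y).const_mul (-η)
    have hDeq : (-η) • (g + η⁻¹ • (fderiv ℝ ψ y - fderiv ℝ ψ b))
        = (-η) • g + (-1:ℝ) • (fderiv ℝ ψ y - fderiv ℝ ψ b) := by
      rw [smul_add, smul_smul]
      congr 1
      have : (-η) * η⁻¹ = -1 := by field_simp
      rw [this]
    rw [hDeq] at hsmul
    have hslope : ∀ θ : ℝ, θ ∈ Set.Ioc (0:ℝ) 1 →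
        (-η) * AA (y + θ • (z - y)) - (-η) * AA y ≤ θ * 0 := by
      intro θ hθ
      have hcomb : y + θ • (z - y) = (1 - θ) • y + θ • z := by
        rw [smul_sub, sub_smul, one_smul]; abel
      have hmem : y + θ • (z - y) ∈ X := by
        rw [hcomb]
        exact hX hyX hz (by linarith [hθ.2]) (le_of_lt hθ.1) (by ring)
      have hmin := isMinOn_iff.mp hymin _ hmem
      have := mul_le_mul_of_nonpos_left hmin (by linarith : (-η) ≤ 0)
      linarith
    have hres := dir_le hsmul (z - y) 0 hslope
    simp only [ContinuousLinearMap.add_apply, ContinuousLinearMap.smul_apply,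
      ContinuousLinearMap.neg_apply, ContinuousLinearMap.sub_apply, smul_eq_mul, map_sub,
      neg_mul, neg_smul, one_smul] at hres
    linarith
  -- gap control
  have hAgap : ∀ z ∈ X, B z y ≤ η * (AA z - AA y) := by
    intro z hz
    have h3 := h3pt z y b
    simp only [map_sub] at h3
    have hAzy : η * (AA z - AA y) = η * (g z - g y) + (B z b - B y b) := by
      show η * ((g z + B z b / η) - (g y + B y b / η)) = _
      field_simp
      ring
    have hv := hVI' z hz
    linarith
  -- the approximate minimizer is close to the exact minimizer
  have happ2 : B x' y ≤ η ^ 3 / (2*σ) * η := by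
    have h1 := hAgap x' hx'X
    have h2 : AA x' - AA y ≤ η ^ 3 / (2*σ) := by
      have : AA x' ≤ AA y + η^3/(2*σ) := happ
      linarith
    calc B x' y ≤ η * (AA x' - AA y) := h1
      _ ≤ η * (η^3/(2*σ)) := mul_le_mul_of_nonneg_left h2 hη.le
      _ = η ^ 3 / (2*σ) * η := mul_comm _ _
  have hx'y : ‖x' - y‖ ≤ η^2/σ := by
    have h1 : σ/2 * ‖x' - y‖^2 ≤ B x' y := hψsc x' hx'X y hyX
    have hcomb : σ/2 * ‖x' - y‖^2 ≤ η^3/(2*σ)*η := le_trans h1 happ2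
    have h2 := mul_le_mul_of_nonneg_left hcomb (by positivity : (0:ℝ) ≤ 2*σ)
    have e1 : (2*σ)*(σ/2*‖x' - y‖^2) = σ^2*‖x' - y‖^2 := by ring
    have e2 : (2*σ)*(η^3/(2*σ)*η) = η^4 := by field_simp
    rw [e1, e2] at h2
    have h2' : ‖x' - y‖^2 ≤ (η^2/σ)^2 := by
      rw [div_pow, le_div_iff₀ (by positivity : (0:ℝ) < σ^2)]
      calc ‖x' - y‖^2 * σ^2 = σ^2*‖x' - y‖^2 := by ring
        _ ≤ η^4 := h2
        _ = (η^2)^2 := by ring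
    exact le_of_pow_le_pow_left₀ two_ne_zero (by positivity) h2'
  -- bound for g b - g y
  have hgb : g b - g y ≤ Gstar * ‖y - b‖ := by
    calc g b - g y = g (b - y) := (map_sub g b y).symm
      _ ≤ |g (b - y)| := le_abs_self _
      _ = ‖g (b - y)‖ := (Real.norm_eq_abs _).symm
      _ ≤ ‖g‖ * ‖b - y‖ := g.le_opNorm _
      _ = ‖g‖ * ‖y - b‖ := by rw [norm_sub_rev]
      _ ≤ Gstar * ‖y - b‖ := mul_le_mul_of_nonneg_right hgnorm (norm_nonneg _)
  have hsc : σ/2 * ‖y - b‖^2 ≤ B y b := hψsc y hyX b hbX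
  have hByb : B y b ≤ η * (g b - g y) := by
    have h : g y + B y b / η ≤ g b + B b b / η := isMinOn_iff.mp hymin b hbX
    have hBbb : B b b = 0 := by simp [hB]
    rw [hBbb, zero_div, add_zero] at h
    have h' : B y b / η ≤ g b - g y := by linarith
    calc B y b = η * (B y b / η) := by field_simp
      _ ≤ η * (g b - g y) := mul_le_mul_of_nonneg_left h' hη.le
  have hyb : ‖y - b‖ ≤ 2*η*Gstar/σ := by
    rcases eq_or_lt_of_le (norm_nonneg (y - b)) with h0 | h0
    · rw [← h0]; positivity
    · have hmul : η * (g b - g y) ≤ η * (Gstar * ‖y - b‖) :=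
        mul_le_mul_of_nonneg_left hgb hη.le
      have hss : σ * ‖y - b‖ * ‖y - b‖ ≤ 2*η*Gstar * ‖y - b‖ := by nlinarith
      have hfin := le_of_mul_le_mul_right hss h0
      rw [le_div_iff₀ hσ]
      linarith
  constructor
  · calc ‖x' - b‖ = ‖(x' - y) + (y - b)‖ := by rw [sub_add_sub_cancel]
      _ ≤ ‖x' - y‖ + ‖y - b‖ := norm_add_le _ _
      _ ≤ η^2/σ + 2*η*Gstar/σ := add_le_add hx'y hyb
      _ = 2*η*Gstar/σ + η^2/σ := by ring
  · -- per-step regret bound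
    have hs5 : η * (g y - g u) ≤ B u b - B u y - B y b := by
      have h3 := h3pt u y b
      simp only [map_sub] at h3
      have hv := hVI' u hu
      linarith
    have hs6 : -(B u y) ≤ -(B u x') + ξ*Gstar*(η^2/σ)*(2*R) := by
      have h3 := h3pt u x' y
      have hBx'y : 0 ≤ B x' y := hB0 x' hx'X y hyX
      have habs : |fderiv ℝ ψ x' (u - x') - fderiv ℝ ψ y (u - x')|
          ≤ ξ*Gstar*(η^2/σ)*(2*R) := by
        have h1 : fderiv ℝ ψ x' (u - x') - fderiv ℝ ψ y (u - x')
            = (fderiv ℝ ψ x' - fderiv ℝ ψ y) (u - x') :=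
          (ContinuousLinearMap.sub_apply _ _ _).symm
        rw [h1, ← Real.norm_eq_abs]
        have h4 : ‖fderiv ℝ ψ x' - fderiv ℝ ψ y‖ ≤ ξ * Gstar * (η^2/σ) := by
          calc ‖fderiv ℝ ψ x' - fderiv ℝ ψ y‖ ≤ ξ * Gstar * ‖x' - y‖ := hψlip x' hx'X y hyX
            _ ≤ ξ * Gstar * (η^2/σ) := mul_le_mul_of_nonneg_left hx'y (by positivity)
        have h5 : ‖u - x'‖ ≤ 2*R := by
          calc ‖u - x'‖ ≤ ‖u‖ + ‖x'‖ := norm_sub_le _ _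
            _ ≤ R + R := add_le_add (hR u hu) (hR x' hx'X)
            _ = 2*R := by ring
        calc ‖(fderiv ℝ ψ x' - fderiv ℝ ψ y) (u - x')‖
            ≤ ‖fderiv ℝ ψ x' - fderiv ℝ ψ y‖ * ‖u - x'‖ :=
              (fderiv ℝ ψ x' - fderiv ℝ ψ y).le_opNorm _
          _ ≤ ξ * Gstar * (η^2/σ) * (2*R) :=
              mul_le_mul h4 h5 (norm_nonneg _) (by positivity)
      have hlow := (abs_le.mp habs).1
      linarith
    have hs79 : η*(g b - g y) - B y b ≤ η^2*Gstar^2/(2*σ) := by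
      rw [le_div_iff₀ (by positivity : (0:ℝ) < 2*σ)]
      have hmul : η * (g b - g y) ≤ η * (Gstar * ‖y - b‖) :=
        mul_le_mul_of_nonneg_left hgb hη.le
      nlinarith [sq_nonneg (σ*‖y - b‖ - η*Gstar), hsc, hmul, hσ.le, norm_nonneg (y - b)]
    have hchain : η*(g b - g u) ≤ (B u b - B u x')
        + η^2*Gstar^2/(2*σ) + ξ*Gstar*(η^2/σ)*(2*R) := by linarith
    rw [map_sub]
    refine le_of_mul_le_mul_left ?_ hη
    have e1 : η * ((B u b - B u x')/η) = B u b - B u x' := by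
      rw [mul_comm, div_mul_cancel₀ _ hη.ne']
    have hrhs : η * ((B u b - B u x')/η + η*Gstar^2/(2*σ) + 2*R*ξ*Gstar*η/σ)
        = (B u b - B u x') + η^2*Gstar^2/(2*σ) + ξ*Gstar*(η^2/σ)*(2*R) := by
      rw [mul_add, mul_add, e1]
      ring
    rw [hrhs]
    exact hchain



/-- Theorem 3: DMD-GC regret bound. -/
theorem dmd_gc_regret
    {E : Type*} [NormedAddCommGroup E] [NormedSpace ℝ E]
    (X : Set E) (hXne : X.Nonempty) (hX : Convex ℝ X)
    (R : ℝ) (hR : ∀ z ∈ X, ‖z‖ ≤ R)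
    (T : ℕ) (hT : 1 ≤ T) (d : ℕ → ℕ)
    (hd : ∀ t ∈ Finset.Icc 1 T, 1 ≤ d t ∧ t + d t - 1 ≤ T)
    (F : ℕ → Finset ℕ)
    (hF : ∀ t, F t = (Finset.Icc 1 T).filter (fun k => k + d k - 1 = t))
    (f : ℕ → E → ℝ) (Gstar : ℝ)
    (hfdiff : ∀ t ∈ Finset.Icc 1 T, Differentiable ℝ (f t))
    (hfconv : ∀ t ∈ Finset.Icc 1 T, ConvexOn ℝ X (f t))
    (hG : ∀ t ∈ Finset.Icc 1 T, ∀ z ∈ X, ‖fderiv ℝ (f t) z‖ ≤ Gstar)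
    (ψ : E → ℝ) (σ ξ : ℝ) (hσ : 0 < σ) (hξ : 0 < ξ)
    (hψdiff : Differentiable ℝ ψ)
    (B : E → E → ℝ)
    (hB : ∀ a b, B a b = ψ a - ψ b - fderiv ℝ ψ b (a - b))
    (hψsc : ∀ a ∈ X, ∀ b ∈ X, B a b ≥ σ / 2 * ‖a - b‖ ^ 2)
    (hψlip : ∀ a ∈ X, ∀ b ∈ X,
      ‖fderiv ℝ ψ a - fderiv ℝ ψ b‖ ≤ ξ * Gstar * ‖a - b‖)
    (η : ℝ) (hη : 0 < η)
    (x : ℕ → E) (xx : ℕ → ℕ → E) (hx1 : x 1 ∈ X)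
    (hxxmem : ∀ t ∈ Finset.Icc 1 T, ∀ i ≤ (F t).card, xx t i ∈ X)
    (hxx0 : ∀ t ∈ Finset.Icc 1 T, xx t 0 = x t)
    (hxnext : ∀ t ∈ Finset.Icc 1 T, x (t + 1) = xx t (F t).card)
    (A : ℕ → ℕ → E → ℝ)
    (hA : ∀ t k z, A t k z =
      fderiv ℝ (f k) (xx t ((F t).filter (fun s => s < k)).card) z
        + B z (xx t ((F t).filter (fun s => s < k)).card) / η)
    (hopt : ∀ t ∈ Finset.Icc 1 T, ∀ k ∈ F t, ∃ ystar ∈ X,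
      IsMinOn (A t k) X ystar ∧
        A t k (xx t (((F t).filter (fun s => s < k)).card + 1))
          ≤ A t k ystar + η ^ 3 / (2 * σ))
    :
    ∀ xstar ∈ X,
      ∑ t ∈ Finset.Icc 1 T, f t (x t) - ∑ t ∈ Finset.Icc 1 T, f t xstar
        ≤ η * (Gstar ^ 2 * (T : ℝ) + 8 * ξ * R * Gstar * (T : ℝ)
              + 2 * η * Gstar * (T : ℝ)
              + 4 * Gstar ^ 2 * ∑ t ∈ Finset.Icc 1 T, (d t : ℝ)
              + 8 * η * Gstar * ∑ t ∈ Finset.Icc 1 T, (d t : ℝ)) / (2 * σ)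
          + 2 * η ^ 2 * ξ * Gstar ^ 2 * (∑ t ∈ Finset.Icc 1 T, (d t : ℝ)) / σ ^ 2
          + B xstar (x 1) / η := by

  intro u hu
  -- basic positivity facts
  obtain ⟨z0, hz0⟩ := hXne
  have hT1 : (1:ℕ) ∈ Finset.Icc 1 T := Finset.mem_Icc.mpr ⟨le_refl 1, hT⟩
  have hG0 : 0 ≤ Gstar := le_trans (norm_nonneg _) (hG 1 hT1 z0 hz0)
  have hR0 : 0 ≤ R := le_trans (norm_nonneg _) (hR z0 hz0)
  -- membership of the main iterates
  have hxX : ∀ m, 1 ≤ m → m ≤ T + 1 → x m ∈ X := by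
    intro m h1 h2
    rcases Nat.lt_or_ge m 2 with h | h
    · have : m = 1 := by omega
      rw [this]; exact hx1
    · have hm : m = (m - 1) + 1 := by omega
      have hmem : m - 1 ∈ Finset.Icc 1 T := Finset.mem_Icc.mpr ⟨by omega, by omega⟩
      rw [hm, hxnext (m-1) hmem]
      exact hxxmem (m-1) hmem _ (le_refl _)
  -- three point identity
  have h3pt : ∀ w a b : E, B w b - B w a - B a b
      = fderiv ℝ ψ a (w - a) - fderiv ℝ ψ b (w - a) := by
    intro w a b
    simp only [hB, map_sub]
    ring
  have hB0 : ∀ a ∈ X, ∀ b ∈ X, 0 ≤ B a b := by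
    intro a ha b hb
    refine le_trans ?_ (hψsc a ha b hb)
    positivity
  -- convexity gradient inequality
  have hconvgrad : ∀ k ∈ Finset.Icc 1 T, ∀ a ∈ X, ∀ b ∈ X,
      fderiv ℝ (f k) a (b - a) ≤ f k b - f k a := by
    intro k hk a ha b hb
    refine dir_le ((hfdiff k hk a).hasFDerivAt) (b - a) (f k b - f k a) ?_
    intro θ hθ
    have hcomb : a + θ • (b - a) = (1 - θ) • a + θ • b := by
      rw [smul_sub, sub_smul, one_smul]; abel
    have hc := (hfconv k hk).2 ha hb (by linarith [hθ.2] : (0:ℝ) ≤ 1 - θ)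
      (le_of_lt hθ.1) (by ring)
    simp only [smul_eq_mul] at hc
    rw [hcomb]
    calc f k ((1-θ) • a + θ • b) - f k a ≤ (1-θ) * f k a + θ * f k b - f k a := by linarith
      _ = θ * (f k b - f k a) := by ring
  -- the core per-step facts
  have hrank_lt : ∀ t : ℕ, ∀ k ∈ F t, ((F t).filter (fun s => s < k)).card < (F t).card := by
    intro t k hkF
    apply Finset.card_lt_card
    rw [Finset.ssubset_iff_of_subset (Finset.filter_subset _ _)]
    exact ⟨k, hkF, by simp⟩
  have core : ∀ t ∈ Finset.Icc 1 T, ∀ k ∈ F t,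
      ‖xx t (((F t).filter (fun s => s < k)).card + 1)
          - xx t (((F t).filter (fun s => s < k)).card)‖ ≤ 2*η*Gstar/σ + η^2/σ ∧
      fderiv ℝ (f k) (xx t (((F t).filter (fun s => s < k)).card))
          (xx t (((F t).filter (fun s => s < k)).card) - u) ≤
        (B u (xx t (((F t).filter (fun s => s < k)).card))
          - B u (xx t (((F t).filter (fun s => s < k)).card + 1)))/η
        + η*Gstar^2/(2*σ) + 2*R*ξ*Gstar*η/σ := by
    intro t ht k hkF
    have hk1T : k ∈ Finset.Icc 1 T := by
      rw [hF] at hkF; exact (Finset.mem_filter.mp hkF).1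
    have hilt := hrank_lt t k hkF
    obtain ⟨y, hyX, hymin, happ⟩ := hopt t ht k hkF
    have hAfun : A t k = fun z =>
        fderiv ℝ (f k) (xx t (((F t).filter (fun s => s < k)).card)) z
          + B z (xx t (((F t).filter (fun s => s < k)).card)) / η := funext (hA t k)
    rw [hAfun] at hymin happ
    exact core_step X hX ψ hψdiff B hB σ ξ R Gstar η hσ hη hG0 hξ hψsc hψlip hR
      (fderiv ℝ (f k) (xx t (((F t).filter (fun s => s < k)).card)))
      (hG k hk1T _ (hxxmem t ht _ hilt.le))
      (xx t (((F t).filter (fun s => s < k)).card))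
      (xx t (((F t).filter (fun s => s < k)).card + 1)) y u
      (hxxmem t ht _ hilt.le) (hxxmem t ht _ hilt) hyX hu hymin happ
  -- per-round regret bound
  have key : ∀ k ∈ Finset.Icc 1 T,
      f k (x k) - f k u ≤
        (B u (xx (k + d k - 1) (((F (k + d k - 1)).filter (fun s => s < k)).card))
          - B u (xx (k + d k - 1) ((((F (k + d k - 1)).filter (fun s => s < k)).card) + 1)))/η
        + (η*Gstar^2/(2*σ) + 2*R*ξ*Gstar*η/σ)
        + Gstar * ‖x k - xx (k + d k - 1)
            (((F (k + d k - 1)).filter (fun s => s < k)).card)‖ := by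
    intro k hk
    have hk' := Finset.mem_Icc.mp hk
    have hdk := hd k hk
    have htmem : k + d k - 1 ∈ Finset.Icc 1 T := Finset.mem_Icc.mpr ⟨by omega, hdk.2⟩
    have hkF : k ∈ F (k + d k - 1) := by
      rw [hF]; exact Finset.mem_filter.mpr ⟨hk, rfl⟩
    have hcore := (core _ htmem k hkF).2
    have hbX : xx (k + d k - 1) (((F (k + d k - 1)).filter (fun s => s < k)).card) ∈ X :=
      hxxmem _ htmem _ (hrank_lt _ k hkF).le
    have hxkX : x k ∈ X := hxX k (by omega) (by omega)
    have hc1 : f k (x k) - f k (xx (k + d k - 1)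
        (((F (k + d k - 1)).filter (fun s => s < k)).card))
        ≤ Gstar * ‖x k - xx (k + d k - 1) (((F (k + d k - 1)).filter (fun s => s < k)).card)‖ := by
      have h := hconvgrad k hk (x k) hxkX _ hbX
      have h2 : fderiv ℝ (f k) (x k)
          (x k - xx (k + d k - 1) (((F (k + d k - 1)).filter (fun s => s < k)).card))
          ≤ Gstar * ‖x k - xx (k + d k - 1)
              (((F (k + d k - 1)).filter (fun s => s < k)).card)‖ := by
        calc fderiv ℝ (f k) (x k) (x k - xx (k + d k - 1)
              (((F (k + d k - 1)).filter (fun s => s < k)).card))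
            ≤ |fderiv ℝ (f k) (x k) (x k - xx (k + d k - 1)
              (((F (k + d k - 1)).filter (fun s => s < k)).card))| := le_abs_self _
          _ = ‖fderiv ℝ (f k) (x k) (x k - xx (k + d k - 1)
              (((F (k + d k - 1)).filter (fun s => s < k)).card))‖ :=
              (Real.norm_eq_abs _).symm
          _ ≤ ‖fderiv ℝ (f k) (x k)‖ * ‖x k - xx (k + d k - 1)
              (((F (k + d k - 1)).filter (fun s => s < k)).card)‖ :=
              (fderiv ℝ (f k) (x k)).le_opNorm _
          _ ≤ Gstar * ‖x k - xx (k + d k - 1)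
              (((F (k + d k - 1)).filter (fun s => s < k)).card)‖ :=
              mul_le_mul_of_nonneg_right (hG k hk (x k) hxkX) (norm_nonneg _)
      have h3 : fderiv ℝ (f k) (x k)
          (xx (k + d k - 1) (((F (k + d k - 1)).filter (fun s => s < k)).card) - x k)
          = -(fderiv ℝ (f k) (x k) (x k - xx (k + d k - 1)
            (((F (k + d k - 1)).filter (fun s => s < k)).card))) := by
        rw [← map_neg, neg_sub]
      linarith
    have hc2 : f k (xx (k + d k - 1) (((F (k + d k - 1)).filter (fun s => s < k)).card))
        - f k u ≤ fderiv ℝ (f k) (xx (k + d k - 1)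
          (((F (k + d k - 1)).filter (fun s => s < k)).card))
          (xx (k + d k - 1) (((F (k + d k - 1)).filter (fun s => s < k)).card) - u) := by
      have h := hconvgrad k hk _ hbX u hu
      have h3 : fderiv ℝ (f k) (xx (k + d k - 1)
          (((F (k + d k - 1)).filter (fun s => s < k)).card))
          (xx (k + d k - 1) (((F (k + d k - 1)).filter (fun s => s < k)).card) - u)
          = -(fderiv ℝ (f k) (xx (k + d k - 1)
            (((F (k + d k - 1)).filter (fun s => s < k)).card))
            (u - xx (k + d k - 1) (((F (k + d k - 1)).filter (fun s => s < k)).card))) := by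
        rw [← map_neg, neg_sub]
      linarith
    linarith
  -- telescoping of the Bregman differences
  have htel : ∑ k ∈ Finset.Icc 1 T,
      (B u (xx (k + d k - 1) (((F (k + d k - 1)).filter (fun s => s < k)).card))
        - B u (xx (k + d k - 1) ((((F (k + d k - 1)).filter (fun s => s < k)).card) + 1)))
      ≤ B u (x 1) := by
    have hmaps : ∀ k ∈ Finset.Icc 1 T, k + d k - 1 ∈ Finset.Icc 1 T := by
      intro k hk
      have h1 := (Finset.mem_Icc.mp hk).1
      have h2 := hd k hk
      exact Finset.mem_Icc.mpr ⟨by omega, h2.2⟩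
    rw [← Finset.sum_fiberwise_of_maps_to hmaps]
    have hstep : ∀ t ∈ Finset.Icc 1 T,
        ∑ k ∈ (Finset.Icc 1 T).filter (fun k => k + d k - 1 = t),
          (B u (xx (k + d k - 1) (((F (k + d k - 1)).filter (fun s => s < k)).card))
            - B u (xx (k + d k - 1) ((((F (k + d k - 1)).filter (fun s => s < k)).card) + 1)))
        = B u (x t) - B u (x (t+1)) := by
      intro t ht
      have hFt : (Finset.Icc 1 T).filter (fun k => k + d k - 1 = t) = F t := (hF t).symm
      rw [hFt]
      have hcongr : ∀ k ∈ F t,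
          (B u (xx (k + d k - 1) (((F (k + d k - 1)).filter (fun s => s < k)).card))
            - B u (xx (k + d k - 1) ((((F (k + d k - 1)).filter (fun s => s < k)).card) + 1)))
          = (fun i => B u (xx t i) - B u (xx t (i+1))) (((F t).filter (fun s => s < k)).card) := by
        intro k hk
        have hkt : k + d k - 1 = t := by
          rw [hF] at hk; exact (Finset.mem_filter.mp hk).2
        rw [hkt]
      rw [Finset.sum_congr rfl hcongr,
        sum_rank (F t) (fun i => B u (xx t i) - B u (xx t (i+1))),
        Finset.sum_range_sub' (fun i => B u (xx t i)) (F t).card,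
        hxx0 t ht, hxnext t ht]
    rw [Finset.sum_congr rfl hstep]
    have houter : ∑ t ∈ Finset.Icc 1 T, (B u (x t) - B u (x (t+1)))
        = B u (x 1) - B u (x (T+1)) := by
      rw [← Finset.Ico_add_one_right_eq_Icc, Finset.sum_Ico_eq_sum_range]
      have hsub := Finset.sum_range_sub' (fun i => B u (x (i+1))) T
      rw [← hsub]
      apply Finset.sum_congr rfl
      intro i _
      have hcomm : 1 + i = i + 1 := Nat.add_comm 1 i
      rw [hcomm]
    rw [houter]
    have hpos := hB0 u hu (x (T+1)) (hxX (T+1) (by omega) (by omega))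
    linarith
  -- step norm bound for every index
  have hstepnorm : ∀ t ∈ Finset.Icc 1 T, ∀ j < (F t).card,
      ‖xx t (j+1) - xx t j‖ ≤ 2*η*Gstar/σ + η^2/σ := by
    intro t ht j hj
    obtain ⟨k, hkF, hrk⟩ := rank_surj (F t) j hj
    have h := (core t ht k hkF).1
    rw [hrk] at h
    exact h
  have hS0 : (0:ℝ) ≤ 2*η*Gstar/σ + η^2/σ := by positivity
  -- within-round distance bound
  have hwithin : ∀ t ∈ Finset.Icc 1 T, ∀ j ≤ (F t).card,
      ‖xx t j - x t‖ ≤ (j:ℝ) * (2*η*Gstar/σ + η^2/σ) := by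
    intro t ht j
    induction j with
    | zero =>
      intro _
      rw [hxx0 t ht]
      simp
    | succ n ih =>
      intro hn
      have h1 := ih (by omega)
      have h2 := hstepnorm t ht n (by omega)
      calc ‖xx t (n+1) - x t‖ = ‖(xx t (n+1) - xx t n) + (xx t n - x t)‖ := by
            rw [sub_add_sub_cancel]
        _ ≤ ‖xx t (n+1) - xx t n‖ + ‖xx t n - x t‖ := norm_add_le _ _
        _ ≤ (2*η*Gstar/σ + η^2/σ) + (n:ℝ) * (2*η*Gstar/σ + η^2/σ) := add_le_add h2 h1
        _ = ((n+1 : ℕ):ℝ) * (2*η*Gstar/σ + η^2/σ) := by push_cast; ring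
  -- across-round distance bound
  have hacross : ∀ k, 1 ≤ k → ∀ m, k ≤ m → m ≤ T →
      ‖x m - x k‖ ≤ ((∑ r ∈ Finset.Icc k (m-1), (F r).card : ℕ) : ℝ)
        * (2*η*Gstar/σ + η^2/σ) := by
    intro k hk1 m hkm
    induction m, hkm using Nat.le_induction with
    | base =>
      intro _
      have hempty : Finset.Icc k (k-1) = ∅ := by
        rw [Finset.Icc_eq_empty]
        omega
      rw [hempty]
      simp
    | succ m hkm ih =>
      intro hmT1
      have hmT : m ≤ T := by omega
      have ihm := ih hmT
      have hmmem : m ∈ Finset.Icc 1 T := Finset.mem_Icc.mpr ⟨by omega, hmT⟩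
      have hw := hwithin m hmmem (F m).card le_rfl
      have hsum : ∑ r ∈ Finset.Icc k (m+1-1), (F r).card
          = ∑ r ∈ Finset.Icc k (m-1), (F r).card + (F m).card := by
        have h1 : m + 1 - 1 = m := by omega
        rw [h1]
        have hins : Finset.Icc k m = insert m (Finset.Icc k (m-1)) := by
          ext a
          simp only [Finset.mem_Icc, Finset.mem_insert]
          omega
        rw [hins, Finset.sum_insert (by simp only [Finset.mem_Icc]; omega)]
        omega
      calc ‖x (m+1) - x k‖ = ‖(x (m+1) - x m) + (x m - x k)‖ := by rw [sub_add_sub_cancel]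
        _ ≤ ‖x (m+1) - x m‖ + ‖x m - x k‖ := norm_add_le _ _
        _ ≤ ((F m).card : ℝ) * (2*η*Gstar/σ + η^2/σ)
            + ((∑ r ∈ Finset.Icc k (m-1), (F r).card : ℕ) : ℝ) * (2*η*Gstar/σ + η^2/σ) := by
            refine add_le_add ?_ ihm
            rw [hxnext m hmmem]
            exact hw
        _ = ((∑ r ∈ Finset.Icc k (m+1-1), (F r).card : ℕ) : ℝ) * (2*η*Gstar/σ + η^2/σ) := by
            rw [hsum]
            push_cast
            ring
  -- full distance bound for each k
  have hdist : ∀ k ∈ Finset.Icc 1 T,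
      ‖x k - xx (k + d k - 1) (((F (k + d k - 1)).filter (fun s => s < k)).card)‖
        ≤ (((∑ r ∈ Finset.Icc k (k + d k - 1 - 1), (F r).card)
            + ((F (k + d k - 1)).filter (fun s => s < k)).card : ℕ) : ℝ)
          * (2*η*Gstar/σ + η^2/σ) := by
    intro k hk
    have hk' := Finset.mem_Icc.mp hk
    have hdk := hd k hk
    have htmem : k + d k - 1 ∈ Finset.Icc 1 T := Finset.mem_Icc.mpr ⟨by omega, hdk.2⟩
    have hkF : k ∈ F (k + d k - 1) := by
      rw [hF]; exact Finset.mem_filter.mpr ⟨hk, rfl⟩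
    have h1 := hwithin _ htmem _ (hrank_lt _ k hkF).le
    have h2 := hacross k hk'.1 (k + d k - 1) (by omega) hdk.2
    calc ‖x k - xx (k + d k - 1) (((F (k + d k - 1)).filter (fun s => s < k)).card)‖
        = ‖xx (k + d k - 1) (((F (k + d k - 1)).filter (fun s => s < k)).card) - x k‖ :=
          norm_sub_rev _ _
      _ = ‖(xx (k + d k - 1) (((F (k + d k - 1)).filter (fun s => s < k)).card)
            - x (k + d k - 1)) + (x (k + d k - 1) - x k)‖ := by rw [sub_add_sub_cancel]
      _ ≤ ‖xx (k + d k - 1) (((F (k + d k - 1)).filter (fun s => s < k)).card)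
            - x (k + d k - 1)‖ + ‖x (k + d k - 1) - x k‖ := norm_add_le _ _
      _ ≤ ((((F (k + d k - 1)).filter (fun s => s < k)).card : ℕ) : ℝ) * (2*η*Gstar/σ + η^2/σ)
          + ((∑ r ∈ Finset.Icc k (k + d k - 1 - 1), (F r).card : ℕ) : ℝ)
            * (2*η*Gstar/σ + η^2/σ) := add_le_add h1 h2
      _ = _ := by push_cast; ring
  -- the counting bound (in ℕ)
  have hcount : ∑ k ∈ Finset.Icc 1 T, ((∑ r ∈ Finset.Icc k (k + d k - 1 - 1), (F r).card)
      + ((F (k + d k - 1)).filter (fun s => s < k)).card) ≤ ∑ t ∈ Finset.Icc 1 T, d t := by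
    -- rewrite each summand as indicator sums
    have hNk : ∀ k ∈ Finset.Icc 1 T,
        (∑ r ∈ Finset.Icc k (k + d k - 1 - 1), (F r).card)
          + ((F (k + d k - 1)).filter (fun s => s < k)).card
        = ∑ s ∈ Finset.Icc 1 T,
            ((if k ≤ s + d s - 1 ∧ s + d s - 1 ≤ k + d k - 1 - 1 then 1 else 0)
              + (if s + d s - 1 = k + d k - 1 ∧ s < k then 1 else 0)) := by
      intro k hk
      rw [Finset.sum_add_distrib]
      congr 1
      · calc ∑ r ∈ Finset.Icc k (k + d k - 1 - 1), (F r).card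
            = ∑ r ∈ Finset.Icc k (k + d k - 1 - 1), ∑ s ∈ Finset.Icc 1 T,
                (if s + d s - 1 = r then 1 else 0) := by
              refine Finset.sum_congr rfl ?_
              intro r _
              rw [hF, Finset.card_filter]
          _ = ∑ s ∈ Finset.Icc 1 T, ∑ r ∈ Finset.Icc k (k + d k - 1 - 1),
                (if s + d s - 1 = r then 1 else 0) := Finset.sum_comm
          _ = ∑ s ∈ Finset.Icc 1 T,
                (if k ≤ s + d s - 1 ∧ s + d s - 1 ≤ k + d k - 1 - 1 then 1 else 0) := by
              refine Finset.sum_congr rfl ?_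
              intro s _
              rw [Finset.sum_ite_eq]
              simp [Finset.mem_Icc]
      · rw [hF, Finset.filter_filter, Finset.card_filter]
    rw [Finset.sum_congr rfl hNk]
    -- introduce the reversed lexicographic indicator
    set J : ℕ → ℕ → ℕ := fun k s =>
      if k + d k - 1 < s + d s - 1 ∨ (k + d k - 1 = s + d s - 1 ∧ k < s) then 1 else 0 with hJ
    have hmain : (∑ k ∈ Finset.Icc 1 T, ∑ s ∈ Finset.Icc 1 T,
          ((if k ≤ s + d s - 1 ∧ s + d s - 1 ≤ k + d k - 1 - 1 then 1 else 0)
            + (if s + d s - 1 = k + d k - 1 ∧ s < k then 1 else 0)))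
        + ∑ k ∈ Finset.Icc 1 T, ∑ s ∈ Finset.Icc 1 T, J k s
        ≤ ∑ k ∈ Finset.Icc 1 T, ∑ s ∈ Finset.Icc 1 T,
            (if k ≤ s + d s - 1 ∧ ¬ s = k then 1 else 0) := by
      rw [← Finset.sum_add_distrib]
      refine Finset.sum_le_sum ?_
      intro k hk
      rw [← Finset.sum_add_distrib]
      refine Finset.sum_le_sum ?_
      intro s hs
      have hdk := hd k hk
      have hds := hd s hs
      have hk' := Finset.mem_Icc.mp hk
      have hs' := Finset.mem_Icc.mp hs
      by_cases hsk : s = k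
      · subst hsk
        simp only [hJ]
        split_ifs <;> omega
      · simp only [hJ]
        split_ifs <;> omega
    -- J is "half" of all distinct pairs
    have hJswap : ∑ k ∈ Finset.Icc 1 T, ∑ s ∈ Finset.Icc 1 T, J k s
        = ∑ k ∈ Finset.Icc 1 T, ∑ s ∈ Finset.Icc 1 T, J s k := Finset.sum_comm
    have hJtot : (∑ k ∈ Finset.Icc 1 T, ∑ s ∈ Finset.Icc 1 T, J k s)
        + (∑ k ∈ Finset.Icc 1 T, ∑ s ∈ Finset.Icc 1 T, J s k)
        = ∑ k ∈ Finset.Icc 1 T, ∑ s ∈ Finset.Icc 1 T, (if s = k then 0 else 1) := by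
      rw [← Finset.sum_add_distrib]
      refine Finset.sum_congr rfl ?_
      intro k hk
      rw [← Finset.sum_add_distrib]
      refine Finset.sum_congr rfl ?_
      intro s hs
      have hdk := hd k hk
      have hds := hd s hs
      by_cases hsk : s = k
      · subst hsk
        simp only [hJ]
        split_ifs <;> omega
      · simp only [hJ]
        split_ifs <;> omega
    -- count of distinct pairs per k
    have hone : ∀ k ∈ Finset.Icc 1 T, (∑ s ∈ Finset.Icc 1 T, if s = k then 0 else 1) = T - 1 := by
      intro k hk
      have hrw : ∀ s, (if s = k then 0 else 1) = (if ¬ s = k then 1 else 0) := by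
        intro s; by_cases h : s = k <;> simp [h]
      rw [Finset.sum_congr rfl (fun s _ => hrw s), ← Finset.card_filter]
      have hfe : (Finset.Icc 1 T).filter (fun s => ¬ s = k) = (Finset.Icc 1 T).erase k := by
        ext a
        simp only [Finset.mem_filter, Finset.mem_erase, Finset.mem_Icc]
        tauto
      rw [hfe, Finset.card_erase_of_mem hk, Nat.card_Icc]
      omega
    -- evaluation of the RHS of hmain
    have hK : ∀ s ∈ Finset.Icc 1 T,
        (∑ k ∈ Finset.Icc 1 T, if k ≤ s + d s - 1 ∧ ¬ s = k then 1 else 0)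
          = s + d s - 1 - 1 := by
      intro s hs
      rw [← Finset.card_filter]
      have hds := hd s hs
      have hs' := Finset.mem_Icc.mp hs
      have hfe : (Finset.Icc 1 T).filter (fun k => k ≤ s + d s - 1 ∧ ¬ s = k)
          = (Finset.Icc 1 (s + d s - 1)).erase s := by
        ext a
        simp only [Finset.mem_filter, Finset.mem_erase, Finset.mem_Icc]
        omega
      rw [hfe, Finset.card_erase_of_mem (by simp only [Finset.mem_Icc]; omega), Nat.card_Icc]
      omega
    -- Gauss sum
    have hgauss : 2 * (∑ s ∈ Finset.Icc 1 T, (s - 1)) = T * (T - 1) := by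
      have h0 : ∑ s ∈ Finset.Icc 1 T, (s - 1) = ∑ i ∈ Finset.range T, i := by
        rw [← Finset.Ico_add_one_right_eq_Icc, Finset.sum_Ico_eq_sum_range]
        exact Finset.sum_congr rfl (fun i _ => by omega)
      rw [h0, mul_comm]
      exact Finset.sum_range_id_mul_two T
    -- combine everything
    have hJtot2 : (∑ k ∈ Finset.Icc 1 T, ∑ s ∈ Finset.Icc 1 T, J k s)
        + (∑ k ∈ Finset.Icc 1 T, ∑ s ∈ Finset.Icc 1 T, J k s) = T * (T - 1) := by
      nth_rewrite 2 [hJswap]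
      rw [hJtot, Finset.sum_congr rfl hone, Finset.sum_const, Nat.card_Icc,
        Nat.add_sub_cancel, smul_eq_mul]
    have hSK : ∑ k ∈ Finset.Icc 1 T, ∑ s ∈ Finset.Icc 1 T,
        (if k ≤ s + d s - 1 ∧ ¬ s = k then 1 else 0)
        = (∑ s ∈ Finset.Icc 1 T, (s - 1)) + ∑ s ∈ Finset.Icc 1 T, (d s - 1) := by
      rw [Finset.sum_comm, Finset.sum_congr rfl hK, ← Finset.sum_add_distrib]
      refine Finset.sum_congr rfl ?_
      intro s hs
      have h1 := hd s hs
      have h2 := Finset.mem_Icc.mp hs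
      omega
    have hDD : ∑ t ∈ Finset.Icc 1 T, d t
        = (∑ s ∈ Finset.Icc 1 T, (d s - 1)) + T := by
      have h1 : ∀ s ∈ Finset.Icc 1 T, d s = (d s - 1) + 1 := by
        intro s hs
        have := hd s hs
        omega
      rw [Finset.sum_congr rfl h1, Finset.sum_add_distrib, Finset.sum_const, Nat.card_Icc,
        Nat.add_sub_cancel, smul_eq_mul, mul_one]
    omega
  -- assemble everything
  rw [← Finset.sum_sub_distrib]
  have hbound1 := Finset.sum_le_sum key
  have hsplit : ∑ k ∈ Finset.Icc 1 T,
      ((B u (xx (k + d k - 1) (((F (k + d k - 1)).filter (fun s => s < k)).card))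
          - B u (xx (k + d k - 1) ((((F (k + d k - 1)).filter (fun s => s < k)).card) + 1)))/η
        + (η*Gstar^2/(2*σ) + 2*R*ξ*Gstar*η/σ)
        + Gstar * ‖x k - xx (k + d k - 1)
            (((F (k + d k - 1)).filter (fun s => s < k)).card)‖)
      = (∑ k ∈ Finset.Icc 1 T,
          (B u (xx (k + d k - 1) (((F (k + d k - 1)).filter (fun s => s < k)).card))
            - B u (xx (k + d k - 1) ((((F (k + d k - 1)).filter (fun s => s < k)).card) + 1))))/η
        + (T:ℝ)*(η*Gstar^2/(2*σ) + 2*R*ξ*Gstar*η/σ)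
        + Gstar * ∑ k ∈ Finset.Icc 1 T, ‖x k - xx (k + d k - 1)
            (((F (k + d k - 1)).filter (fun s => s < k)).card)‖ := by
    rw [Finset.sum_add_distrib, Finset.sum_add_distrib, ← Finset.sum_div, ← Finset.mul_sum,
      Finset.sum_const, Nat.card_Icc, Nat.add_sub_cancel, nsmul_eq_mul]
  rw [hsplit] at hbound1
  have hterm1 : (∑ k ∈ Finset.Icc 1 T,
      (B u (xx (k + d k - 1) (((F (k + d k - 1)).filter (fun s => s < k)).card))
        - B u (xx (k + d k - 1) ((((F (k + d k - 1)).filter (fun s => s < k)).card) + 1))))/η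
      ≤ B u (x 1)/η := by
    apply div_le_div_of_nonneg_right htel hη.le
  have hD0 : (0:ℝ) ≤ ∑ t ∈ Finset.Icc 1 T, (d t:ℝ) :=
    Finset.sum_nonneg (fun i _ => Nat.cast_nonneg _)
  have hterm3 : ∑ k ∈ Finset.Icc 1 T, ‖x k - xx (k + d k - 1)
        (((F (k + d k - 1)).filter (fun s => s < k)).card)‖
      ≤ (∑ t ∈ Finset.Icc 1 T, (d t:ℝ)) * (2*η*Gstar/σ + η^2/σ) := by
    calc ∑ k ∈ Finset.Icc 1 T, ‖x k - xx (k + d k - 1)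
          (((F (k + d k - 1)).filter (fun s => s < k)).card)‖
        ≤ ∑ k ∈ Finset.Icc 1 T,
            ((((∑ r ∈ Finset.Icc k (k + d k - 1 - 1), (F r).card)
              + ((F (k + d k - 1)).filter (fun s => s < k)).card : ℕ) : ℝ)
              * (2*η*Gstar/σ + η^2/σ)) := Finset.sum_le_sum hdist
      _ = ((∑ k ∈ Finset.Icc 1 T, ((∑ r ∈ Finset.Icc k (k + d k - 1 - 1), (F r).card)
            + ((F (k + d k - 1)).filter (fun s => s < k)).card) : ℕ) : ℝ)
            * (2*η*Gstar/σ + η^2/σ) := by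
          rw [← Finset.sum_mul, Nat.cast_sum]
      _ ≤ (∑ t ∈ Finset.Icc 1 T, (d t:ℝ)) * (2*η*Gstar/σ + η^2/σ) := by
          apply mul_le_mul_of_nonneg_right _ hS0
          exact_mod_cast hcount
  have hfin : ∑ k ∈ Finset.Icc 1 T, (f k (x k) - f k u)
      ≤ B u (x 1)/η + (T:ℝ)*(η*Gstar^2/(2*σ) + 2*R*ξ*Gstar*η/σ)
        + Gstar * ((∑ t ∈ Finset.Icc 1 T, (d t:ℝ)) * (2*η*Gstar/σ + η^2/σ)) := by
    have h3 := mul_le_mul_of_nonneg_left hterm3 hG0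
    linarith [hbound1, hterm1]
  have hT0 : (0:ℝ) ≤ (T:ℝ) := Nat.cast_nonneg T
  have s1 : (0:ℝ) ≤ 2*η*ξ*R*Gstar*(T:ℝ)/σ := by positivity
  have s2 : (0:ℝ) ≤ η^2*Gstar*(T:ℝ)/σ := by positivity
  have s3 : (0:ℝ) ≤ 3*η^2*Gstar*(∑ t ∈ Finset.Icc 1 T, (d t:ℝ))/σ := by positivity
  have s4 : (0:ℝ) ≤ 2*η^2*ξ*Gstar^2*(∑ t ∈ Finset.Icc 1 T, (d t:ℝ))/σ^2 := by positivity
  have hEq : η * (Gstar ^ 2 * (T : ℝ) + 8 * ξ * R * Gstar * (T : ℝ)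
        + 2 * η * Gstar * (T : ℝ)
        + 4 * Gstar ^ 2 * ∑ t ∈ Finset.Icc 1 T, (d t : ℝ)
        + 8 * η * Gstar * ∑ t ∈ Finset.Icc 1 T, (d t : ℝ)) / (2 * σ)
      + 2 * η ^ 2 * ξ * Gstar ^ 2 * (∑ t ∈ Finset.Icc 1 T, (d t : ℝ)) / σ ^ 2
      + B u (x 1) / η
      = (B u (x 1)/η + (T:ℝ)*(η*Gstar^2/(2*σ) + 2*R*ξ*Gstar*η/σ)
          + Gstar * ((∑ t ∈ Finset.Icc 1 T, (d t:ℝ)) * (2*η*Gstar/σ + η^2/σ)))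
        + (2*η*ξ*R*Gstar*(T:ℝ)/σ + η^2*Gstar*(T:ℝ)/σ
          + 3*η^2*Gstar*(∑ t ∈ Finset.Icc 1 T, (d t:ℝ))/σ
          + 2*η^2*ξ*Gstar^2*(∑ t ∈ Finset.Icc 1 T, (d t:ℝ))/σ^2) := by
    field_simp
    ring
  rw [hEq]
  linarith [hfin, s1, s2, s3, s4]
end

section
/- Under the DMD-RSC scheme with learning rates η_t = 1/(γ Σ_{τ=1}^t |F_τ|) and approximation error ρ_t = η_t³/(2σ), for each t ∈ {1,…,T} (with the convention η_0 := η_1) the consecutive iterates satisfy ‖x_t − x_{t+1}‖ ≤ (η_t|F_t|G⋆ + η_t² + η_{t−1}²)/σ + η_{t−1}²ξG⋆/σ². -/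
open Finset

private lemma auxA {η s cG nv bb lv : ℝ} (hη : 0 < η) (hs : 0 < s) (hnv : 0 ≤ nv)
    (hcG : 0 ≤ cG) (h0 : η⁻¹ * bb ≤ lv) (hbb : s * nv ^ 2 ≤ bb) (hlv : lv ≤ cG * nv) :
    nv ≤ η * cG / s := by
  have hb2 : s * nv ^ 2 ≤ η * lv := by
    have h := mul_le_mul_of_nonneg_left h0 hη.le
    rw [mul_inv_cancel_left₀ hη.ne'] at h
    linarith
  rcases eq_or_lt_of_le hnv with h | h
  · rw [← h]
    exact div_nonneg (mul_nonneg hη.le hcG) hs.le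
  · have h2 : s * nv ≤ η * cG := by
      have h3 : η * lv ≤ η * (cG * nv) := mul_le_mul_of_nonneg_left hlv hη.le
      nlinarith
    exact (le_div_iff₀ hs).mpr (by linarith only [h2])

private lemma auxB {η s nw : ℝ} (hη : 0 < η) (hs : 0 < s) (hnw : 0 ≤ nw)
    (h : η⁻¹ * (s / 2 * nw ^ 2) ≤ η ^ 3 / (2 * s)) : nw ≤ η ^ 2 / s := by
  have h3 : 2 * s * η * (η⁻¹ * (s / 2 * nw ^ 2)) ≤ 2 * s * η * (η ^ 3 / (2 * s)) :=
    mul_le_mul_of_nonneg_left h (by positivity)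
  have e1 : 2 * s * η * (η⁻¹ * (s / 2 * nw ^ 2)) = s ^ 2 * nw ^ 2 := by
    field_simp
  have e2 : 2 * s * η * (η ^ 3 / (2 * s)) = η ^ 4 := by
    field_simp
  rw [e1, e2] at h3
  have h5 : (s * nw) ^ 2 ≤ (η ^ 2) ^ 2 := by nlinarith
  have h6 : s * nw ≤ η ^ 2 :=
    (pow_le_pow_iff_left₀ (mul_nonneg hs.le hnw) (sq_nonneg η) two_ne_zero).mp h5
  rw [le_div_iff₀ hs]
  linarith only [h6]


/-- DMD-RSC stability of consecutive iterates (Lemma 9), with the convention η₀ := η₁. -/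
theorem dmd_rsc_iterate_stability
    {E : Type*} [NormedAddCommGroup E] [NormedSpace ℝ E]
    (X : Set E) (hXne : X.Nonempty) (hX : Convex ℝ X)
    (R : ℝ) (hR : ∀ z ∈ X, ‖z‖ ≤ R)
    (T : ℕ) (hT : 1 ≤ T) (d : ℕ → ℕ)
    (hd : ∀ t ∈ Finset.Icc 1 T, 1 ≤ d t ∧ t + d t - 1 ≤ T)
    (F : ℕ → Finset ℕ)
    (hF : ∀ t, F t = (Finset.Icc 1 T).filter (fun k => k + d k - 1 = t))
    (f : ℕ → E → ℝ) (Gstar : ℝ)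
    (hfdiff : ∀ t ∈ Finset.Icc 1 T, Differentiable ℝ (f t))
    (hG : ∀ t ∈ Finset.Icc 1 T, ∀ z ∈ X, ‖fderiv ℝ (f t) z‖ ≤ Gstar)
    (ψ : E → ℝ) (σ γ ξ : ℝ) (hσ : 0 < σ) (hγ : 0 < γ) (hξ : 0 < ξ)
    (hψdiff : Differentiable ℝ ψ)
    (B : E → E → ℝ)
    (hB : ∀ a b, B a b = ψ a - ψ b - fderiv ℝ ψ b (a - b))
    (hψsc : ∀ a ∈ X, ∀ b ∈ X, B a b ≥ σ / 2 * ‖a - b‖ ^ 2)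
    (hψlip : ∀ a ∈ X, ∀ b ∈ X,
      ‖fderiv ℝ ψ a - fderiv ℝ ψ b‖ ≤ ξ * Gstar * ‖a - b‖)
    (hrel : ∀ t ∈ Finset.Icc 1 T, ∀ a ∈ X, ∀ b ∈ X,
      f t a - f t b - fderiv ℝ (f t) b (a - b) ≥ γ * B a b)
    (x : ℕ → E) (hx1 : x 1 ∈ X)
    (hF1 : (F 1).Nonempty)
    (ην : ℕ → ℝ)
    (hην : ∀ t ∈ Finset.Icc 1 T,
      ην t = 1 / (γ * ∑ τ ∈ Finset.Icc 1 t, ((F τ).card : ℝ)))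
    (Bt : ℕ → E → ℝ)
    (hBt : ∀ t z, Bt t z =
      (∑ k ∈ F t, fderiv ℝ (f k) (x t) z) + B z (x t) / ην t)
    (hη0 : ην 0 = ην 1)
    (hupd : ∀ t ∈ Finset.Icc 1 T, (F t).Nonempty →
      x (t + 1) ∈ X ∧ ∃ ystar ∈ X, IsMinOn (Bt t) X ystar ∧
        Bt t (x (t + 1)) ≤ Bt t ystar + (ην t) ^ 3 / (2 * σ))
    (hupd0 : ∀ t ∈ Finset.Icc 1 T, F t = ∅ → x (t + 1) = x t)
    :
    ∀ t ∈ Finset.Icc 1 T,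
      ‖x t - x (t + 1)‖
        ≤ (ην t * ((F t).card : ℝ) * Gstar + (ην t) ^ 2 + (ην (t - 1)) ^ 2) / σ
          + (ην (t - 1)) ^ 2 * ξ * Gstar / σ ^ 2 := by
  -- Gstar is nonnegative
  obtain ⟨z0, hz0⟩ := hXne
  have hGnn : 0 ≤ Gstar :=
    le_trans (norm_nonneg _) (hG 1 (Finset.mem_Icc.mpr ⟨le_refl 1, hT⟩) z0 hz0)
  -- iterates stay in X
  have hxmem : ∀ t, 1 ≤ t → t ≤ T → x t ∈ X := by
    intro t
    induction t with
    | zero => intro h; omega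
    | succ n ih =>
      intro _ hnT
      rcases Nat.eq_zero_or_pos n with hn | hn
      · subst hn; simpa using hx1
      · have hnIcc : n ∈ Finset.Icc 1 T := Finset.mem_Icc.mpr ⟨hn, by omega⟩
        rcases (F n).eq_empty_or_nonempty with hFe | hFne
        · rw [hupd0 n hnIcc hFe]; exact ih hn (by omega)
        · exact (hupd n hnIcc hFne).1
  intro t ht
  obtain ⟨ht1, htT⟩ := Finset.mem_Icc.mp ht
  have hxtX : x t ∈ X := hxmem t ht1 htT
  rcases (F t).eq_empty_or_nonempty with hFe | hFne
  · -- empty feedback set: no movement, RHS nonneg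
    rw [hupd0 t ht hFe, sub_self, norm_zero, hFe]
    have h1 : 0 ≤ (ην t * (0 : ℝ) * Gstar + (ην t) ^ 2 + (ην (t - 1)) ^ 2) / σ := by
      apply div_nonneg _ hσ.le
      have := sq_nonneg (ην t); have := sq_nonneg (ην (t - 1)); nlinarith
    have h2 : 0 ≤ (ην (t - 1)) ^ 2 * ξ * Gstar / σ ^ 2 :=
      div_nonneg (mul_nonneg (mul_nonneg (sq_nonneg _) hξ.le) hGnn) (sq_nonneg σ)
    simpa using add_nonneg h1 h2
  · obtain ⟨hx2, ystar, hyX, hmin, happrox⟩ := hupd t ht hFne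
    -- positivity of the learning rate
    have hSpos : 0 < ∑ τ ∈ Finset.Icc 1 t, ((F τ).card : ℝ) := by
      have h1mem : 1 ∈ Finset.Icc 1 t := Finset.mem_Icc.mpr ⟨le_refl 1, ht1⟩
      have hcard1 : (1 : ℝ) ≤ ((F 1).card : ℝ) := by
        have h0 : 0 < (F 1).card := Finset.card_pos.mpr hF1
        exact_mod_cast h0
      have hle : ((F 1).card : ℝ) ≤ ∑ τ ∈ Finset.Icc 1 t, ((F τ).card : ℝ) :=
        Finset.single_le_sum (f := fun τ => ((F τ).card : ℝ))
          (fun i _ => Nat.cast_nonneg _) h1mem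
      linarith
    have hηpos : 0 < ην t := by
      rw [hην t ht]
      exact one_div_pos.mpr (mul_pos hγ hSpos)
    set η := ην t with hηdef
    -- the linear part
    set L : E →L[ℝ] ℝ := ∑ k ∈ F t, fderiv ℝ (f k) (x t) with hLdef
    have hLnorm : ‖L‖ ≤ ((F t).card : ℝ) * Gstar := by
      calc ‖L‖ ≤ ∑ k ∈ F t, ‖fderiv ℝ (f k) (x t)‖ := norm_sum_le _ _
        _ ≤ ∑ _k ∈ F t, Gstar := by
            apply Finset.sum_le_sum
            intro k hk
            have hkT : k ∈ Finset.Icc 1 T := by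
              rw [hF t] at hk; exact (Finset.mem_filter.mp hk).1
            exact hG k hkT (x t) hxtX
        _ = ((F t).card : ℝ) * Gstar := by rw [Finset.sum_const, nsmul_eq_mul]
    -- rewrite Bt t
    have hfun : Bt t = fun z =>
        L z + η⁻¹ * (ψ z - ψ (x t) - fderiv ℝ ψ (x t) (z - x t)) := by
      funext z
      rw [hBt, hB]
      simp only [hLdef, ContinuousLinearMap.coe_sum', Finset.sum_apply]
      rw [div_eq_inv_mul, hηdef]
    -- derivative of Bt t at ystar
    set Dψx := fderiv ℝ ψ (x t) with hDψx
    set Dψy := fderiv ℝ ψ ystar with hDψy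
    set D : E →L[ℝ] ℝ := L + η⁻¹ • (Dψy - Dψx) with hDdef
    have hD : HasFDerivAt (Bt t) D ystar := by
      rw [hfun]
      have h3 : HasFDerivAt (fun z => Dψx (z - x t)) Dψx ystar := by
        have : (fun z => Dψx (z - x t)) = fun z => Dψx z - Dψx (x t) := by
          funext z; rw [map_sub]
        rw [this]
        exact Dψx.hasFDerivAt.sub_const _
      have hinner : HasFDerivAt
          (fun z => η⁻¹ * (ψ z - ψ (x t) - Dψx (z - x t)))
          (η⁻¹ • (Dψy - Dψx)) ystar :=
        ((((hψdiff ystar).hasFDerivAt).sub_const (ψ (x t))).sub h3).const_mul η⁻¹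
      exact L.hasFDerivAt.add hinner
    -- first-order optimality
    have hopt : ∀ u ∈ X, 0 ≤ D (u - ystar) := by
      intro u hu
      exact hmin.localize.hasFDerivWithinAt_nonneg hD.hasFDerivWithinAt
        (sub_mem_posTangentConeAt_of_segment_subset (hX.segment_subset hyX hu))
    -- Step A: bound ‖x t - ystar‖
    set v := x t - ystar with hvdef
    have hDv : D v = L v + η⁻¹ * (Dψy v - Dψx v) := by
      simp [hDdef, ContinuousLinearMap.add_apply, ContinuousLinearMap.smul_apply,
        ContinuousLinearMap.sub_apply, smul_eq_mul, mul_sub]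
    have hBB : Dψx v - Dψy v = B (x t) ystar + B ystar (x t) := by
      simp only [hB, hvdef, map_sub, ← hDψx, ← hDψy]
      ring
    have hBBlow : σ * ‖v‖ ^ 2 ≤ Dψx v - Dψy v := by
      rw [hBB]
      have h1 := hψsc (x t) hxtX ystar hyX
      have h2 := hψsc ystar hyX (x t) hxtX
      rw [norm_sub_rev (ystar) (x t)] at h2
      rw [← hvdef] at h1 h2
      linarith only [h1, h2]
    have hLv : L v ≤ ((F t).card : ℝ) * Gstar * ‖v‖ := by
      have h0 : L v ≤ ‖L‖ * ‖v‖ := le_trans (le_abs_self _) (L.le_opNorm v)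
      exact le_trans h0 (mul_le_mul_of_nonneg_right hLnorm (norm_nonneg _))
    have h0 : η⁻¹ * (Dψx v - Dψy v) ≤ L v := by
      have h0 := hopt (x t) hxtX
      rw [← hvdef, hDv] at h0
      linarith only [h0]
    have hstepA : ‖v‖ ≤ η * (((F t).card : ℝ) * Gstar) / σ :=
      auxA hηpos hσ (norm_nonneg v) (mul_nonneg (Nat.cast_nonneg _) hGnn) h0 hBBlow hLv
    -- Step B: bound ‖x (t+1) - ystar‖
    set w := x (t + 1) - ystar with hwdef
    have hgrowth : η⁻¹ * (σ / 2 * ‖w‖ ^ 2) ≤ Bt t (x (t + 1)) - Bt t ystar := by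
      have hiden : Bt t (x (t + 1)) - Bt t ystar
          = D w + η⁻¹ * B (x (t + 1)) ystar := by
        rw [hfun]
        simp only [hDdef, hwdef, hB, ContinuousLinearMap.add_apply,
          ContinuousLinearMap.smul_apply, ContinuousLinearMap.sub_apply,
          smul_eq_mul, map_sub, ← hDψx, ← hDψy]
        ring
      rw [hiden]
      have h1 := hopt (x (t + 1)) hx2
      rw [← hwdef] at h1
      have h2 := hψsc (x (t + 1)) hx2 ystar hyX
      rw [← hwdef] at h2
      have h3 := mul_le_mul_of_nonneg_left h2 (inv_nonneg.mpr hηpos.le)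
      linarith only [h1, h3]
    have hηne : η ≠ 0 := ne_of_gt hηpos
    have hσne : σ ≠ 0 := ne_of_gt hσ
    have hstepB : ‖w‖ ≤ η ^ 2 / σ := by
      have h1 : η⁻¹ * (σ / 2 * ‖w‖ ^ 2) ≤ η ^ 3 / (2 * σ) :=
        le_trans hgrowth (by linarith only [happrox])
      exact auxB hηpos hσ (norm_nonneg w) h1
    -- combine
    have htri : ‖x t - x (t + 1)‖ ≤ ‖v‖ + ‖w‖ := by
      have : x t - x (t + 1) = v - w := by rw [hvdef, hwdef]; abel
      rw [this]
      exact norm_sub_le v w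
    have hmain : ‖x t - x (t + 1)‖ ≤ (η * (((F t).card : ℝ) * Gstar) + η ^ 2) / σ := by
      rw [add_div]
      exact le_trans htri (add_le_add hstepA hstepB)
    have hrest1 : 0 ≤ (ην (t - 1)) ^ 2 / σ := div_nonneg (sq_nonneg _) hσ.le
    have hrest2 : 0 ≤ (ην (t - 1)) ^ 2 * ξ * Gstar / σ ^ 2 :=
      div_nonneg (mul_nonneg (mul_nonneg (sq_nonneg _) hξ.le) hGnn) (sq_nonneg σ)
    have hsplit : (η * ((F t).card : ℝ) * Gstar + η ^ 2 + (ην (t - 1)) ^ 2) / σ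
        = (η * (((F t).card : ℝ) * Gstar) + η ^ 2) / σ + (ην (t - 1)) ^ 2 / σ := by
      ring
    rw [hsplit]
    linarith only [hmain, hrest1, hrest2]
end
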